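/- arXiv:1409.6282 — 6 statements merged into one kernel-verified Lean document; each statement's English description precedes it below -/
import Mathlib

section
/- The set of ad-locally finite elements of HV is exactly ℂL_{0,0} + H, i.e., the set of all elements of the form a L_{0,0} + ∑ b_{α,j} H_{α,j} (finite sum) with a, b_{α,j} ∈ ℂ. -/
/-- The generalized Heisenberg–Virasoro algebra `HV(Γ)`: a complex Lie algebra `V` equipped
with a basis `{L_{α,i}, H_{α,i} | α ∈ Γ, i ∈ ℤ₊}` satisfying the defining bracket relations
(any term whose second index would be `-1` has coefficient `0`, so truncated subtraction
on `ℕ` is harmless). -/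
structure HVData (Γ : AddSubgroup ℂ) (V : Type*) [LieRing V] [LieAlgebra ℂ V] where
  L : Γ → ℕ → V
  H : Γ → ℕ → V
  basis : Module.Basis ((↥Γ × ℕ) ⊕ (↥Γ × ℕ)) ℂ V
  basis_inl : ∀ (α : Γ) (i : ℕ), basis (Sum.inl (α, i)) = L α i
  basis_inr : ∀ (α : Γ) (i : ℕ), basis (Sum.inr (α, i)) = H α i
  lie_L_L : ∀ (α β : Γ) (i j : ℕ),
    ⁅L α i, L β j⁆ = ((β : ℂ) - (α : ℂ)) • L (α + β) (i + j)
      + ((j : ℂ) - (i : ℂ)) • L (α + β) (i + j - 1)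
  lie_L_H : ∀ (α β : Γ) (i j : ℕ),
    ⁅L α i, H β j⁆ = (β : ℂ) • H (α + β) (i + j) + (j : ℂ) • H (α + β) (i + j - 1)
  lie_H_H : ∀ (α β : Γ) (i j : ℕ), ⁅H α i, H β j⁆ = 0

namespace HVData

variable {Γ : AddSubgroup ℂ} {V : Type*} [LieRing V] [LieAlgebra ℂ V]

/-- The abelian ideal `H` of `HV`, as a submodule. -/
noncomputable def Hspan (hv : HVData Γ V) : Submodule ℂ V :=
  Submodule.span ℂ (Set.range fun p : ↥Γ × ℕ => hv.H p.1 p.2)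

/-- The graded piece `HV_α = span{L_{α,i}, H_{α,i} | i ∈ ℤ₊}`. -/
noncomputable def grade (hv : HVData Γ V) (α : Γ) : Submodule ℂ V :=
  Submodule.span ℂ (Set.range (hv.L α) ∪ Set.range (hv.H α))

/-- A derivation `D` has degree `γ` if `D (HV_α) ⊆ HV_{α+γ}` for all `α ∈ Γ`. -/
def HasDegree (hv : HVData Γ V) (D : LieDerivation ℂ V V) (γ : Γ) : Prop :=
  ∀ α : Γ, ∀ x ∈ hv.grade α, D x ∈ hv.grade (α + γ)

variable (hv : HVData Γ V)

lemma map_span_le' {f : V →ₗ[ℂ] V} {s : Set V} {U : Submodule ℂ V}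
    (h : ∀ v ∈ s, f v ∈ U) : ∀ v ∈ Submodule.span ℂ s, f v ∈ U := fun v hvv =>
  Submodule.span_le.mpr (fun w hw => (Submodule.mem_comap (f := f)).mpr (h w hw)) hvv

lemma lie_mem_of_mem_span {x : V} {s : Set V} {U : Submodule ℂ V}
    (h : ∀ v ∈ s, ⁅x, v⁆ ∈ U) : ∀ v ∈ Submodule.span ℂ s, ⁅x, v⁆ ∈ U :=
  map_span_le' (f := LieAlgebra.ad ℂ V x) h

lemma lie_mem_of_mem_span_right {w : V} {s : Set V} {U : Submodule ℂ V}
    (h : ∀ v ∈ s, ⁅v, w⁆ ∈ U) : ∀ v ∈ Submodule.span ℂ s, ⁅v, w⁆ ∈ U := by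
  have h' : ∀ v ∈ s, (-(LieAlgebra.ad ℂ V w)) v ∈ U := by
    intro v hvv
    have : (-(LieAlgebra.ad ℂ V w)) v = ⁅v, w⁆ := by
      simp only [LinearMap.neg_apply, LieAlgebra.ad_apply, lie_skew]
    rw [this]; exact h v hvv
  intro v hvv
  have h2 := map_span_le' (f := -(LieAlgebra.ad ℂ V w)) h' v hvv
  have : (-(LieAlgebra.ad ℂ V w)) v = ⁅v, w⁆ := by
    simp only [LinearMap.neg_apply, LieAlgebra.ad_apply, lie_skew]
  rwa [this] at h2

lemma sum_lie' {ι : Type*} (s : Finset ι) (f : ι → V) (y : V) :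
    ⁅∑ a ∈ s, f a, y⁆ = ∑ a ∈ s, ⁅f a, y⁆ := by
  classical
  induction s using Finset.induction with
  | empty => simp
  | @insert a s h ih => rw [Finset.sum_insert h, Finset.sum_insert h, add_lie, ih]

/-- The L-support of x -/
noncomputable def Psupp (x : V) : Finset (↥Γ × ℕ) :=
  Finset.preimage (hv.basis.repr x).support Sum.inl (Sum.inl_injective.injOn)

lemma mem_Psupp {x : V} {p : ↥Γ × ℕ} :
    p ∈ hv.Psupp x ↔ hv.basis.repr x (Sum.inl p) ≠ 0 := by
  simp [Psupp, Finsupp.mem_support_iff]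

lemma lie_H_expand (x : V) (δ : Γ) (k : ℕ) :
    ⁅x, hv.H δ k⁆ = ∑ p ∈ hv.Psupp x, (hv.basis.repr x (Sum.inl p)) •
      ((δ : ℂ) • hv.H (p.1 + δ) (p.2 + k) + (k : ℂ) • hv.H (p.1 + δ) (p.2 + k - 1)) := by
  classical
  conv_lhs => rw [← hv.basis.linearCombination_repr x]
  rw [Finsupp.linearCombination_apply, Finsupp.sum, sum_lie']
  rw [← Finset.sum_subset (s₁ := (hv.Psupp x).image Sum.inl)
      (f := fun s => ⁅(hv.basis.repr x) s • hv.basis s, hv.H δ k⁆) ?_ ?_]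
  · rw [Finset.sum_image (fun a _ b _ h => Sum.inl_injective h)]
    refine Finset.sum_congr rfl (fun p _ => ?_)
    rw [smul_lie, hv.basis_inl, hv.lie_L_H]
  · intro s hs
    rcases Finset.mem_image.mp hs with ⟨p, hp, rfl⟩
    simpa [Finsupp.mem_support_iff] using (hv.mem_Psupp).mp hp
  · intro s hs hns
    match s with
    | Sum.inl p =>
      exact absurd (Finset.mem_image.mpr ⟨p, hv.mem_Psupp.mpr
        (Finsupp.mem_support_iff.mp hs), rfl⟩) hns
    | Sum.inr p =>
      show ⁅(hv.basis.repr x) (Sum.inr p) • hv.basis (Sum.inr p), hv.H δ k⁆ = 0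
      rw [show hv.basis (Sum.inr p) = hv.H p.1 p.2 from hv.basis_inr p.1 p.2,
        smul_lie, hv.lie_H_H, smul_zero]

lemma f_zero {f : ℂ → ℝ} (hf : ∀ u v : ℂ, f (u + v) = f u + f v) : f 0 = 0 := by
  have := hf 0 0; simp at this; linarith

lemma f_nsmul {f : ℂ → ℝ} (hf : ∀ u v : ℂ, f (u + v) = f u + f v) (γ : Γ) :
    ∀ n : ℕ, f ((n • γ : Γ) : ℂ) = n * f (γ : ℂ) := by
  intro n
  induction n with
  | zero => simpa using f_zero hf
  | succ m ih =>
    rw [succ_nsmul, AddSubgroup.coe_add, hf, ih]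
    push_cast; ring

lemma not_locFin (hv : HVData Γ V) (x : V) (f : ℂ → ℝ)
    (hf : ∀ u v : ℂ, f (u + v) = f u + f v)
    (α₀ : Γ) (i₀ : ℕ)
    (ha₀ : hv.basis.repr x (Sum.inl (α₀, i₀)) ≠ 0)
    (hpos : 0 ≤ f (α₀ : ℂ))
    (hne : (α₀ : ℂ) ≠ 0 ∨ 1 ≤ i₀)
    (hmax : ∀ p : ↥Γ × ℕ, p ∈ hv.Psupp x →
      f (p.1 : ℂ) ≤ f (α₀ : ℂ) ∧ (f (p.1 : ℂ) = f (α₀ : ℂ) → p.1 = α₀ ∧ p.2 ≤ i₀))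
    (β : Γ) (hβ : ∀ n : ℕ, (β : ℂ) + n * (α₀ : ℂ) ≠ 0) :
    ¬ FiniteDimensional ℂ (Submodule.span ℂ
      (Set.range fun n : ℕ => ((LieAlgebra.ad ℂ V x) ^ n) (hv.H β 0))) := by
  classical
  set a₀ : ℂ := hv.basis.repr x (Sum.inl (α₀, i₀)) with ha₀def
  let topf : ℕ → ℝ := fun n => f β + n * f α₀
  let T : ℕ → Set ((↥Γ × ℕ) ⊕ (↥Γ × ℕ)) := fun n =>
    {s | ∃ δ : Γ, ∃ k : ℕ, s = Sum.inr (δ, k) ∧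
      (f (δ : ℂ) < topf n ∨ (f (δ : ℂ) = topf n ∧ k < n * i₀))}
  let NN : ℕ → Submodule ℂ V := fun n => Submodule.span ℂ (hv.basis '' T n)
  have hgen : ∀ (n : ℕ) (δ : Γ) (k : ℕ),
      (f (δ : ℂ) < topf n ∨ (f (δ : ℂ) = topf n ∧ k < n * i₀)) → hv.H δ k ∈ NN n := by
    intro n δ k hc
    exact Submodule.subset_span ⟨Sum.inr (δ, k), ⟨δ, k, rfl, hc⟩, hv.basis_inr δ k⟩
  have hcoe : ∀ (n : ℕ), ((β + n • α₀ : Γ) : ℂ) = (β : ℂ) + n * (α₀ : ℂ) := by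
    intro n; push_cast; ring
  have htop : ∀ n : ℕ, f ((β + n • α₀ : Γ) : ℂ) = topf n := by
    intro n
    rw [AddSubgroup.coe_add, hf, f_nsmul hf]
  have htopsucc : ∀ n : ℕ, topf (n+1) = topf n + f (α₀ : ℂ) := by
    intro n; simp only [topf]; push_cast; ring
  -- the key weight estimate
  have hstep : ∀ (n : ℕ) (δ : Γ) (k : ℕ) (p : ↥Γ × ℕ), p ∈ hv.Psupp x →
      (f (δ : ℂ) < topf n ∨ (f (δ : ℂ) = topf n ∧ k < n * i₀)) →
      ∀ j : ℕ, j ≤ p.2 + k →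
      (f ((p.1 + δ : Γ) : ℂ) < topf (n+1) ∨
        (f ((p.1 + δ : Γ) : ℂ) = topf (n+1) ∧ j < (n+1) * i₀)) := by
    intro n δ k p hp hc j hj
    obtain ⟨hle, heq⟩ := hmax p hp
    rw [AddSubgroup.coe_add, hf, htopsucc n]
    rcases hc with hlt | ⟨he, hk⟩
    · left; linarith
    · rcases lt_or_eq_of_le hle with hlt | heq2
      · left; linarith
      · obtain ⟨hp1, hp2⟩ := heq heq2
        right
        constructor
        · rw [he, heq2]; ring
        · have hmul : (n+1) * i₀ = n * i₀ + i₀ := by ring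
          omega
  have claim1 : ∀ n : ℕ, ∀ r ∈ NN n, ⁅x, r⁆ ∈ NN (n+1) := by
    intro n
    apply lie_mem_of_mem_span
    rintro v ⟨s, ⟨δ, k, rfl, hc⟩, rfl⟩
    rw [show hv.basis (Sum.inr (δ, k)) = hv.H δ k from hv.basis_inr δ k,
      hv.lie_H_expand]
    apply Submodule.sum_mem
    intro p hp
    apply Submodule.smul_mem
    apply Submodule.add_mem
    · exact Submodule.smul_mem _ _ (hgen (n+1) _ _
        (hstep n δ k p hp hc (p.2 + k) le_rfl))
    · exact Submodule.smul_mem _ _ (hgen (n+1) _ _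
        (hstep n δ k p hp hc (p.2 + k - 1) (Nat.sub_le _ _)))
  have hstep2 : ∀ (n : ℕ) (p : ↥Γ × ℕ), p ∈ hv.Psupp x → p ≠ (α₀, i₀) →
      ∀ j : ℕ, j ≤ p.2 + n * i₀ →
      (f ((p.1 + (β + n • α₀) : Γ) : ℂ) < topf (n+1) ∨
        (f ((p.1 + (β + n • α₀) : Γ) : ℂ) = topf (n+1) ∧ j < (n+1) * i₀)) := by
    intro n p hp hne' j hj
    obtain ⟨hle, heq⟩ := hmax p hp
    rw [AddSubgroup.coe_add, hf, htop n, htopsucc n]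
    rcases lt_or_eq_of_le hle with hlt | heq2
    · left; linarith
    · obtain ⟨hp1, hp2⟩ := heq heq2
      have hp2' : p.2 < i₀ := by
        rcases lt_or_eq_of_le hp2 with h | h
        · exact h
        · exact absurd (Prod.ext hp1 h) hne'
      right
      refine ⟨by rw [heq2]; ring, ?_⟩
      have hmul : (n+1) * i₀ = n * i₀ + i₀ := by ring
      omega
  have claim2 : ∀ n : ℕ, ∃ w ∈ NN (n+1), ⁅x, hv.H (β + n • α₀) (n * i₀)⁆ =
      (a₀ * ((β + n • α₀ : Γ) : ℂ)) • hv.H (β + (n+1) • α₀) ((n+1) * i₀) + w := by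
    intro n
    have hp₀ : (α₀, i₀) ∈ hv.Psupp x := hv.mem_Psupp.mpr ha₀
    have hgrade : ((α₀, i₀).1 + (β + n • α₀) : Γ) = β + (n+1) • α₀ := by
      show (α₀ + (β + n • α₀) : Γ) = β + (n+1) • α₀
      rw [succ_nsmul]; abel
    have hidx : (α₀, i₀).2 + n * i₀ = (n+1) * i₀ := by
      show i₀ + n * i₀ = (n+1) * i₀; ring
    refine ⟨a₀ • (((n * i₀ : ℕ) : ℂ) • hv.H (β + (n+1) • α₀) ((n+1) * i₀ - 1))
      + ∑ p ∈ (hv.Psupp x).erase (α₀, i₀), (hv.basis.repr x (Sum.inl p)) •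
        (((β + n • α₀ : Γ) : ℂ) • hv.H (p.1 + (β + n • α₀)) (p.2 + n * i₀)
          + ((n * i₀ : ℕ) : ℂ) • hv.H (p.1 + (β + n • α₀)) (p.2 + n * i₀ - 1)), ?_, ?_⟩
    · apply Submodule.add_mem
      · rcases Nat.eq_zero_or_pos (n * i₀) with h0 | h1
        · simp only [h0, Nat.cast_zero, zero_smul, smul_zero]
          exact Submodule.zero_mem _
        · apply Submodule.smul_mem
          apply Submodule.smul_mem
          apply hgen
          right
          refine ⟨htop (n+1), ?_⟩
          have hi₀ : 1 ≤ i₀ := by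
            by_contra h
            push_neg at h
            interval_cases i₀ <;> omega
          have hmul : (n+1) * i₀ = n * i₀ + i₀ := by ring
          omega
      · apply Submodule.sum_mem
        intro p hp
        have hpP := Finset.mem_of_mem_erase hp
        have hpne := Finset.ne_of_mem_erase hp
        apply Submodule.smul_mem
        apply Submodule.add_mem
        · exact Submodule.smul_mem _ _ (hgen (n+1) _ _
            (hstep2 n p hpP hpne (p.2 + n * i₀) le_rfl))
        · exact Submodule.smul_mem _ _ (hgen (n+1) _ _
            (hstep2 n p hpP hpne (p.2 + n * i₀ - 1) (Nat.sub_le _ _)))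
    · rw [hv.lie_H_expand, ← Finset.add_sum_erase _ _ hp₀, hgrade, hidx,
        smul_add, smul_smul, add_assoc]
  -- the iterates
  set z : ℕ → V := fun n => ((LieAlgebra.ad ℂ V x) ^ n) (hv.H β 0) with hzdef
  have hzsucc : ∀ n : ℕ, z (n+1) = ⁅x, z n⁆ := by
    intro n
    show ((LieAlgebra.ad ℂ V x) ^ (n+1)) (hv.H β 0) = _
    rw [pow_succ']
    rfl
  have claim3 : ∀ n : ℕ, ∃ c : ℂ, c ≠ 0 ∧ ∃ r ∈ NN n,
      z n = c • hv.H (β + n • α₀) (n * i₀) + r := by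
    intro n
    induction n with
    | zero =>
      refine ⟨1, one_ne_zero, 0, Submodule.zero_mem _, ?_⟩
      show ((LieAlgebra.ad ℂ V x) ^ 0) (hv.H β 0) = _
      rw [pow_zero, one_smul, add_zero, zero_nsmul, add_zero, Nat.zero_mul]
      rfl
    | succ n ih =>
      obtain ⟨c, hc, r, hr, hzn⟩ := ih
      obtain ⟨w, hw, hbr⟩ := claim2 n
      refine ⟨c * (a₀ * ((β + n • α₀ : Γ) : ℂ)), ?_, c • w + ⁅x, r⁆, ?_, ?_⟩
      · exact mul_ne_zero hc (mul_ne_zero ha₀ (by rw [hcoe]; exact hβ n))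
      · exact Submodule.add_mem _ (Submodule.smul_mem _ _ hw) (claim1 n r hr)
      · rw [hzsucc, hzn, lie_add, lie_smul, hbr, smul_add, smul_smul, add_assoc]
  -- coordinates
  let e : ℕ → ((↥Γ × ℕ) ⊕ (↥Γ × ℕ)) := fun n => Sum.inr (β + n • α₀, n * i₀)
  have he : ∀ m n : ℕ, m ≠ n → e m ≠ e n := by
    intro m n hmn hemn
    simp only [e, Sum.inr.injEq, Prod.mk.injEq] at hemn
    obtain ⟨h1, h2⟩ := hemn
    rcases hne with hα | hi
    · have h1' : (β : ℂ) + (m : ℂ) * α₀ = (β : ℂ) + (n : ℂ) * α₀ := by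
        rw [← hcoe m, ← hcoe n, h1]
      have h2' : (m : ℂ) * α₀ = (n : ℂ) * α₀ := by linear_combination h1'
      have : (m : ℂ) = n := mul_right_cancel₀ hα h2'
      exact hmn (Nat.cast_injective this)
    · exact hmn (Nat.eq_of_mul_eq_mul_right hi h2)
  have hkill : ∀ m n : ℕ, m ≤ n → ∀ r ∈ NN m, hv.basis.repr r (e n) = 0 := by
    intro m n hmn
    have : ∀ v ∈ hv.basis '' T m, hv.basis.repr v (e n) = 0 := by
      rintro v ⟨s, ⟨δ, k, rfl, hc⟩, rfl⟩
      rw [hv.basis.repr_self]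
      rw [Finsupp.single_apply]
      rw [if_neg]
      intro hsn
      simp only [e, Sum.inr.injEq, Prod.mk.injEq] at hsn
      obtain ⟨h1, h2⟩ := hsn
      have hfd : f (δ : ℂ) = topf n := by rw [h1, htop]
      have htople : topf m ≤ topf n := by
        have : (m : ℝ) * f α₀ ≤ (n : ℝ) * f α₀ := by
          apply mul_le_mul_of_nonneg_right _ hpos
          exact_mod_cast hmn
        simp only [topf]; linarith
      rcases hc with hlt | ⟨heq', hk⟩
      · linarith
      · have : k = n * i₀ := h2
        have : m * i₀ ≤ n * i₀ := Nat.mul_le_mul_right i₀ hmn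
        omega
    intro r hr
    have hspan := Submodule.span_le (p := LinearMap.ker
      ((Finsupp.lapply (e n)).comp hv.basis.repr.toLinearMap)) |>.mpr
      (fun v hv' => LinearMap.mem_ker.mpr (by simpa using this v hv')) hr
    simpa using LinearMap.mem_ker.mp hspan
  have hz0 : ∀ m n : ℕ, m < n → hv.basis.repr (z m) (e n) = 0 := by
    intro m n hmn
    obtain ⟨c, hc, r, hr, hzm⟩ := claim3 m
    rw [hzm, map_add, map_smul]
    have h1 : hv.basis.repr (hv.H (β + m • α₀) (m * i₀)) (e n) = 0 := by
      rw [← hv.basis_inr, hv.basis.repr_self, Finsupp.single_apply, if_neg]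
      exact he m n (Nat.ne_of_lt hmn)
    rw [Finsupp.add_apply, Finsupp.smul_apply, h1, smul_zero,
      hkill m n (le_of_lt hmn) r hr, add_zero]
  have hznn : ∀ n : ℕ, hv.basis.repr (z n) (e n) ≠ 0 := by
    intro n
    obtain ⟨c, hc, r, hr, hzn⟩ := claim3 n
    rw [hzn, map_add, map_smul]
    have h1 : hv.basis.repr (hv.H (β + n • α₀) (n * i₀)) (e n) = 1 := by
      rw [← hv.basis_inr, hv.basis.repr_self, Finsupp.single_apply, if_pos rfl]
    rw [Finsupp.add_apply, Finsupp.smul_apply, h1, smul_eq_mul, mul_one,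
      hkill n n le_rfl r hr, add_zero]
    exact hc
  -- linear independence
  have hli : LinearIndependent ℂ z := by
    rw [linearIndependent_iff']
    intro s g hsum i hi
    by_contra hgi
    have hsne : (s.filter fun j => g j ≠ 0).Nonempty :=
      ⟨i, Finset.mem_filter.mpr ⟨hi, hgi⟩⟩
    set n := (s.filter fun j => g j ≠ 0).max' hsne with hn
    have hnmem := (s.filter fun j => g j ≠ 0).max'_mem hsne
    have hns : n ∈ s := (Finset.mem_filter.mp hnmem).1
    have hgn : g n ≠ 0 := (Finset.mem_filter.mp hnmem).2
    have key := congrArg (fun v => hv.basis.repr v (e n)) hsum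
    simp only [map_sum, map_smul, Finsupp.coe_finset_sum, Finset.sum_apply,
      Finsupp.smul_apply, smul_eq_mul, map_zero, Finsupp.coe_zero,
      Pi.zero_apply] at key
    rw [Finset.sum_eq_single_of_mem n hns] at key
    · exact hgn (by
        rcases mul_eq_zero.mp key with h | h
        · exact h
        · exact absurd h (hznn n))
    · intro j hj hjn
      rcases eq_or_ne (g j) 0 with h | h
      · rw [h, zero_mul]
      · have hjf : j ∈ s.filter fun j => g j ≠ 0 := Finset.mem_filter.mpr ⟨hj, h⟩
        have hjle : j ≤ n := Finset.le_max' _ _ hjf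
        have hjlt : j < n := lt_of_le_of_ne hjle hjn
        rw [hz0 j n hjlt, mul_zero]
  -- conclude
  intro hfd
  have hzW : ∀ n : ℕ, z n ∈ Submodule.span ℂ (Set.range z) :=
    fun n => Submodule.subset_span ⟨n, rfl⟩
  let z' : ℕ → (Submodule.span ℂ (Set.range z)) := fun n => ⟨z n, hzW n⟩
  have hli' : LinearIndependent ℂ z' :=
    LinearIndependent.of_comp (Submodule.span ℂ (Set.range z)).subtype hli
  haveI : IsNoetherian ℂ (Submodule.span ℂ (Set.range z)) :=
    IsNoetherian.iff_fg.mpr hfd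
  have : Finite ℕ := hli'.finite_of_isNoetherian
  haveI := this
  exact not_finite ℕ

lemma exists_good_t (D : Finset ℂ) : ∃ t : ℝ, ∀ d ∈ D, d ≠ 0 → d.re + t * d.im ≠ 0 := by
  obtain ⟨t, ht⟩ := Infinite.exists_notMem_finset (D.image fun d => -d.re / d.im)
  refine ⟨t, fun d hd hd0 h => ?_⟩
  rcases eq_or_ne d.im 0 with him | him
  · rw [him, mul_zero, add_zero] at h
    exact hd0 (Complex.ext h him)
  · apply ht
    apply Finset.mem_image.mpr ⟨d, hd, ?_⟩
    field_simp
    linarith [h]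

lemma not_locFin_of_bad (hv : HVData Γ V) (x : V) (hΓ : Γ ≠ ⊥)
    (hbad : ∃ p ∈ hv.Psupp x, p ≠ ((0 : Γ), 0)) :
    ∃ y : V, ¬ FiniteDimensional ℂ (Submodule.span ℂ
      (Set.range fun n : ℕ => ((LieAlgebra.ad ℂ V x) ^ n) y)) := by
  classical
  obtain ⟨p₀, hp₀, hp₀ne⟩ := hbad
  by_cases hcase : ∃ p ∈ hv.Psupp x, (p.1 : ℂ) ≠ 0
  · -- case A : some nonzero grade appears in the L-support
    obtain ⟨pa, hpa, hpane⟩ := hcase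
    set S' : Finset ℂ := (hv.Psupp x).image (fun p => ((p.1 : Γ) : ℂ)) ∪ {0} with hS'
    obtain ⟨t, ht⟩ := exists_good_t ((S' ×ˢ S').image fun q => q.1 - q.2)
    set f0 : ℂ → ℝ := fun z => z.re + t * z.im with hf0
    have hf0add : ∀ u v : ℂ, f0 (u + v) = f0 u + f0 v := by
      intro u v; simp only [f0, Complex.add_re, Complex.add_im]; ring
    have hinj : ∀ u ∈ S', ∀ v ∈ S', f0 u = f0 v → u = v := by
      intro u hu v hv huv
      by_contra hne'
      apply ht (u - v) (Finset.mem_image.mpr ⟨(u, v), Finset.mem_product.mpr ⟨hu, hv⟩, rfl⟩)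
        (sub_ne_zero.mpr hne')
      simp only [Complex.sub_re, Complex.sub_im]
      simp only [f0] at huv
      linarith
    have h0S : (0 : ℂ) ∈ S' := Finset.mem_union_right _ (Finset.mem_singleton_self 0)
    have hmemS' : ∀ p ∈ hv.Psupp x, ((p.1 : Γ) : ℂ) ∈ S' := fun p hp =>
      Finset.mem_union_left _ (Finset.mem_image.mpr ⟨p, hp, rfl⟩)
    have hf00 : f0 0 = 0 := by simp [f0]
    have hfa : f0 ((pa.1 : Γ) : ℂ) ≠ 0 := by
      intro h
      exact hpane (hinj _ (hmemS' pa hpa) 0 h0S (by rw [h, hf00]))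
    -- choose the sign
    obtain ⟨g, hgadd, hginj, hga⟩ : ∃ g : ℂ → ℝ, (∀ u v : ℂ, g (u + v) = g u + g v) ∧
        (∀ u ∈ S', ∀ v ∈ S', g u = g v → u = v) ∧ 0 < g ((pa.1 : Γ) : ℂ) := by
      rcases lt_or_gt_of_ne hfa with hlt | hgt
      · refine ⟨fun z => -f0 z, fun u v => ?_, fun u hu v hv huv => ?_, ?_⟩
        · show -f0 (u + v) = -f0 u + -f0 v
          rw [hf0add]; ring
        · have huv' : -f0 u = -f0 v := huv
          exact hinj u hu v hv (by linarith)
        · show 0 < -f0 ((pa.1 : Γ) : ℂ)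
          linarith
      · exact ⟨f0, hf0add, hinj, hgt⟩
    -- maximize g over the support grades
    obtain ⟨q, hq, hqmax⟩ := Finset.exists_max_image (hv.Psupp x) (fun p => g ((p.1 : Γ) : ℂ))
      ⟨pa, hpa⟩
    -- maximize the index at that grade
    obtain ⟨q', hq', hq'max⟩ := Finset.exists_max_image
      ((hv.Psupp x).filter (fun p => p.1 = q.1)) (fun p => p.2)
      ⟨q, Finset.mem_filter.mpr ⟨hq, rfl⟩⟩
    have hq'supp : q' ∈ hv.Psupp x := (Finset.mem_filter.mp hq').1
    have hq'1 : q'.1 = q.1 := (Finset.mem_filter.mp hq').2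
    have hgq : 0 < g ((q.1 : Γ) : ℂ) := lt_of_lt_of_le hga (hqmax pa hpa)
    have hg0 : g 0 = 0 := by have := hgadd 0 0; simp at this; linarith
    have hq1ne : ((q.1 : Γ) : ℂ) ≠ 0 := by
      intro h; rw [h, hg0] at hgq; exact lt_irrefl _ hgq
    refine ⟨hv.H q.1 0, ?_⟩
    apply hv.not_locFin x g hgadd q.1 q'.2
    · rw [← hq'1]
      exact hv.mem_Psupp.mp (by rw [show (q'.1, q'.2) = q' from rfl]; exact hq'supp)
    · exact le_of_lt hgq
    · exact Or.inl hq1ne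
    · intro p hp
      refine ⟨hqmax p hp, fun hfe => ?_⟩
      have hp1 : p.1 = q.1 := Subtype.coe_injective
        (hginj _ (hmemS' p hp) _ (hmemS' q hq) hfe)
      exact ⟨hp1, hq'max p (Finset.mem_filter.mpr ⟨hp, hp1⟩)⟩
    · intro n
      rw [show ((q.1 : Γ) : ℂ) + (n : ℂ) * ((q.1 : Γ) : ℂ) = ((n : ℂ) + 1) * q.1 by ring]
      exact mul_ne_zero (Nat.cast_add_one_ne_zero n) hq1ne
  · -- case B : all grades in the L-support are zero
    push_neg at hcase
    have hp₀1 : (p₀.1 : Γ) = 0 := Subtype.coe_injective (by simpa using hcase p₀ hp₀)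
    have hp₀2 : 1 ≤ p₀.2 := by
      rcases Nat.eq_zero_or_pos p₀.2 with h | h
      · exact absurd (Prod.ext hp₀1 h) hp₀ne
      · exact h
    obtain ⟨q, hq, hqmax⟩ := Finset.exists_max_image (hv.Psupp x) (fun p => p.2) ⟨p₀, hp₀⟩
    obtain ⟨b, hbΓ, hb0⟩ : ∃ b : ℂ, b ∈ Γ ∧ b ≠ 0 := by
      by_contra hb
      push_neg at hb
      exact hΓ ((AddSubgroup.eq_bot_iff_forall Γ).mpr hb)
    refine ⟨hv.H ⟨b, hbΓ⟩ 0, ?_⟩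
    apply hv.not_locFin x (fun _ => 0) (by simp) q.1 q.2
    · exact hv.mem_Psupp.mp (by rw [show (q.1, q.2) = q from rfl]; exact hq)
    · exact le_refl 0
    · right
      have : q.2 ≥ p₀.2 := hqmax p₀ hp₀
      omega
    · intro p hp
      refine ⟨le_refl 0, fun _ => ⟨?_, hqmax p hp⟩⟩
      refine Subtype.coe_injective ?_
      show ((p.1 : Γ) : ℂ) = ((q.1 : Γ) : ℂ)
      rw [hcase p hp, hcase q hq]
    · intro n
      simp only [hcase q hq, mul_zero, add_zero]
      exact hb0

lemma Hspan_eq (hv : HVData Γ V) :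
    hv.Hspan = Submodule.span ℂ (hv.basis '' Set.range Sum.inr) := by
  unfold Hspan
  congr 1
  ext v
  constructor
  · rintro ⟨p, rfl⟩
    exact ⟨Sum.inr p, ⟨p, rfl⟩, by rw [show Sum.inr p = Sum.inr ((p.1 : Γ), p.2) from rfl,
      hv.basis_inr]⟩
  · rintro ⟨s, ⟨p, rfl⟩, rfl⟩
    exact ⟨p, by rw [show Sum.inr p = Sum.inr ((p.1 : Γ), p.2) from rfl, hv.basis_inr]⟩

lemma locFin_of_mem (hv : HVData Γ V) (x : V)
    (hx : x ∈ (Submodule.span ℂ {hv.L 0 0} ⊔ hv.Hspan : Submodule ℂ V)) :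
    ∀ y : V, FiniteDimensional ℂ (Submodule.span ℂ
      (Set.range fun n : ℕ => ((LieAlgebra.ad ℂ V x) ^ n) y)) := by
  classical
  intro y
  obtain ⟨u, hu, h, hh, rfl⟩ := Submodule.mem_sup.mp hx
  obtain ⟨c, rfl⟩ := Submodule.mem_span_singleton.mp hu
  -- supports
  set Ph : Finset (↥Γ × ℕ) :=
    Finset.preimage (hv.basis.repr h).support Sum.inr (Sum.inr_injective.injOn) with hPh
  have hhsupp : ↑(hv.basis.repr h).support ⊆ Set.range (Sum.inr : ↥Γ × ℕ → (↥Γ × ℕ) ⊕ (↥Γ × ℕ)) :=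
    hv.basis.mem_span_image.mp (by rw [← hv.Hspan_eq]; exact hh)
  have hhspan : h ∈ Submodule.span ℂ (hv.basis '' (Sum.inr '' ↑Ph)) := by
    apply hv.basis.mem_span_image.mpr
    intro s hs
    obtain ⟨p, rfl⟩ := hhsupp hs
    exact ⟨p, Finset.mem_coe.mpr (Finset.mem_preimage.mpr hs), rfl⟩
  set PLy : Finset (↥Γ × ℕ) :=
    Finset.preimage (hv.basis.repr y).support Sum.inl (Sum.inl_injective.injOn) with hPLy
  set PHy : Finset (↥Γ × ℕ) :=
    Finset.preimage (hv.basis.repr y).support Sum.inr (Sum.inr_injective.injOn) with hPHy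
  set G : Finset (↥Γ) := PHy.image Prod.fst ∪
    ((PLy.image Prod.fst) ×ˢ (Ph.image Prod.fst)).image (fun q => q.1 + q.2) with hG
  set Nb : ℕ := max (PHy.sup Prod.snd) (PLy.sup Prod.snd + Ph.sup Prod.snd) with hNb
  set S : Finset ((↥Γ × ℕ) ⊕ (↥Γ × ℕ)) :=
    PLy.biUnion (fun p => (Finset.range (p.2+1)).image (fun k => Sum.inl (p.1, k)))
    ∪ G.biUnion (fun δ => (Finset.range (Nb+1)).image (fun k => Sum.inr (δ, k))) with hS
  set U : Submodule ℂ V := Submodule.span ℂ (hv.basis '' ↑S) with hU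
  have hSL : ∀ (β : Γ) (j k : ℕ), (β, j) ∈ PLy → k ≤ j → Sum.inl ((β : Γ), k) ∈ S := by
    intro β j k hm hk
    apply Finset.mem_union_left
    exact Finset.mem_biUnion.mpr ⟨(β, j), hm,
      Finset.mem_image.mpr ⟨k, Finset.mem_range.mpr (Nat.lt_succ_of_le hk), rfl⟩⟩
  have hSR : ∀ (δ : Γ) (k : ℕ), δ ∈ G → k ≤ Nb → Sum.inr ((δ : Γ), k) ∈ S := by
    intro δ k hδ hk
    apply Finset.mem_union_right
    exact Finset.mem_biUnion.mpr ⟨δ, hδ,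
      Finset.mem_image.mpr ⟨k, Finset.mem_range.mpr (Nat.lt_succ_of_le hk), rfl⟩⟩
  have hUofS : ∀ s ∈ S, hv.basis s ∈ U := fun s hs =>
    Submodule.subset_span ⟨s, Finset.mem_coe.mpr hs, rfl⟩
  have hLU : ∀ (β : Γ) (j k : ℕ), (β, j) ∈ PLy → k ≤ j → hv.L β k ∈ U := by
    intro β j k hm hk
    rw [← hv.basis_inl]
    exact hUofS _ (hSL β j k hm hk)
  have hHU : ∀ (δ : Γ) (k : ℕ), δ ∈ G → k ≤ Nb → hv.H δ k ∈ U := by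
    intro δ k hδ hk
    rw [← hv.basis_inr]
    exact hUofS _ (hSR δ k hδ hk)
  -- y belongs to U
  have hyU : y ∈ U := by
    apply hv.basis.mem_span_image.mpr
    intro s hs
    match s with
    | Sum.inl p =>
      have hp : p ∈ PLy := Finset.mem_preimage.mpr hs
      exact Finset.mem_coe.mpr (by
        rw [show (Sum.inl p : (↥Γ × ℕ) ⊕ (↥Γ × ℕ)) = Sum.inl (p.1, p.2) from rfl]
        exact hSL p.1 p.2 p.2 (by rwa [show ((p.1 : Γ), p.2) = p from rfl]) le_rfl)
    | Sum.inr p =>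
      have hp : p ∈ PHy := Finset.mem_preimage.mpr hs
      refine Finset.mem_coe.mpr (by
        rw [show (Sum.inr p : (↥Γ × ℕ) ⊕ (↥Γ × ℕ)) = Sum.inr (p.1, p.2) from rfl]
        exact hSR p.1 p.2 (Finset.mem_union_left _ (Finset.mem_image.mpr ⟨p, hp, rfl⟩))
          (le_trans (Finset.le_sup hp) (le_max_left _ _)))
  -- the lie bracket of h with basis elements of S lands in U
  have hhL : ∀ (β : Γ) (j k : ℕ), (β, j) ∈ PLy → k ≤ j → ⁅h, hv.L β k⁆ ∈ U := by
    intro β j k hm hk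
    apply lie_mem_of_mem_span_right (s := hv.basis '' (Sum.inr '' ↑Ph)) ?_ h hhspan
    rintro v ⟨s, ⟨p, hp, rfl⟩, rfl⟩
    rw [show (Sum.inr p : (↥Γ × ℕ) ⊕ (↥Γ × ℕ)) = Sum.inr (p.1, p.2) from rfl, hv.basis_inr]
    rw [← lie_skew, hv.lie_L_H]
    apply Submodule.neg_mem
    have hgrade : (β + p.1 : Γ) ∈ G := by
      apply Finset.mem_union_right
      apply Finset.mem_image.mpr
      exact ⟨(β, p.1), Finset.mem_product.mpr ⟨Finset.mem_image.mpr ⟨(β, j), hm, rfl⟩,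
        Finset.mem_image.mpr ⟨p, Finset.mem_coe.mp hp, rfl⟩⟩, rfl⟩
    have hidx : k + p.2 ≤ Nb := by
      have h1 : k ≤ PLy.sup Prod.snd := le_trans hk (Finset.le_sup (f := Prod.snd) hm)
      have h2 : p.2 ≤ Ph.sup Prod.snd := Finset.le_sup (Finset.mem_coe.mp hp)
      calc k + p.2 ≤ PLy.sup Prod.snd + Ph.sup Prod.snd := Nat.add_le_add h1 h2
        _ ≤ Nb := le_max_right _ _
    exact Submodule.add_mem _
      (Submodule.smul_mem _ _ (hHU _ _ hgrade hidx))
      (Submodule.smul_mem _ _ (hHU _ _ hgrade (le_trans (Nat.sub_le _ _) hidx)))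
  have hhH : ∀ (δ : Γ) (k : ℕ), ⁅h, hv.H δ k⁆ ∈ U := by
    intro δ k
    apply lie_mem_of_mem_span_right (s := hv.basis '' (Sum.inr '' ↑Ph)) ?_ h hhspan
    rintro v ⟨s, ⟨p, hp, rfl⟩, rfl⟩
    rw [show (Sum.inr p : (↥Γ × ℕ) ⊕ (↥Γ × ℕ)) = Sum.inr (p.1, p.2) from rfl, hv.basis_inr,
      hv.lie_H_H]
    exact Submodule.zero_mem _
  -- invariance of U
  have hinv : ∀ v ∈ U, ⁅c • hv.L 0 0 + h, v⁆ ∈ U := by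
    apply lie_mem_of_mem_span
    rintro v ⟨s, hs, rfl⟩
    have hs' : s ∈ S := Finset.mem_coe.mp hs
    rw [add_lie, smul_lie]
    rcases Finset.mem_union.mp hs' with hsl | hsr
    · obtain ⟨p, hp, him⟩ := Finset.mem_biUnion.mp hsl
      obtain ⟨k, hkr, rfl⟩ := Finset.mem_image.mp him
      have hk : k ≤ p.2 := Nat.lt_succ_iff.mp (Finset.mem_range.mp hkr)
      have hpm : (p.1, p.2) ∈ PLy := by rwa [show ((p.1 : Γ), p.2) = p from rfl]
      rw [hv.basis_inl, hv.lie_L_L]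
      apply Submodule.add_mem
      · apply Submodule.smul_mem
        apply Submodule.add_mem
        · apply Submodule.smul_mem
          rw [zero_add, zero_add]
          exact hLU p.1 p.2 k hpm hk
        · apply Submodule.smul_mem
          rw [zero_add]
          exact hLU p.1 p.2 _ hpm (le_trans (Nat.sub_le _ _) (by rwa [zero_add]))
      · exact hhL p.1 p.2 k hpm hk
    · obtain ⟨δ, hδ, him⟩ := Finset.mem_biUnion.mp hsr
      obtain ⟨k, hkr, rfl⟩ := Finset.mem_image.mp him
      have hk : k ≤ Nb := Nat.lt_succ_iff.mp (Finset.mem_range.mp hkr)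
      rw [hv.basis_inr, hv.lie_L_H]
      apply Submodule.add_mem
      · apply Submodule.smul_mem
        apply Submodule.add_mem
        · apply Submodule.smul_mem
          rw [zero_add, zero_add]
          exact hHU δ k hδ hk
        · apply Submodule.smul_mem
          rw [zero_add]
          exact hHU δ _ hδ (le_trans (Nat.sub_le _ _) (by rwa [zero_add]))
      · exact hhH δ k
  -- all iterates stay in U
  have hiter : ∀ n : ℕ, ((LieAlgebra.ad ℂ V (c • hv.L 0 0 + h)) ^ n) y ∈ U := by
    intro n
    induction n with
    | zero => rw [pow_zero]; exact hyU
    | succ n ih =>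
      rw [pow_succ']
      exact hinv _ ih
  have hle : Submodule.span ℂ
      (Set.range fun n : ℕ => ((LieAlgebra.ad ℂ V (c • hv.L 0 0 + h)) ^ n) y) ≤ U := by
    apply Submodule.span_le.mpr
    rintro v ⟨n, rfl⟩
    exact hiter n
  have hfinU : FiniteDimensional ℂ U :=
    FiniteDimensional.span_of_finite ℂ ((S : Set ((↥Γ × ℕ) ⊕ (↥Γ × ℕ))).toFinite.image hv.basis)
  exact Submodule.finiteDimensional_of_le hle


end HVData

/-- The set of ad-locally finite elements of `HV` is exactly
`ℂ L_{0,0} + H`. -/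
theorem HV_ad_locally_finite_elements (Γ : AddSubgroup ℂ) (hΓ : Γ ≠ ⊥)
    {V : Type*} [LieRing V] [LieAlgebra ℂ V] (hv : HVData Γ V) :
    {x : V | ∀ y : V, FiniteDimensional ℂ (Submodule.span ℂ
        (Set.range fun n : ℕ => ((LieAlgebra.ad ℂ V x) ^ n) y))}
      = ((Submodule.span ℂ {hv.L 0 0} ⊔ hv.Hspan : Submodule ℂ V) : Set V) := by
  classical
  ext x
  simp only [Set.mem_setOf_eq, SetLike.mem_coe]
  constructor
  · intro hx
    have hsub : ∀ p ∈ hv.Psupp x, p = ((0 : Γ), 0) := by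
      intro p hp
      by_contra hne
      obtain ⟨y, hy⟩ := hv.not_locFin_of_bad x hΓ ⟨p, hp, hne⟩
      exact hy (hx y)
    have hxeq := hv.basis.linearCombination_repr x
    rw [Finsupp.linearCombination_apply, Finsupp.sum] at hxeq
    rw [← hxeq]
    apply Submodule.sum_mem
    intro s hs
    apply Submodule.smul_mem
    match s with
    | Sum.inl p =>
      have hp : p = ((0 : Γ), 0) :=
        hsub p (hv.mem_Psupp.mpr (Finsupp.mem_support_iff.mp hs))
      rw [hp, hv.basis_inl]
      exact Submodule.mem_sup_left (Submodule.subset_span rfl)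
    | Sum.inr p =>
      rw [show (Sum.inr p : (↥Γ × ℕ) ⊕ (↥Γ × ℕ)) = Sum.inr (p.1, p.2) from rfl,
        hv.basis_inr]
      exact Submodule.mem_sup_right (Submodule.subset_span ⟨p, rfl⟩)
  · intro hx y
    exact hv.locFin_of_mem x hx y
end

section
/- The Lie algebra ideals of HV are exactly 0, ℂH_{0,0}, H, and HV itself; in particular, HV has exactly two nonzero proper ideals, and H is the unique maximal proper ideal of HV. -/
namespace HVData

open Classical

variable {Γ : AddSubgroup ℂ} {V : Type*} [LieRing V] [LieAlgebra ℂ V] (hv : HVData Γ V)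




noncomputable def coL (q : ↥Γ × ℕ) : V →ₗ[ℂ] ℂ := hv.basis.coord (Sum.inl q)
noncomputable def coH (q : ↥Γ × ℕ) : V →ₗ[ℂ] ℂ := hv.basis.coord (Sum.inr q)

lemma coL_L (q : ↥Γ × ℕ) (α : Γ) (i : ℕ) :
    hv.coL q (hv.L α i) = if (α, i) = q then 1 else 0 := by
  rw [coL, ← hv.basis_inl, Module.Basis.coord_apply, Module.Basis.repr_self, Finsupp.single_apply]
  simp

lemma coL_H (q : ↥Γ × ℕ) (β : Γ) (j : ℕ) : hv.coL q (hv.H β j) = 0 := by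
  rw [coL, ← hv.basis_inr, Module.Basis.coord_apply, Module.Basis.repr_self, Finsupp.single_apply]
  simp

lemma coH_H (q : ↥Γ × ℕ) (β : Γ) (j : ℕ) :
    hv.coH q (hv.H β j) = if (β, j) = q then 1 else 0 := by
  rw [coH, ← hv.basis_inr, Module.Basis.coord_apply, Module.Basis.repr_self, Finsupp.single_apply]
  simp

lemma coH_L (q : ↥Γ × ℕ) (α : Γ) (i : ℕ) : hv.coH q (hv.L α i) = 0 := by
  rw [coH, ← hv.basis_inl, Module.Basis.coord_apply, Module.Basis.repr_self, Finsupp.single_apply]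
  simp

lemma mem_Hspan_iff {x : V} : x ∈ hv.Hspan ↔ ∀ q, hv.coL q x = 0 := by
  have hset : (Set.range fun p : ↥Γ × ℕ => hv.H p.1 p.2) = hv.basis '' (Set.range Sum.inr) := by
    ext v
    constructor
    · rintro ⟨p, rfl⟩; exact ⟨Sum.inr p, ⟨p, rfl⟩, by rw [hv.basis_inr]⟩
    · rintro ⟨_, ⟨p, rfl⟩, rfl⟩; exact ⟨p, (hv.basis_inr p.1 p.2).symm⟩
  rw [Hspan, hset, Module.Basis.mem_span_image]
  constructor
  · intro h q
    by_contra hq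
    have hmem : Sum.inl q ∈ (hv.basis.repr x).support := Finsupp.mem_support_iff.2 hq
    rcases h hmem with ⟨p, hp⟩
    simp at hp
  · intro h i hi
    match i with
    | Sum.inl q => exact absurd (h q) (Finsupp.mem_support_iff.1 hi)
    | Sum.inr p => exact ⟨p, rfl⟩



noncomputable def rb (c : V) : V →ₗ[ℂ] V where
  toFun y := ⁅y, c⁆
  map_add' a b := add_lie a b c
  map_smul' t a := smul_lie t a c

@[simp] lemma rb_apply (c y : V) : rb (V := V) c y = ⁅y, c⁆ := rfl

lemma forall_mem (S : Submodule ℂ V) (f : V →ₗ[ℂ] V)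
    (h : ∀ i, f (hv.basis i) ∈ S) (y : V) : f y ∈ S := by
  have hle : ⊤ ≤ S.comap f := by
    rw [← hv.basis.span_eq, Submodule.span_le]
    rintro _ ⟨i, rfl⟩; exact h i
  exact hle trivial

lemma H_mem_Hspan (β : Γ) (j : ℕ) : hv.H β j ∈ hv.Hspan :=
  Submodule.subset_span ⟨(β, j), rfl⟩

lemma lie_H00 (y : V) : ⁅y, hv.H 0 0⁆ = 0 := by
  have h : ∀ y : V, rb (hv.H 0 0) y ∈ (⊥ : Submodule ℂ V) := by
    apply hv.forall_mem
    rintro (⟨α, i⟩ | ⟨β, j⟩)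
    · rw [hv.basis_inl]
      simp [hv.lie_L_H]
    · rw [hv.basis_inr]
      simp [hv.lie_H_H]
  simpa using h y

lemma lie_mem_Hspan (y : V) {x : V} (hx : x ∈ hv.Hspan) : ⁅y, x⁆ ∈ hv.Hspan := by
  induction hx using Submodule.span_induction with
  | mem v hv' =>
    rcases hv' with ⟨p, rfl⟩
    have h : ∀ z : V, rb (hv.H p.1 p.2) z ∈ hv.Hspan := by
      apply hv.forall_mem
      rintro (⟨α, i⟩ | ⟨β, j⟩)
      · rw [hv.basis_inl, rb_apply, hv.lie_L_H]
        exact Submodule.add_mem _ (Submodule.smul_mem _ _ (hv.H_mem_Hspan _ _))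
          (Submodule.smul_mem _ _ (hv.H_mem_Hspan _ _))
      · rw [hv.basis_inr, rb_apply, hv.lie_H_H]
        exact Submodule.zero_mem _
    simpa using h y
  | zero => simp
  | add u v _ _ hu hv'' => rw [lie_add]; exact Submodule.add_mem _ hu hv''
  | smul c u _ hu => rw [lie_smul]; exact Submodule.smul_mem _ _ hu

lemma lie_Hspan_H (γ : Γ) (k : ℕ) {u : V} (hu : u ∈ hv.Hspan) : ⁅u, hv.H γ k⁆ = 0 := by
  induction hu using Submodule.span_induction with
  | mem v hv' => rcases hv' with ⟨p, rfl⟩; exact hv.lie_H_H _ _ _ _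
  | zero => simp
  | add u v _ _ hu hv'' => rw [add_lie, hu, hv'']; simp
  | smul c u _ hu => rw [smul_lie, hu, smul_zero]

lemma coH_ad (β : Γ) (j : ℕ) (x : V) :
    hv.coH (β, j) ⁅hv.L 0 0, x⁆
      = (β : ℂ) * hv.coH (β, j) x + ((j : ℂ) + 1) * hv.coH (β, j + 1) x := by
  have h : (hv.coH (β, j)).comp (LieAlgebra.ad ℂ V (hv.L 0 0))
      = (β : ℂ) • hv.coH (β, j) + ((j : ℂ) + 1) • hv.coH (β, j + 1) := by
    apply hv.basis.ext
    rintro (⟨α, i⟩ | ⟨β', j'⟩)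
    · rw [hv.basis_inl]
      simp [LieAlgebra.ad_apply, hv.lie_L_L, coH_L]
    · rw [hv.basis_inr]
      simp only [LinearMap.comp_apply, LieAlgebra.ad_apply, hv.lie_L_H, map_add, map_smul,
        coH_H, LinearMap.add_apply, LinearMap.smul_apply, smul_eq_mul, zero_add,
        Prod.mk.injEq]
      by_cases hb : β' = β
      · subst hb
        by_cases h1 : j' = j + 1
        · subst h1
          have h2 : ¬ (j + 1 = j) := by omega
          simp only [h2, if_false, Nat.add_sub_cancel, and_true, and_false, if_true, true_and]
          push_cast; ring
        · by_cases h3 : j' = j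
          · subst h3
            by_cases h5 : j' = 0
            · subst h5; simp
            · have h7 : ¬ (j' - 1 = j') := by omega
              simp [h1, h7]
          · have h6 : ¬ (j' - 1 = j) ∨ j' = 0 := by omega
            rcases h6 with h6 | h6
            · simp [h1, h3, h6]
            · subst h6; simp [h1, h3]
      · simp [hb]
  have := LinearMap.congr_fun h x
  simpa using this



lemma coL_ad (α : Γ) (i : ℕ) (x : V) :
    hv.coL (α, i) ⁅hv.L 0 0, x⁆
      = (α : ℂ) * hv.coL (α, i) x + ((i : ℂ) + 1) * hv.coL (α, i + 1) x := by
  have h : (hv.coL (α, i)).comp (LieAlgebra.ad ℂ V (hv.L 0 0))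
      = (α : ℂ) • hv.coL (α, i) + ((i : ℂ) + 1) • hv.coL (α, i + 1) := by
    apply hv.basis.ext
    rintro (⟨α', i'⟩ | ⟨β', j'⟩)
    swap
    · rw [hv.basis_inr]
      simp [LieAlgebra.ad_apply, hv.lie_L_H, coL_H]
    · rw [hv.basis_inl]
      simp only [LinearMap.comp_apply, LieAlgebra.ad_apply, hv.lie_L_L, map_add, map_smul,
        coL_L, LinearMap.add_apply, LinearMap.smul_apply, smul_eq_mul, zero_add,
        Prod.mk.injEq, sub_zero]
      by_cases hb : α' = α
      · subst hb
        by_cases h1 : i' = i + 1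
        · subst h1
          have h2 : ¬ (i + 1 = i) := by omega
          simp only [h2, if_false, Nat.add_sub_cancel, and_true, and_false, if_true, true_and]
          push_cast; ring
        · by_cases h3 : i' = i
          · subst h3
            by_cases h5 : i' = 0
            · subst h5; simp
            · have h7 : ¬ (i' - 1 = i') := by omega
              simp [h1, h7]
          · have h6 : ¬ (i' - 1 = i) ∨ i' = 0 := by omega
            rcases h6 with h6 | h6
            · simp [h1, h3, h6]
            · subst h6; simp [h1, h3]
      · simp [hb]
  have := LinearMap.congr_fun h x
  simpa using this

lemma lie_H01_L (α : Γ) (i : ℕ) : ⁅hv.H 0 1, hv.L α i⁆ = -(hv.H α i) := by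
  rw [← lie_skew, hv.lie_L_H]
  simp

lemma coL_adH01 (q : ↥Γ × ℕ) (x : V) : hv.coL q ⁅hv.H 0 1, x⁆ = 0 := by
  have h : (hv.coL q).comp (LieAlgebra.ad ℂ V (hv.H 0 1)) = 0 := by
    apply hv.basis.ext
    rintro (⟨α', i'⟩ | ⟨β', j'⟩)
    · rw [hv.basis_inl]
      simp [LieAlgebra.ad_apply, lie_H01_L, coL_H]
    · rw [hv.basis_inr]
      simp [LieAlgebra.ad_apply, hv.lie_H_H]
  have := LinearMap.congr_fun h x
  simpa using this

lemma coH_adH01 (q : ↥Γ × ℕ) (x : V) : hv.coH q ⁅hv.H 0 1, x⁆ = - hv.coL q x := by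
  have h : (hv.coH q).comp (LieAlgebra.ad ℂ V (hv.H 0 1)) = - hv.coL q := by
    apply hv.basis.ext
    rintro (⟨α', i'⟩ | ⟨β', j'⟩)
    · rw [hv.basis_inl]
      simp [LieAlgebra.ad_apply, lie_H01_L, coH_H, coL_L]
    · rw [hv.basis_inr]
      simp [LieAlgebra.ad_apply, hv.lie_H_H, coL_H]
  have := LinearMap.congr_fun h x
  simpa using this




lemma kill (co : ↥Γ × ℕ → V →ₗ[ℂ] ℂ)
    (hco : ∀ β j (x : V), co (β, j) ⁅hv.L 0 0, x⁆
      = (β : ℂ) * co (β, j) x + ((j : ℂ) + 1) * co (β, j + 1) x)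
    (Q : V → Prop) (hQ : ∀ (c : ℂ) x, Q x → Q (⁅hv.L 0 0, x⁆ - c • x))
    (β1 β2 : Γ) (hne : β2 ≠ β1) (m : ℕ) :
    ∀ N : ℕ, ∀ x : V, Q x → (∀ j, N ≤ j → co (β1, j) x = 0) →
      co (β2, m) x ≠ 0 → (∀ j, m < j → co (β2, j) x = 0) →
      ∃ z, Q z ∧ (∀ j, co (β1, j) z = 0) ∧ co (β2, m) z ≠ 0 ∧ (∀ j, m < j → co (β2, j) z = 0)
        ∧ (∀ β j, co (β, j) z ≠ 0 → ∃ j', co (β, j') x ≠ 0) := by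
  intro N
  induction N with
  | zero =>
    intro x hQx hcol htr htop
    exact ⟨x, hQx, fun j => hcol j (Nat.zero_le j), htr, htop, fun β j h => ⟨j, h⟩⟩
  | succ N ih =>
    intro x hQx hcol htr htop
    set x' := ⁅hv.L 0 0, x⁆ - (β1 : ℂ) • x with hx'
    have hco' : ∀ β j, co (β, j) x'
        = ((β : ℂ) - (β1 : ℂ)) * co (β, j) x + ((j : ℂ) + 1) * co (β, j + 1) x := by
      intro β j
      rw [hx', map_sub, map_smul, hco, smul_eq_mul]; ring
    have h1 : ∀ j, N ≤ j → co (β1, j) x' = 0 := by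
      intro j hj
      rw [hco', sub_self, hcol (j + 1) (by omega)]; ring
    have h2 : co (β2, m) x' ≠ 0 := by
      rw [hco', htop (m + 1) (by omega)]
      have : ((β2 : ℂ) - (β1 : ℂ)) ≠ 0 :=
        sub_ne_zero.mpr (fun h => hne (Subtype.coe_injective h))
      simpa using mul_ne_zero this htr
    have h3 : ∀ j, m < j → co (β2, j) x' = 0 := by
      intro j hj
      rw [hco', htop j hj, htop (j + 1) (by omega)]; ring
    obtain ⟨z, hz1, hz2, hz3, hz4, hz5⟩ := ih x' (hQ _ _ hQx) h1 h2 h3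
    refine ⟨z, hz1, hz2, hz3, hz4, fun β j h => ?_⟩
    obtain ⟨j', hj'⟩ := hz5 β j h
    by_contra hc
    push_neg at hc
    rw [hco', hc j', hc (j' + 1)] at hj'
    simp at hj'

lemma engine (co : ↥Γ × ℕ → V →ₗ[ℂ] ℂ)
    (hco : ∀ β j (x : V), co (β, j) ⁅hv.L 0 0, x⁆
      = (β : ℂ) * co (β, j) x + ((j : ℂ) + 1) * co (β, j + 1) x)
    (Q : V → Prop) (hQ : ∀ (c : ℂ) x, Q x → Q (⁅hv.L 0 0, x⁆ - c • x))
    (hbound : ∀ x : V, Q x → ∃ N, ∀ β j, N ≤ j → co (β, j) x = 0)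
    (β2 : Γ) (m : ℕ) :
    ∀ n : ℕ, ∀ x : V, ∀ t : Finset Γ, Q x → (∀ β j, co (β, j) x ≠ 0 → β ∈ t) →
      (t \ {β2}).card ≤ n → co (β2, m) x ≠ 0 → (∀ j, m < j → co (β2, j) x = 0) →
      ∃ y, Q y ∧ (∀ β j, β ≠ β2 → co (β, j) y = 0) ∧ co (β2, m) y ≠ 0
        ∧ (∀ j, m < j → co (β2, j) y = 0) := by
  intro n
  induction n with
  | zero =>
    intro x t hQx ht hcard htr htop
    refine ⟨x, hQx, fun β j hb => ?_, htr, htop⟩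
    by_contra hc
    have hβt : β ∈ t \ {β2} := Finset.mem_sdiff.mpr ⟨ht β j hc, by simpa using hb⟩
    have := Finset.card_pos.mpr ⟨β, hβt⟩
    omega
  | succ n ih =>
    intro x t hQx ht hcard htr htop
    by_cases hall : ∀ β j, co (β, j) x ≠ 0 → β = β2
    · exact ⟨x, hQx, fun β j hb => by_contra fun hc => hb (hall β j hc), htr, htop⟩
    · push_neg at hall
      obtain ⟨β1, j1, hβ1, hβ1ne⟩ := hall
      obtain ⟨N, hN⟩ := hbound x hQx
      obtain ⟨z, hz1, hz2, hz3, hz4, hz5⟩ := hv.kill co hco Q hQ β1 β2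
        (fun h => hβ1ne h.symm) m N x hQx (fun j hj => hN β1 j hj) htr htop
      refine ih z (t.erase β1) hz1 (fun β j h => ?_) ?_ hz3 hz4
      · obtain ⟨j', hj'⟩ := hz5 β j h
        refine Finset.mem_erase.mpr ⟨fun hb => ?_, ht β j' hj'⟩
        subst hb; exact h (hz2 j)
      · have hsub : t.erase β1 \ {β2} ⊆ (t \ {β2}).erase β1 := by
          intro β hβ
          simp only [Finset.mem_sdiff, Finset.mem_erase, Finset.mem_singleton] at hβ ⊢
          tauto
        have hβ1mem : β1 ∈ t \ {β2} :=
          Finset.mem_sdiff.mpr ⟨ht β1 j1 hβ1, by simpa using hβ1ne⟩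
        have := Finset.card_le_card hsub
        rw [Finset.card_erase_of_mem hβ1mem] at this
        omega




lemma lieI (I : LieIdeal ℂ V) {x : V} (y : V) (hx : x ∈ (I : Submodule ℂ V)) :
    ⁅y, x⁆ ∈ (I : Submodule ℂ V) := I.lie_mem hx

lemma coe_ne_zero {γ : Γ} (h : γ ≠ 0) : (γ : ℂ) ≠ 0 :=
  fun hc => h (Subtype.coe_injective hc)

lemma exists_ne_zero (hΓ : Γ ≠ ⊥) : ∃ γ : Γ, γ ≠ 0 := by
  by_contra hc
  push_neg at hc
  exact hΓ (by
    rw [AddSubgroup.eq_bot_iff_forall]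
    intro g hg
    exact congrArg Subtype.val (hc ⟨g, hg⟩))

lemma genH (I : LieIdeal ℂ V) (γ : Γ) (hγ : γ ≠ 0) (hmem : hv.H γ 0 ∈ (I : Submodule ℂ V)) :
    hv.Hspan ≤ (I : Submodule ℂ V) := by
  rw [Hspan, Submodule.span_le]
  rintro _ ⟨⟨δ, k⟩, rfl⟩
  have hbr : ⁅hv.L (δ - γ) k, hv.H γ 0⁆ = (γ : ℂ) • hv.H δ k := by
    rw [hv.lie_L_H]
    simp [sub_add_cancel]
  have hI : ⁅hv.L (δ - γ) k, hv.H γ 0⁆ ∈ (I : Submodule ℂ V) := lieI I _ hmem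
  rw [hbr] at hI
  have := Submodule.smul_mem (I : Submodule ℂ V) (γ : ℂ)⁻¹ hI
  rw [inv_smul_smul₀ (coe_ne_zero hγ)] at this
  exact this

lemma repr_eq_single (x : V) (k : (↥Γ × ℕ) ⊕ (↥Γ × ℕ))
    (h : ∀ k', k' ≠ k → hv.basis.repr x k' = 0) :
    x = hv.basis.repr x k • hv.basis k := by
  have hrepr : hv.basis.repr x = Finsupp.single k (hv.basis.repr x k) := by
    ext k'
    rw [Finsupp.single_apply]
    by_cases hk : k' = k
    · subst hk; simp
    · rw [h k' hk, if_neg (fun hh => hk hh.symm)]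
  apply hv.basis.repr.injective
  rw [map_smul, hv.basis.repr_self, Finsupp.smul_single, smul_eq_mul, mul_one]
  exact hrepr




lemma coL_apply (q : ↥Γ × ℕ) (x : V) : hv.coL q x = hv.basis.repr x (Sum.inl q) :=
  hv.basis.coord_apply _ _

lemma coH_apply (q : ↥Γ × ℕ) (x : V) : hv.coH q x = hv.basis.repr x (Sum.inr q) :=
  hv.basis.coord_apply _ _

lemma eq_coH_smul (x : V) (p : ↥Γ × ℕ)
    (hL : ∀ q, hv.coL q x = 0) (hH : ∀ q, q ≠ p → hv.coH q x = 0) :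
    x = hv.coH p x • hv.H p.1 p.2 := by
  have h := hv.repr_eq_single x (Sum.inr p) ?_
  · rw [← hv.coH_apply, hv.basis_inr] at h
    exact h
  · rintro (q | q) hk
    · rw [← hv.coL_apply]; exact hL q
    · rw [← hv.coH_apply]; exact hH q (fun h' => hk (congrArg Sum.inr h'))

lemma eq_pairH (x : V) (hL : ∀ q, hv.coL q x = 0)
    (hH : ∀ q, q ≠ ((0 : Γ), 1) → q ≠ ((0 : Γ), 0) → hv.coH q x = 0) :
    x = hv.coH (0, 1) x • hv.H 0 1 + hv.coH (0, 0) x • hv.H 0 0 := by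
  apply hv.basis.repr.injective
  ext k
  rw [map_add, map_smul, map_smul, ← hv.basis_inr 0 1, ← hv.basis_inr 0 0,
    hv.basis.repr_self, hv.basis.repr_self]
  rcases k with q | q
  · rw [Finsupp.add_apply, Finsupp.smul_apply, Finsupp.smul_apply,
      Finsupp.single_apply, Finsupp.single_apply, ← hv.coL_apply]
    simp [hL q]
  · rw [Finsupp.add_apply, Finsupp.smul_apply, Finsupp.smul_apply,
      Finsupp.single_apply, Finsupp.single_apply, ← hv.coH_apply]
    simp only [Sum.inr.injEq]
    by_cases h1 : q = ((0 : Γ), 1)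
    · subst h1
      rw [if_pos rfl, if_neg (by simp [Prod.ext_iff])]
      simp
    · by_cases h2 : q = ((0 : Γ), 0)
      · subst h2
        rw [if_neg (fun h => h1 h.symm), if_pos rfl]
        simp
      · rw [hH q h1 h2, if_neg (fun h => h1 h.symm), if_neg (fun h => h2 h.symm)]
        simp

lemma homogH_ne (I : LieIdeal ℂ V) (β2 : Γ) (hβ2 : β2 ≠ 0) :
    ∀ m : ℕ, ∀ y : V, y ∈ (I : Submodule ℂ V) → (∀ q, hv.coL q y = 0) →
      (∀ β j, β ≠ β2 → hv.coH (β, j) y = 0) → hv.coH (β2, m) y ≠ 0 →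
      (∀ j, m < j → hv.coH (β2, j) y = 0) → hv.Hspan ≤ (I : Submodule ℂ V) := by
  intro m
  induction m with
  | zero =>
    intro y hyI hL hcols htr htop
    have hy : y = hv.coH (β2, 0) y • hv.H β2 0 := by
      apply hv.eq_coH_smul y (β2, 0) hL
      rintro ⟨β, j⟩ hq
      by_cases hβ : β = β2
      · subst hβ
        have hj : j ≠ 0 := fun h => hq (by rw [h])
        exact htop j (Nat.pos_of_ne_zero hj)
      · exact hcols β j hβ
    have hmem : hv.H β2 0 ∈ (I : Submodule ℂ V) := by
      set c := hv.coH (β2, 0) y with hc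
      have h3 : hv.H β2 0 = c⁻¹ • y := by
        conv_rhs => rw [hy]
        rw [inv_smul_smul₀ htr]
      rw [h3]
      exact Submodule.smul_mem _ _ hyI
    exact hv.genH I β2 hβ2 hmem
  | succ m ih =>
    intro y hyI hL hcols htr htop
    set y' := ⁅hv.L 0 0, y⁆ - (β2 : ℂ) • y with hy'
    have hmem : y' ∈ (I : Submodule ℂ V) :=
      Submodule.sub_mem _ (lieI I _ hyI) (Submodule.smul_mem _ _ hyI)
    have hcoH' : ∀ β j, hv.coH (β, j) y'
        = ((β : ℂ) - (β2 : ℂ)) * hv.coH (β, j) y + ((j : ℂ) + 1) * hv.coH (β, j + 1) y := by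
      intro β j
      rw [hy', map_sub, map_smul, hv.coH_ad, smul_eq_mul]; ring
    have hcoL' : ∀ q, hv.coL q y' = 0 := by
      rintro ⟨α, i⟩
      rw [hy', map_sub, map_smul, hv.coL_ad, smul_eq_mul, hL (α, i), hL (α, i + 1)]
      ring
    refine ih y' hmem hcoL' (fun β j hβ => ?_) ?_ (fun j hj => ?_)
    · rw [hcoH', hcols β j hβ, hcols β (j + 1) hβ]; ring
    · rw [hcoH', sub_self]
      have hm1 : ((m : ℂ) + 1) ≠ 0 := by
        have : ((m + 1 : ℕ) : ℂ) ≠ 0 := Nat.cast_ne_zero.2 (Nat.succ_ne_zero m)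
        push_cast at this
        exact this
      simpa using mul_ne_zero hm1 htr
    · rw [hcoH', sub_self, htop (j + 1) (by omega)]
      ring


lemma homogH_zero (hΓ : Γ ≠ ⊥) (I : LieIdeal ℂ V) :
    ∀ m : ℕ, ∀ y : V, y ∈ (I : Submodule ℂ V) → (∀ q, hv.coL q y = 0) →
      (∀ β j, β ≠ 0 → hv.coH (β, j) y = 0) → hv.coH (0, m + 1) y ≠ 0 →
      (∀ j, m + 1 < j → hv.coH (0, j) y = 0) → hv.Hspan ≤ (I : Submodule ℂ V) := by
  intro m
  induction m with
  | zero =>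
    intro y hyI hL hcols htr htop
    have hy : y = hv.coH (0, 1) y • hv.H 0 1 + hv.coH (0, 0) y • hv.H 0 0 := by
      apply hv.eq_pairH y hL
      rintro ⟨β, j⟩ h1 h2
      by_cases hβ : β = 0
      · subst hβ
        have hj0 : j ≠ 0 := fun hh => h2 (by rw [hh])
        have hj1 : j ≠ 1 := fun hh => h1 (by rw [hh])
        exact htop j (by omega)
      · exact hcols β j hβ
    obtain ⟨γ, hγ⟩ := exists_ne_zero hΓ
    have hz : ⁅hv.L γ 0, y⁆ = hv.coH (0, 1) y • hv.H γ 0 := by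
      conv_lhs => rw [hy]
      rw [lie_add, lie_smul, lie_smul, hv.lie_L_H, hv.lie_L_H]
      simp
    have hmem : hv.H γ 0 ∈ (I : Submodule ℂ V) := by
      have h1 : ⁅hv.L γ 0, y⁆ ∈ (I : Submodule ℂ V) := lieI I _ hyI
      rw [hz] at h1
      have h2 := Submodule.smul_mem (I : Submodule ℂ V) (hv.coH (0, 1) y)⁻¹ h1
      rw [inv_smul_smul₀ htr] at h2
      exact h2
    exact hv.genH I γ hγ hmem
  | succ m ih =>
    intro y hyI hL hcols htr htop
    set y' := ⁅hv.L 0 0, y⁆ with hy'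
    have hcoH' : ∀ (β : Γ) (j : ℕ), hv.coH (β, j) y'
        = (β : ℂ) * hv.coH (β, j) y + ((j : ℂ) + 1) * hv.coH (β, j + 1) y :=
      fun β j => hv.coH_ad β j y
    have hcoL' : ∀ q, hv.coL q y' = 0 := by
      rintro ⟨α, i⟩
      rw [hy', hv.coL_ad, hL (α, i), hL (α, i + 1)]; ring
    refine ih y' (lieI I _ hyI) hcoL' (fun β j hβ => ?_) ?_ (fun j hj => ?_)
    · rw [hcoH', hcols β j hβ, hcols β (j + 1) hβ]; ring
    · rw [hcoH']
      have hc0 : ((0 : Γ) : ℂ) = 0 := rfl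
      rw [hc0]
      have hm1 : ((m + 1 : ℕ) : ℂ) + 1 ≠ 0 := by
        have h2 : ((m + 2 : ℕ) : ℂ) ≠ 0 := Nat.cast_ne_zero.2 (by omega)
        push_cast at h2 ⊢
        intro hcontra
        exact h2 (by linear_combination hcontra)
      have := mul_ne_zero hm1 htr
      simpa using this
    · rw [hcoH', htop (j + 1) (by omega)]
      have hc0 : ((0 : Γ) : ℂ) = 0 := rfl
      rw [hc0]; ring

lemma exists_top (f : ℕ → ℂ) (s : Finset ℕ) (hmem : ∀ j, f j ≠ 0 → j ∈ s)
    (j0 : ℕ) (h : f j0 ≠ 0) :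
    ∃ m, f m ≠ 0 ∧ j0 ≤ m ∧ ∀ j, m < j → f j = 0 := by
  classical
  have hj0 : j0 ∈ s.filter (fun j => f j ≠ 0) := Finset.mem_filter.mpr ⟨hmem _ h, h⟩
  have hne : (s.filter (fun j => f j ≠ 0)).Nonempty := ⟨j0, hj0⟩
  refine ⟨(s.filter (fun j => f j ≠ 0)).max' hne,
    (Finset.mem_filter.mp ((s.filter (fun j => f j ≠ 0)).max'_mem hne)).2,
    Finset.le_max' _ _ hj0, ?_⟩
  intro j hj
  by_contra hc
  have := Finset.le_max' (s.filter (fun j => f j ≠ 0)) j (Finset.mem_filter.mpr ⟨hmem _ hc, hc⟩)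
  omega

lemma lemB (hΓ : Γ ≠ ⊥) (I : LieIdeal ℂ V) (x : V) (hxI : x ∈ (I : Submodule ℂ V))
    (hL : ∀ q, hv.coL q x = 0) (p : ↥Γ × ℕ) (hp : p ≠ (0, 0)) (hpx : hv.coH p x ≠ 0) :
    hv.Hspan ≤ (I : Submodule ℂ V) := by
  obtain ⟨β, j0⟩ := p
  have hmem : ∀ j : ℕ, hv.coH (β, j) x ≠ 0 →
      j ∈ (hv.basis.repr x).support.image (Sum.elim Prod.snd Prod.snd) := by
    intro j hj
    refine Finset.mem_image.mpr ⟨Sum.inr (β, j), ?_, rfl⟩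
    rw [Finsupp.mem_support_iff]
    rw [hv.coH_apply] at hj
    exact hj
  obtain ⟨m, htr, hj0le, htop⟩ := exists_top (fun j => hv.coH (β, j) x) _ hmem j0 hpx
  set Q : V → Prop := fun z => z ∈ (I : Submodule ℂ V) ∧ ∀ q, hv.coL q z = 0 with hQdef
  have hQ : ∀ (c : ℂ) (z : V), Q z → Q (⁅hv.L 0 0, z⁆ - c • z) := by
    rintro c z ⟨hz1, hz2⟩
    refine ⟨Submodule.sub_mem _ (lieI I _ hz1) (Submodule.smul_mem _ _ hz1), ?_⟩
    rintro ⟨α, i⟩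
    rw [map_sub, map_smul, hv.coL_ad, hz2 (α, i), hz2 (α, i + 1), smul_eq_mul]; ring
  have hbound : ∀ z : V, Q z → ∃ N, ∀ (β' : Γ) (j : ℕ), N ≤ j → hv.coH (β', j) z = 0 := by
    intro z _
    refine ⟨((hv.basis.repr z).support.image (Sum.elim Prod.snd Prod.snd)).sup id + 1,
      fun β' j hj => ?_⟩
    by_contra hc
    have h1 : j ∈ (hv.basis.repr z).support.image (Sum.elim Prod.snd Prod.snd) := by
      refine Finset.mem_image.mpr ⟨Sum.inr (β', j), ?_, rfl⟩
      rw [Finsupp.mem_support_iff]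
      rw [hv.coH_apply] at hc
      exact hc
    have h2 := Finset.le_sup (f := id) h1
    simp only [id] at h2
    omega
  have ht : ∀ (β' : Γ) (j : ℕ), hv.coH (β', j) x ≠ 0 →
      β' ∈ (hv.basis.repr x).support.image (Sum.elim Prod.fst Prod.fst) := by
    intro β' j hj
    refine Finset.mem_image.mpr ⟨Sum.inr (β', j), ?_, rfl⟩
    rw [Finsupp.mem_support_iff]
    rw [hv.coH_apply] at hj
    exact hj
  obtain ⟨y, ⟨hyI, hyL⟩, hycols, hytr, hytop⟩ := hv.engine hv.coH hv.coH_ad Q hQ hbound β m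
    (((hv.basis.repr x).support.image (Sum.elim Prod.fst Prod.fst)) \ {β}).card x
    ((hv.basis.repr x).support.image (Sum.elim Prod.fst Prod.fst)) ⟨hxI, hL⟩ ht le_rfl htr htop
  by_cases hβ : β = 0
  · subst hβ
    have hm1 : m ≠ 0 := by
      intro h
      have hj0 : j0 ≠ 0 := fun hh => hp (by rw [hh])
      omega
    obtain ⟨m', rfl⟩ := Nat.exists_eq_succ_of_ne_zero hm1
    exact hv.homogH_zero hΓ I m' y hyI hyL hycols hytr hytop
  · exact hv.homogH_ne I β hβ m y hyI hyL hycols hytr hytop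

lemma smul_cancel {S : Submodule ℂ V} {c : ℂ} (hc : c ≠ 0) {v : V} (h : c • v ∈ S) : v ∈ S := by
  have h2 := S.smul_mem c⁻¹ h
  rwa [inv_smul_smul₀ hc] at h2

lemma genTop (hΓ : Γ ≠ ⊥) (I : LieIdeal ℂ V) (hH : hv.Hspan ≤ (I : Submodule ℂ V))
    (hL00 : hv.L 0 0 ∈ (I : Submodule ℂ V)) : (I : Submodule ℂ V) = ⊤ := by
  have hLne : ∀ (β : Γ), β ≠ 0 → ∀ j, hv.L β j ∈ (I : Submodule ℂ V) := by
    intro β hβ j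
    induction j with
    | zero =>
      have hbr : ⁅hv.L β 0, hv.L 0 0⁆ = (-(β : ℂ)) • hv.L β 0 := by
        rw [hv.lie_L_L]
        simp
      have h1 := lieI I (hv.L β 0) hL00
      rw [hbr] at h1
      exact smul_cancel (neg_ne_zero.mpr (coe_ne_zero hβ)) h1
    | succ j ihj =>
      have hbr : ⁅hv.L β (j + 1), hv.L 0 0⁆
          = (-(β : ℂ)) • hv.L β (j + 1) + (-((j : ℂ) + 1)) • hv.L β j := by
        rw [hv.lie_L_L]
        push_cast
        simp
      have h1 := lieI I (hv.L β (j + 1)) hL00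
      rw [hbr] at h1
      have h3 := Submodule.sub_mem _ h1 (Submodule.smul_mem _ (-((j : ℂ) + 1)) ihj)
      rw [add_sub_cancel_right] at h3
      exact smul_cancel (neg_ne_zero.mpr (coe_ne_zero hβ)) h3
  obtain ⟨γ, hγ⟩ := exists_ne_zero hΓ
  have h2γ : ((γ : ℂ) + γ) ≠ 0 := by
    have h22 : (γ : ℂ) + γ = 2 * γ := by ring
    rw [h22]
    exact mul_ne_zero two_ne_zero (coe_ne_zero hγ)
  have hL0 : ∀ j, hv.L 0 j ∈ (I : Submodule ℂ V) := by
    intro j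
    induction j with
    | zero => exact hL00
    | succ j ihj =>
      have hbr : ⁅hv.L (-γ) 0, hv.L γ (j + 1)⁆
          = ((γ : ℂ) + γ) • hv.L 0 (j + 1) + ((j : ℂ) + 1) • hv.L 0 j := by
        rw [hv.lie_L_L]
        push_cast
        simp [sub_neg_eq_add]
      have h1 := lieI I (hv.L (-γ) 0) (hLne γ hγ (j + 1))
      rw [hbr] at h1
      have h3 := Submodule.sub_mem _ h1 (Submodule.smul_mem _ ((j : ℂ) + 1) ihj)
      rw [add_sub_cancel_right] at h3
      exact smul_cancel h2γ h3
  rw [eq_top_iff, ← hv.basis.span_eq, Submodule.span_le]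
  rintro _ ⟨(⟨β, j⟩ | ⟨β, j⟩), rfl⟩
  · rw [hv.basis_inl]
    by_cases hβ : β = 0
    · subst hβ; exact hL0 j
    · exact hLne β hβ j
  · rw [hv.basis_inr]
    exact hH (hv.H_mem_Hspan β j)

lemma homogW_zero (hΓ : Γ ≠ ⊥) (I : LieIdeal ℂ V) (hH : hv.Hspan ≤ (I : Submodule ℂ V)) :
    ∀ m : ℕ, ∀ y : V, y ∈ (I : Submodule ℂ V) →
      (∀ (β : Γ) (j : ℕ), β ≠ 0 → hv.coL (β, j) y = 0) → hv.coL (0, m) y ≠ 0 →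
      (∀ j, m < j → hv.coL (0, j) y = 0) → (I : Submodule ℂ V) = ⊤ := by
  intro m
  induction m with
  | zero =>
    intro y hyI hcols htr htop
    have hmemH : y - hv.coL (0, 0) y • hv.L 0 0 ∈ hv.Hspan := by
      rw [hv.mem_Hspan_iff]
      rintro ⟨α, i⟩
      rw [map_sub, map_smul, hv.coL_L, smul_eq_mul]
      by_cases hq : ((0 : Γ), (0 : ℕ)) = ((α : Γ), i)
      · obtain ⟨h1, h2⟩ := Prod.ext_iff.mp hq
        subst h1; subst h2
        rw [if_pos rfl, mul_one, sub_self]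
      · rw [if_neg hq, mul_zero, sub_zero]
        by_cases hα : α = 0
        · subst hα
          have hi : i ≠ 0 := fun h => hq (by rw [h])
          exact htop i (Nat.pos_of_ne_zero hi)
        · exact hcols α i hα
    have hLI : hv.coL (0, 0) y • hv.L 0 0 ∈ (I : Submodule ℂ V) := by
      have := Submodule.sub_mem _ hyI (hH hmemH)
      simpa using this
    exact hv.genTop hΓ I hH (smul_cancel htr hLI)
  | succ m ih =>
    intro y hyI hcols htr htop
    set y' := ⁅hv.L 0 0, y⁆ with hy'
    have hco' : ∀ (β : Γ) (j : ℕ), hv.coL (β, j) y'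
        = (β : ℂ) * hv.coL (β, j) y + ((j : ℂ) + 1) * hv.coL (β, j + 1) y :=
      fun β j => hv.coL_ad β j y
    refine ih y' (lieI I _ hyI) (fun β j hβ => ?_) ?_ (fun j hj => ?_)
    · rw [hco', hcols β j hβ, hcols β (j + 1) hβ]; ring
    · rw [hco']
      have hc0 : (((0 : Γ)) : ℂ) = 0 := rfl
      rw [hc0]
      have hm1 : ((m : ℂ) + 1) ≠ 0 := by
        have h2 : ((m + 1 : ℕ) : ℂ) ≠ 0 := Nat.cast_ne_zero.2 (by omega)
        push_cast at h2; exact h2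
      simpa using mul_ne_zero hm1 htr
    · rw [hco', htop (j + 1) (by omega)]
      have hc0 : (((0 : Γ)) : ℂ) = 0 := rfl
      rw [hc0]; ring

lemma homogW_ne (hΓ : Γ ≠ ⊥) (I : LieIdeal ℂ V) (hH : hv.Hspan ≤ (I : Submodule ℂ V))
    (β2 : Γ) (hβ2 : β2 ≠ 0) :
    ∀ m : ℕ, ∀ y : V, y ∈ (I : Submodule ℂ V) →
      (∀ (β : Γ) (j : ℕ), β ≠ β2 → hv.coL (β, j) y = 0) → hv.coL (β2, m) y ≠ 0 →
      (∀ j, m < j → hv.coL (β2, j) y = 0) → (I : Submodule ℂ V) = ⊤ := by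
  intro m
  induction m with
  | zero =>
    intro y hyI hcols htr htop
    have hmemH : y - hv.coL (β2, 0) y • hv.L β2 0 ∈ hv.Hspan := by
      rw [hv.mem_Hspan_iff]
      rintro ⟨α, i⟩
      rw [map_sub, map_smul, hv.coL_L, smul_eq_mul]
      by_cases hq : ((β2 : Γ), (0 : ℕ)) = ((α : Γ), i)
      · obtain ⟨h1, h2⟩ := Prod.ext_iff.mp hq
        subst h1; subst h2
        rw [if_pos rfl, mul_one, sub_self]
      · rw [if_neg hq, mul_zero, sub_zero]
        by_cases hα : α = β2
        · subst hα
          have hi : i ≠ 0 := fun h => hq (by rw [h])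
          exact htop i (Nat.pos_of_ne_zero hi)
        · exact hcols α i hα
    have hLI : hv.L β2 0 ∈ (I : Submodule ℂ V) := by
      have h1 := Submodule.sub_mem _ hyI (hH hmemH)
      simp only [sub_sub_cancel] at h1
      exact smul_cancel htr h1
    have hbr : ⁅hv.L (-β2) 0, hv.L β2 0⁆ = ((β2 : ℂ) + β2) • hv.L 0 0 := by
      rw [hv.lie_L_L]
      push_cast
      simp [sub_neg_eq_add]
    have h2 := lieI I (hv.L (-β2) 0) hLI
    rw [hbr] at h2
    have h2β : ((β2 : ℂ) + β2) ≠ 0 := by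
      have h22 : (β2 : ℂ) + β2 = 2 * β2 := by ring
      rw [h22]
      exact mul_ne_zero two_ne_zero (coe_ne_zero hβ2)
    exact hv.genTop hΓ I hH (smul_cancel h2β h2)
  | succ m ih =>
    intro y hyI hcols htr htop
    set y' := ⁅hv.L 0 0, y⁆ - (β2 : ℂ) • y with hy'
    have hmem : y' ∈ (I : Submodule ℂ V) :=
      Submodule.sub_mem _ (lieI I _ hyI) (Submodule.smul_mem _ _ hyI)
    have hco' : ∀ (β : Γ) (j : ℕ), hv.coL (β, j) y'
        = ((β : ℂ) - (β2 : ℂ)) * hv.coL (β, j) y + ((j : ℂ) + 1) * hv.coL (β, j + 1) y := by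
      intro β j
      rw [hy', map_sub, map_smul, hv.coL_ad, smul_eq_mul]; ring
    refine ih y' hmem (fun β j hβ => ?_) ?_ (fun j hj => ?_)
    · rw [hco', hcols β j hβ, hcols β (j + 1) hβ]; ring
    · rw [hco', sub_self]
      have hm1 : ((m : ℂ) + 1) ≠ 0 := by
        have h2 : ((m + 1 : ℕ) : ℂ) ≠ 0 := Nat.cast_ne_zero.2 (by omega)
        push_cast at h2; exact h2
      simpa using mul_ne_zero hm1 htr
    · rw [hco', sub_self, htop (j + 1) (by omega)]
      ring

lemma lemA (hΓ : Γ ≠ ⊥) (I : LieIdeal ℂ V) (x : V) (hxI : x ∈ (I : Submodule ℂ V))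
    (q0 : ↥Γ × ℕ) (hq0 : hv.coL q0 x ≠ 0) : (I : Submodule ℂ V) = ⊤ := by
  have hH : hv.Hspan ≤ (I : Submodule ℂ V) := by
    by_cases hex : ∃ q : ↥Γ × ℕ, q ≠ (0, 0) ∧ hv.coL q x ≠ 0
    · obtain ⟨p, hp, hpx⟩ := hex
      refine hv.lemB hΓ I ⁅hv.H 0 1, x⁆ (lieI I _ hxI) (fun q => hv.coL_adH01 q x) p hp ?_
      rw [hv.coH_adH01]
      simpa using hpx
    · push_neg at hex
      have hq00 : q0 = ((0 : Γ), (0 : ℕ)) := by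
        by_contra hne
        exact hq0 (hex q0 hne)
      subst hq00
      obtain ⟨γ, hγ⟩ := exists_ne_zero hΓ
      have hmemH : x - hv.coL (0, 0) x • hv.L 0 0 ∈ hv.Hspan := by
        rw [hv.mem_Hspan_iff]
        rintro ⟨α, i⟩
        rw [map_sub, map_smul, hv.coL_L, smul_eq_mul]
        by_cases hq : ((0 : Γ), (0 : ℕ)) = ((α : Γ), i)
        · obtain ⟨h1, h2⟩ := Prod.ext_iff.mp hq
          subst h1; subst h2
          rw [if_pos rfl, mul_one, sub_self]
        · rw [if_neg hq, mul_zero, sub_zero]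
          exact hex (α, i) (fun h => hq h.symm)
      have hz : ⁅x, hv.H γ 0⁆ = (hv.coL (0, 0) x * (γ : ℂ)) • hv.H γ 0 := by
        conv_lhs => rw [show x = hv.coL (0, 0) x • hv.L 0 0 + (x - hv.coL (0, 0) x • hv.L 0 0)
          from (add_sub_cancel _ _).symm]
        rw [add_lie, smul_lie, hv.lie_L_H, hv.lie_Hspan_H γ 0 hmemH, add_zero]
        simp [smul_smul]
      have hzI : ⁅x, hv.H γ 0⁆ ∈ (I : Submodule ℂ V) := by
        rw [← lie_skew]
        exact Submodule.neg_mem _ (lieI I _ hxI)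
      rw [hz] at hzI
      exact hv.genH I γ hγ (smul_cancel (mul_ne_zero hq0 (coe_ne_zero hγ)) hzI)
  obtain ⟨β, j0⟩ := q0
  have hmem : ∀ j : ℕ, hv.coL (β, j) x ≠ 0 →
      j ∈ (hv.basis.repr x).support.image (Sum.elim Prod.snd Prod.snd) := by
    intro j hj
    refine Finset.mem_image.mpr ⟨Sum.inl (β, j), ?_, rfl⟩
    rw [Finsupp.mem_support_iff]
    rw [hv.coL_apply] at hj
    exact hj
  obtain ⟨m, htr, hj0le, htop⟩ := exists_top (fun j => hv.coL (β, j) x) _ hmem j0 hq0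
  set Q : V → Prop := fun z => z ∈ (I : Submodule ℂ V) with hQdef
  have hQ : ∀ (c : ℂ) (z : V), Q z → Q (⁅hv.L 0 0, z⁆ - c • z) := by
    intro c z hz
    exact Submodule.sub_mem _ (lieI I _ hz) (Submodule.smul_mem _ _ hz)
  have hbound : ∀ z : V, Q z → ∃ N, ∀ (β' : Γ) (j : ℕ), N ≤ j → hv.coL (β', j) z = 0 := by
    intro z _
    refine ⟨((hv.basis.repr z).support.image (Sum.elim Prod.snd Prod.snd)).sup id + 1,
      fun β' j hj => ?_⟩
    by_contra hc
    have h1 : j ∈ (hv.basis.repr z).support.image (Sum.elim Prod.snd Prod.snd) := by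
      refine Finset.mem_image.mpr ⟨Sum.inl (β', j), ?_, rfl⟩
      rw [Finsupp.mem_support_iff]
      rw [hv.coL_apply] at hc
      exact hc
    have h2 := Finset.le_sup (f := id) h1
    simp only [id] at h2
    omega
  have ht : ∀ (β' : Γ) (j : ℕ), hv.coL (β', j) x ≠ 0 →
      β' ∈ (hv.basis.repr x).support.image (Sum.elim Prod.fst Prod.fst) := by
    intro β' j hj
    refine Finset.mem_image.mpr ⟨Sum.inl (β', j), ?_, rfl⟩
    rw [Finsupp.mem_support_iff]
    rw [hv.coL_apply] at hj
    exact hj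
  obtain ⟨y, hyI, hycols, hytr, hytop⟩ := hv.engine hv.coL hv.coL_ad Q hQ hbound β m
    (((hv.basis.repr x).support.image (Sum.elim Prod.fst Prod.fst)) \ {β}).card x
    ((hv.basis.repr x).support.image (Sum.elim Prod.fst Prod.fst)) hxI ht le_rfl htr htop
  by_cases hβ : β = 0
  · subst hβ
    exact hv.homogW_zero hΓ I hH m y hyI hycols hytr hytop
  · exact hv.homogW_ne hΓ I hH β hβ m y hyI hycols hytr hytop

lemma classify (hΓ : Γ ≠ ⊥) (I : LieIdeal ℂ V) :
    (I : Submodule ℂ V) = ⊥ ∨ (I : Submodule ℂ V) = Submodule.span ℂ {hv.H 0 0}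
      ∨ (I : Submodule ℂ V) = hv.Hspan ∨ (I : Submodule ℂ V) = ⊤ := by
  by_cases hW : ∃ x ∈ (I : Submodule ℂ V), ∃ q, hv.coL q x ≠ 0
  · obtain ⟨x, hxI, q0, hq0⟩ := hW
    exact Or.inr (Or.inr (Or.inr (hv.lemA hΓ I x hxI q0 hq0)))
  · push_neg at hW
    have hIH : (I : Submodule ℂ V) ≤ hv.Hspan := fun x hx =>
      (hv.mem_Hspan_iff).2 (hW x hx)
    by_cases hHc : ∃ x ∈ (I : Submodule ℂ V), ∃ p : ↥Γ × ℕ, p ≠ (0, 0) ∧ hv.coH p x ≠ 0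
    · obtain ⟨x, hx, p, hp, hpx⟩ := hHc
      exact Or.inr (Or.inr (Or.inl
        (le_antisymm hIH (hv.lemB hΓ I x hx (hW x hx) p hp hpx))))
    · push_neg at hHc
      have hle : (I : Submodule ℂ V) ≤ Submodule.span ℂ {hv.H 0 0} := by
        intro x hx
        have hx0 : x = hv.coH (0, 0) x • hv.H 0 0 := by
          apply hv.eq_coH_smul x (0, 0) (hW x hx)
          intro q hq
          exact hHc x hx q hq
        rw [hx0]
        exact Submodule.smul_mem _ _ (Submodule.mem_span_singleton_self _)
      by_cases hbot : (I : Submodule ℂ V) = ⊥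
      · exact Or.inl hbot
      · refine Or.inr (Or.inl (le_antisymm hle ?_))
        obtain ⟨z, hzI, hz0⟩ := Submodule.exists_mem_ne_zero_of_ne_bot hbot
        have hz : z = hv.coH (0, 0) z • hv.H 0 0 := by
          apply hv.eq_coH_smul z (0, 0) (hW z hzI)
          intro q hq
          exact hHc z hzI q hq
        have hc0 : hv.coH (0, 0) z ≠ 0 := by
          intro h
          rw [h, zero_smul] at hz
          exact hz0 hz
        have hH00 : hv.H 0 0 ∈ (I : Submodule ℂ V) := by
          set c := hv.coH (0, 0) z with hcdef
          have h3 : hv.H 0 0 = c⁻¹ • z := by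
            conv_rhs => rw [hz]
            rw [inv_smul_smul₀ hc0]
          rw [h3]
          exact Submodule.smul_mem _ _ hzI
        rw [Submodule.span_le]
        intro v hv'
        rw [Set.mem_singleton_iff] at hv'
        subst hv'
        exact hH00

end HVData

/-- The Lie ideals of `HV` are exactly `0`, `ℂ H_{0,0}`, `H` and `HV` itself;
these four are strictly increasing (so there are exactly two nonzero proper ideals), and
`H` is the unique maximal proper ideal. -/
theorem HV_ideals (Γ : AddSubgroup ℂ) (hΓ : Γ ≠ ⊥)
    {V : Type*} [LieRing V] [LieAlgebra ℂ V] (hv : HVData Γ V) :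
    (Set.range fun I : LieIdeal ℂ V => (I : Submodule ℂ V))
      = {⊥, Submodule.span ℂ {hv.H 0 0}, hv.Hspan, ⊤} ∧
    (⊥ : Submodule ℂ V) < Submodule.span ℂ {hv.H 0 0} ∧
    Submodule.span ℂ {hv.H 0 0} < hv.Hspan ∧
    hv.Hspan < (⊤ : Submodule ℂ V) ∧
    ∀ I : LieIdeal ℂ V, (I : Submodule ℂ V) ≠ ⊤ → (I : Submodule ℂ V) ≤ hv.Hspan := by
  classical
  have hH00ne : hv.H 0 0 ≠ 0 := by
    rw [← hv.basis_inr]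
    exact hv.basis.ne_zero _
  let J1 : LieIdeal ℂ V :=
    { toSubmodule := Submodule.span ℂ {hv.H 0 0}
      lie_mem := by
        intro y x hx
        obtain ⟨c, rfl⟩ := Submodule.mem_span_singleton.mp hx
        have h0 : ⁅y, c • hv.H 0 0⁆ = 0 := by rw [lie_smul, hv.lie_H00, smul_zero]
        rw [h0]
        exact Submodule.zero_mem _ }
  let J2 : LieIdeal ℂ V :=
    { toSubmodule := hv.Hspan
      lie_mem := fun {y x} hx => hv.lie_mem_Hspan y hx }
  have hle12 : Submodule.span ℂ {hv.H 0 0} ≤ hv.Hspan := by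
    rw [Submodule.span_le]
    intro v hv'
    rw [Set.mem_singleton_iff] at hv'
    subst hv'
    exact hv.H_mem_Hspan 0 0
  have h1 : (⊥ : Submodule ℂ V) < Submodule.span ℂ {hv.H 0 0} := by
    rw [bot_lt_iff_ne_bot, Ne, Submodule.span_singleton_eq_bot]
    exact hH00ne
  have hne12 : hv.H 0 1 ∉ Submodule.span ℂ {hv.H 0 0} := by
    intro hmem
    obtain ⟨c, hc⟩ := Submodule.mem_span_singleton.mp hmem
    have h5 := congrArg (hv.coH (0, 1)) hc
    rw [map_smul, hv.coH_H, hv.coH_H] at h5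
    simp [Prod.ext_iff] at h5
  have h2 : Submodule.span ℂ {hv.H 0 0} < hv.Hspan := by
    refine lt_of_le_of_ne hle12 (fun h => hne12 ?_)
    rw [h]
    exact hv.H_mem_Hspan 0 1
  have hne3 : hv.L 0 0 ∉ hv.Hspan := by
    rw [hv.mem_Hspan_iff]
    push_neg
    refine ⟨(0, 0), ?_⟩
    rw [hv.coL_L, if_pos rfl]
    exact one_ne_zero
  have h3 : hv.Hspan < (⊤ : Submodule ℂ V) := by
    refine lt_of_le_of_ne le_top (fun h => hne3 ?_)
    rw [h]
    exact Submodule.mem_top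
  have hrange : (Set.range fun I : LieIdeal ℂ V => (I : Submodule ℂ V))
      = {⊥, Submodule.span ℂ {hv.H 0 0}, hv.Hspan, ⊤} := by
    apply Set.Subset.antisymm
    · rintro _ ⟨I, rfl⟩
      simp only [Set.mem_insert_iff, Set.mem_singleton_iff]
      rcases hv.classify hΓ I with h | h | h | h
      · exact Or.inl h
      · exact Or.inr (Or.inl h)
      · exact Or.inr (Or.inr (Or.inl h))
      · exact Or.inr (Or.inr (Or.inr h))
    · rintro S hS
      simp only [Set.mem_insert_iff, Set.mem_singleton_iff] at hS
      rcases hS with rfl | rfl | rfl | rfl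
      · rw [Set.mem_range]
        refine ⟨(⊥ : LieIdeal ℂ V), ?_⟩
        exact LieSubmodule.bot_toSubmodule (R := ℂ) (L := V) (M := V)
      · rw [Set.mem_range]
        exact ⟨J1, rfl⟩
      · rw [Set.mem_range]
        exact ⟨J2, rfl⟩
      · rw [Set.mem_range]
        refine ⟨(⊤ : LieIdeal ℂ V), ?_⟩
        exact LieSubmodule.top_toSubmodule (R := ℂ) (L := V) (M := V)
  refine ⟨hrange, h1, h2, h3, fun I hne => ?_⟩
  rcases hv.classify hΓ I with h | h | h | h
  · rw [h]; exact bot_le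
  · rw [h]; exact hle12
  · rw [h]
  · exact absurd h hne
end

section
/- For every derivation D of HV there exists an element u ∈ HV such that (D − ad_u)(L_{0,0}) = 0. -/
/-- For every derivation `D` of `HV` there is `u ∈ HV` with
`(D - ad_u)(L_{0,0}) = 0`. -/
theorem HV_derivation_kills_L00 (Γ : AddSubgroup ℂ) (hΓ : Γ ≠ ⊥)
    {V : Type*} [LieRing V] [LieAlgebra ℂ V] (hv : HVData Γ V)
    (D : LieDerivation ℂ V V) :
    ∃ u : V, D (hv.L 0 0) - ⁅u, hv.L 0 0⁆ = 0 := by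
  classical
  set T := LieAlgebra.ad ℂ V (hv.L 0 0) with hT
  have hTL : ∀ (α : Γ) (i : ℕ), T (hv.L α i)
      = ((α : ℂ)) • hv.L α i + (i : ℂ) • hv.L α (i - 1) := by
    intro α i
    rw [hT, LieAlgebra.ad_apply, hv.lie_L_L]
    simp
  have hTH : ∀ (α : Γ) (i : ℕ), T (hv.H α i)
      = ((α : ℂ)) • hv.H α i + (i : ℂ) • hv.H α (i - 1) := by
    intro α i
    rw [hT, LieAlgebra.ad_apply, hv.lie_L_H]
    simp
  have keyL : ∀ (α : Γ) (i : ℕ), hv.L α i ∈ LinearMap.range T := by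
    intro α i
    by_cases hα : (α : ℂ) = 0
    · have hα0 : α = 0 := Subtype.ext hα
      subst hα0
      refine ⟨(((i : ℂ) + 1))⁻¹ • hv.L 0 (i + 1), ?_⟩
      rw [map_smul, hTL]
      have h1 : ((i : ℂ) + 1) ≠ 0 := Nat.cast_add_one_ne_zero i
      simp only [ZeroMemClass.coe_zero, zero_smul, zero_add, Nat.add_sub_cancel]
      push_cast
      rw [smul_smul, inv_mul_cancel₀ h1, one_smul]
    · induction i with
      | zero =>
        refine ⟨((α : ℂ))⁻¹ • hv.L α 0, ?_⟩
        rw [map_smul, hTL]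
        simp [smul_smul, inv_mul_cancel₀ hα]
      | succ i ih =>
        have h1 : T (hv.L α (i + 1)) ∈ LinearMap.range T := ⟨_, rfl⟩
        have heq : hv.L α (i + 1)
            = ((α : ℂ))⁻¹ • (T (hv.L α (i + 1)) - ((i : ℂ) + 1) • hv.L α i) := by
          rw [hTL]
          simp only [Nat.add_sub_cancel]
          push_cast
          rw [add_sub_cancel_right, smul_smul, inv_mul_cancel₀ hα, one_smul]
        rw [heq]
        exact Submodule.smul_mem _ _
          (Submodule.sub_mem _ h1 (Submodule.smul_mem _ _ ih))
  have keyH : ∀ (α : Γ) (i : ℕ), hv.H α i ∈ LinearMap.range T := by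
    intro α i
    by_cases hα : (α : ℂ) = 0
    · have hα0 : α = 0 := Subtype.ext hα
      subst hα0
      refine ⟨(((i : ℂ) + 1))⁻¹ • hv.H 0 (i + 1), ?_⟩
      rw [map_smul, hTH]
      have h1 : ((i : ℂ) + 1) ≠ 0 := Nat.cast_add_one_ne_zero i
      simp only [ZeroMemClass.coe_zero, zero_smul, zero_add, Nat.add_sub_cancel]
      push_cast
      rw [smul_smul, inv_mul_cancel₀ h1, one_smul]
    · induction i with
      | zero =>
        refine ⟨((α : ℂ))⁻¹ • hv.H α 0, ?_⟩
        rw [map_smul, hTH]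
        simp [smul_smul, inv_mul_cancel₀ hα]
      | succ i ih =>
        have h1 : T (hv.H α (i + 1)) ∈ LinearMap.range T := ⟨_, rfl⟩
        have heq : hv.H α (i + 1)
            = ((α : ℂ))⁻¹ • (T (hv.H α (i + 1)) - ((i : ℂ) + 1) • hv.H α i) := by
          rw [hTH]
          simp only [Nat.add_sub_cancel]
          push_cast
          rw [add_sub_cancel_right, smul_smul, inv_mul_cancel₀ hα, one_smul]
        rw [heq]
        exact Submodule.smul_mem _ _
          (Submodule.sub_mem _ h1 (Submodule.smul_mem _ _ ih))
  have hrange : LinearMap.range T = ⊤ := by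
    rw [eq_top_iff, ← hv.basis.span_eq]
    rw [Submodule.span_le]
    rintro x ⟨s, rfl⟩
    rcases s with ⟨α, i⟩ | ⟨α, i⟩
    · rw [hv.basis_inl]; exact keyL α i
    · rw [hv.basis_inr]; exact keyH α i
  have : D (hv.L 0 0) ∈ LinearMap.range T := by rw [hrange]; trivial
  obtain ⟨u, hu⟩ := this
  refine ⟨-u, ?_⟩
  rw [← hu, hT, LieAlgebra.ad_apply, neg_lie, ← lie_skew]
  simp
end

section
/- Let γ ∈ Γ with γ ≠ 0 and let D be a derivation of HV of degree γ such that D(L_{0,0}) = 0. Then D = 0. (In the proof one uses that HV is generated as a Lie algebra by {L_{α,0}, L_{0,1}, H_{α,0} | α ∈ Γ}.) -/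
namespace HVData

variable {Γ : AddSubgroup ℂ} {V : Type*} [LieRing V] [LieAlgebra ℂ V]

noncomputable def Top (hv : HVData Γ V) (β : Γ) : Module.End ℂ V :=
  LieAlgebra.ad ℂ V (hv.L 0 0) - (β : ℂ) • LinearMap.id

lemma Top_apply (hv : HVData Γ V) (β : Γ) (y : V) :
    hv.Top β y = ⁅hv.L 0 0, y⁆ - (β : ℂ) • y := rfl

lemma Top_L (hv : HVData Γ V) (β : Γ) (j : ℕ) :
    hv.Top β (hv.L β j) = (j : ℂ) • hv.L β (j - 1) := by
  rw [Top_apply, hv.lie_L_L]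
  simp

lemma Top_H (hv : HVData Γ V) (β : Γ) (j : ℕ) :
    hv.Top β (hv.H β j) = (j : ℂ) • hv.H β (j - 1) := by
  rw [Top_apply, hv.lie_L_H]
  simp

lemma Top_pow_L (hv : HVData Γ V) (β : Γ) (j : ℕ) :
    (hv.Top β ^ (j + 1)) (hv.L β j) = 0 := by
  induction j with
  | zero => simp [pow_one, Top_L]
  | succ k ih =>
      rw [pow_succ, Module.End.mul_apply, Top_L, map_smul]
      simp only [Nat.add_sub_cancel]
      rw [ih, smul_zero]

lemma Top_pow_H (hv : HVData Γ V) (β : Γ) (j : ℕ) :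
    (hv.Top β ^ (j + 1)) (hv.H β j) = 0 := by
  induction j with
  | zero => simp [pow_one, Top_H]
  | succ k ih =>
      rw [pow_succ, Module.End.mul_apply, Top_H, map_smul]
      simp only [Nat.add_sub_cancel]
      rw [ih, smul_zero]

lemma exists_pow_Top_zero (hv : HVData Γ V) (β : Γ) {y : V} (hy : y ∈ hv.grade β) :
    ∃ n, (hv.Top β ^ n) y = 0 := by
  induction hy using Submodule.span_induction with
  | mem x hx =>
      rcases hx with ⟨j, rfl⟩ | ⟨j, rfl⟩
      · exact ⟨j + 1, hv.Top_pow_L β j⟩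
      · exact ⟨j + 1, hv.Top_pow_H β j⟩
  | zero => exact ⟨0, by simp⟩
  | add x y hx hy ihx ihy =>
      obtain ⟨n, hn⟩ := ihx
      obtain ⟨m, hm⟩ := ihy
      refine ⟨n + m, ?_⟩
      have h1 : (hv.Top β ^ (n + m)) x = 0 := by
        rw [add_comm, pow_add, Module.End.mul_apply, hn, map_zero]
      have h2 : (hv.Top β ^ (n + m)) y = 0 := by
        rw [pow_add, Module.End.mul_apply, hm, map_zero]
      rw [map_add, h1, h2, add_zero]
  | smul a x hx ihx =>
      obtain ⟨n, hn⟩ := ihx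
      exact ⟨n, by rw [map_smul, hn, smul_zero]⟩

lemma eq_zero_of_eigen (hv : HVData Γ V) (β : Γ) {c : ℂ} (hc : c ≠ 0) {y : V}
    (hy : y ∈ hv.grade β) (heig : hv.Top β y = c • y) : y = 0 := by
  obtain ⟨n, hn⟩ := hv.exists_pow_Top_zero β hy
  have hpow : ∀ m, (hv.Top β ^ m) y = c ^ m • y := by
    intro m
    induction m with
    | zero => simp
    | succ k ih =>
        rw [pow_succ', Module.End.mul_apply, ih, map_smul, heig, smul_smul, ← pow_succ]
  rw [hpow n] at hn
  exact (smul_eq_zero.mp hn).resolve_left (pow_ne_zero _ hc)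

end HVData

/-- A derivation of `HV` of nonzero degree `γ` vanishing on `L_{0,0}` is zero. -/
theorem HV_derivation_nonzero_degree_vanishes (Γ : AddSubgroup ℂ) (hΓ : Γ ≠ ⊥)
    {V : Type*} [LieRing V] [LieAlgebra ℂ V] (hv : HVData Γ V)
    (γ : Γ) (hγ : γ ≠ 0) (D : LieDerivation ℂ V V)
    (hdeg : hv.HasDegree D γ) (h0 : D (hv.L 0 0) = 0) :
    D = 0 := by
  have hγℂ : (γ : ℂ) ≠ 0 := by
    simpa using fun h => hγ (Subtype.ext h)
  have hc : -(γ : ℂ) ≠ 0 := neg_ne_zero.mpr hγℂ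
  have memL : ∀ (α : Γ) (i : ℕ), hv.L α i ∈ hv.grade α := fun α i =>
    Submodule.subset_span (Or.inl ⟨i, rfl⟩)
  have memH : ∀ (α : Γ) (i : ℕ), hv.H α i ∈ hv.grade α := fun α i =>
    Submodule.subset_span (Or.inr ⟨i, rfl⟩)
  have step : ∀ (α : Γ) (x : V), x ∈ hv.grade α →
      ⁅hv.L 0 0, D x⁆ = (α : ℂ) • D x → D x = 0 := by
    intro α x hx heq
    refine hv.eq_zero_of_eigen (α + γ) hc (hdeg α x hx) ?_
    rw [hv.Top_apply, heq]
    push_cast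
    module
  have stepL : ∀ (i : ℕ) (α : Γ), (i : ℂ) • D (hv.L α (i - 1)) = 0 →
      D (hv.L α i) = 0 := by
    intro i α hz
    refine step α _ (memL α i) ?_
    have hbr : ⁅hv.L 0 0, hv.L α i⁆ = (α : ℂ) • hv.L α i + (i : ℂ) • hv.L α (i - 1) := by
      rw [hv.lie_L_L]; simp
    have h1 : D ⁅hv.L 0 0, hv.L α i⁆ = (α : ℂ) • D (hv.L α i) := by
      rw [hbr, map_add, map_smul, map_smul, hz, add_zero]
    have h2 := D.apply_lie_eq_add (hv.L 0 0) (hv.L α i)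
    rw [h0, zero_lie, add_zero] at h2
    rw [← h2, h1]
  have stepH : ∀ (i : ℕ) (α : Γ), (i : ℂ) • D (hv.H α (i - 1)) = 0 →
      D (hv.H α i) = 0 := by
    intro i α hz
    refine step α _ (memH α i) ?_
    have hbr : ⁅hv.L 0 0, hv.H α i⁆ = (α : ℂ) • hv.H α i + (i : ℂ) • hv.H α (i - 1) := by
      rw [hv.lie_L_H]; simp
    have h1 : D ⁅hv.L 0 0, hv.H α i⁆ = (α : ℂ) • D (hv.H α i) := by
      rw [hbr, map_add, map_smul, map_smul, hz, add_zero]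
    have h2 := D.apply_lie_eq_add (hv.L 0 0) (hv.H α i)
    rw [h0, zero_lie, add_zero] at h2
    rw [← h2, h1]
  have key : ∀ i : ℕ, ∀ α : Γ, D (hv.L α i) = 0 ∧ D (hv.H α i) = 0 := by
    intro i
    induction i with
    | zero =>
        intro α
        exact ⟨stepL 0 α (by simp), stepH 0 α (by simp)⟩
    | succ k ih =>
        intro α
        refine ⟨stepL (k + 1) α ?_, stepH (k + 1) α ?_⟩
        · rw [Nat.add_sub_cancel, (ih α).1, smul_zero]
        · rw [Nat.add_sub_cancel, (ih α).2, smul_zero]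
  have hlin : (D : V →ₗ[ℂ] V) = 0 := by
    refine hv.basis.ext ?_
    rintro (⟨α, i⟩ | ⟨α, i⟩)
    · rw [hv.basis_inl]
      simpa using (key i α).1
    · rw [hv.basis_inr]
      simpa using (key i α).2
  ext x
  have := LinearMap.congr_fun hlin x
  simpa using this
end

section
/- Assume 1 ∈ Γ. Let D be a derivation of HV of degree 0 with D(L_{0,0}) = 0. Then there exist an additive group homomorphism b: Γ → ℂ and constants d₁, f₀ ∈ ℂ such that for all α ∈ Γ: (i) D(L_{α,0}) = b(α) L_{α,0} + α d₁ H_{α,0}, and (ii) D(H_{α,0}) = (b(α) + f₀) H_{α,0}. -/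
namespace HVData

variable {Γ : AddSubgroup ℂ} {V : Type*} [LieRing V] [LieAlgebra ℂ V]

open Classical in
lemma repr_L (hv : HVData Γ V) (α β : Γ) (m n : ℕ) :
    hv.basis.repr (hv.L α m) (Sum.inl (β, n)) = if α = β ∧ m = n then 1 else 0 := by
  rw [← hv.basis_inl α m, hv.basis.repr_self, Finsupp.single_apply]
  simp [Prod.ext_iff]

lemma repr_L_inr (hv : HVData Γ V) (α β : Γ) (m n : ℕ) :
    hv.basis.repr (hv.L α m) (Sum.inr (β, n)) = 0 := by
  rw [← hv.basis_inl α m, hv.basis.repr_self, Finsupp.single_apply]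
  simp

open Classical in
lemma repr_H (hv : HVData Γ V) (α β : Γ) (m n : ℕ) :
    hv.basis.repr (hv.H α m) (Sum.inr (β, n)) = if α = β ∧ m = n then 1 else 0 := by
  rw [← hv.basis_inr α m, hv.basis.repr_self, Finsupp.single_apply]
  simp [Prod.ext_iff]

lemma repr_H_inl (hv : HVData Γ V) (α β : Γ) (m n : ℕ) :
    hv.basis.repr (hv.H α m) (Sum.inl (β, n)) = 0 := by
  rw [← hv.basis_inr α m, hv.basis.repr_self, Finsupp.single_apply]
  simp

lemma lie_H_L (hv : HVData Γ V) (α β : Γ) (i j : ℕ) :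
    ⁅hv.H α i, hv.L β j⁆ = -((α : ℂ) • hv.H (α + β) (j + i) + (i : ℂ) • hv.H (α + β) (j + i - 1)) := by
  rw [← lie_skew, hv.lie_L_H, add_comm β α]

lemma sum_eval (w : ℕ →₀ ℂ) (j : ℕ) :
    (w.sum fun i a => a * i * (if i - 1 = j then 1 else 0)) = w (j+1) * (j+1) := by
  classical
  rw [Finsupp.sum, Finset.sum_eq_single (j+1)]
  · simp
  · intro b _ hb
    match b with
    | 0 => simp
    | (m+1) =>
      rw [Nat.add_sub_cancel, if_neg (by omega), mul_zero]
  · intro h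
    rw [Finsupp.notMem_support_iff.mp h, zero_mul, zero_mul]

lemma structure_lemma (hv : HVData Γ V) (α : Γ) (x : V) (hx : x ∈ hv.grade α) (u v : ℂ)
    (h : ⁅hv.L 0 0, x⁆ = (α:ℂ) • x + (u • hv.L α 0 + v • hv.H α 0)) :
    ∃ p q : ℂ, x = p • hv.L α 0 + u • hv.L α 1 + (q • hv.H α 0 + v • hv.H α 1) := by
  classical
  rw [grade, Submodule.span_union] at hx
  obtain ⟨y, hy, z, hz, rfl⟩ := Submodule.mem_sup.mp hx
  rw [Finsupp.mem_span_range_iff_exists_finsupp] at hy hz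
  obtain ⟨p, rfl⟩ := hy
  obtain ⟨q, rfl⟩ := hz
  set T := LieAlgebra.ad ℂ V (hv.L 0 0) with hT
  have hbrL : ∀ i : ℕ, ⁅hv.L 0 0, hv.L α i⁆ = (α:ℂ) • hv.L α i + (i:ℂ) • hv.L α (i-1) := by
    intro i; rw [hv.lie_L_L]; simp
  have hbrH : ∀ i : ℕ, ⁅hv.L 0 0, hv.H α i⁆ = (α:ℂ) • hv.H α i + (i:ℂ) • hv.H α (i-1) := by
    intro i; rw [hv.lie_L_H]; simp
  have keyL : ∀ (w : ℕ →₀ ℂ), T (w.sum fun i a => a • hv.L α i)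
      = (α:ℂ) • (w.sum fun i a => a • hv.L α i) + w.sum fun i a => (a * i) • hv.L α (i-1) := by
    intro w
    rw [map_finsuppSum, Finsupp.smul_sum, ← Finsupp.sum_add]
    refine Finsupp.sum_congr fun i _ => ?_
    rw [map_smul, hT, LieAlgebra.ad_apply, hbrL i]
    module
  have keyH : ∀ (w : ℕ →₀ ℂ), T (w.sum fun i a => a • hv.H α i)
      = (α:ℂ) • (w.sum fun i a => a • hv.H α i) + w.sum fun i a => (a * i) • hv.H α (i-1) := by
    intro w
    rw [map_finsuppSum, Finsupp.smul_sum, ← Finsupp.sum_add]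
    refine Finsupp.sum_congr fun i _ => ?_
    rw [map_smul, hT, LieAlgebra.ad_apply, hbrH i]
    module
  have hTyz : T ((p.sum fun i a => a • hv.L α i) + (q.sum fun i a => a • hv.H α i))
      = ⁅hv.L 0 0, (p.sum fun i a => a • hv.L α i) + (q.sum fun i a => a • hv.H α i)⁆ := by
    rw [hT, LieAlgebra.ad_apply]
  have hsum : (p.sum fun i a => (a * i) • hv.L α (i-1)) + (q.sum fun i a => (a * i) • hv.H α (i-1))
      = u • hv.L α 0 + v • hv.H α 0 := by
    have h2 : (α:ℂ) • ((p.sum fun i a => a • hv.L α i) + (q.sum fun i a => a • hv.H α i))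
        + ((p.sum fun i a => (a * i) • hv.L α (i-1)) + (q.sum fun i a => (a * i) • hv.H α (i-1)))
        = (α:ℂ) • ((p.sum fun i a => a • hv.L α i) + (q.sum fun i a => a • hv.H α i))
        + (u • hv.L α 0 + v • hv.H α 0) := by
      rw [← h, ← hTyz, map_add, keyL, keyH]
      module
    exact add_left_cancel h2
  have hcoefL : ∀ j : ℕ, p (j+1) * (((j+1 : ℕ)) : ℂ) = u * (if 0 = j then 1 else 0) := by
    intro j
    have e1 := congrArg (fun w => hv.basis.repr w (Sum.inl (α, j))) hsum
    simp only [map_add, map_finsuppSum, map_smul, Finsupp.add_apply, Finsupp.sum_apply,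
      Finsupp.smul_apply, hv.repr_L, hv.repr_H_inl, smul_eq_mul, mul_zero, (show ∀ (w : ℕ →₀ ℂ), (w.sum fun _ _ => (0:ℂ)) = 0 from fun w => Finset.sum_const_zero),
      add_zero, zero_add, true_and, eq_self_iff_true] at e1
    rw [sum_eval] at e1
    push_cast at e1 ⊢
    exact e1
  have hcoefH : ∀ j : ℕ, q (j+1) * (((j+1 : ℕ)) : ℂ) = v * (if 0 = j then 1 else 0) := by
    intro j
    have e1 := congrArg (fun w => hv.basis.repr w (Sum.inr (α, j))) hsum
    simp only [map_add, map_finsuppSum, map_smul, Finsupp.add_apply, Finsupp.sum_apply,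
      Finsupp.smul_apply, hv.repr_H, hv.repr_L_inr, smul_eq_mul, mul_zero, (show ∀ (w : ℕ →₀ ℂ), (w.sum fun _ _ => (0:ℂ)) = 0 from fun w => Finset.sum_const_zero),
      add_zero, zero_add, true_and, eq_self_iff_true] at e1
    rw [sum_eval] at e1
    push_cast at e1 ⊢
    exact e1
  have hp1 : p 1 = u := by have := hcoefL 0; simpa using this
  have hq1 : q 1 = v := by have := hcoefH 0; simpa using this
  have hp2 : ∀ m : ℕ, p (m+2) = 0 := by
    intro m
    have e := hcoefL (m+1)
    rw [if_neg (by omega), mul_zero] at e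
    exact (mul_eq_zero.mp e).resolve_right (by exact_mod_cast Nat.succ_ne_zero (m+1))
  have hq2 : ∀ m : ℕ, q (m+2) = 0 := by
    intro m
    have e := hcoefH (m+1)
    rw [if_neg (by omega), mul_zero] at e
    exact (mul_eq_zero.mp e).resolve_right (by exact_mod_cast Nat.succ_ne_zero (m+1))
  have hpform : p = Finsupp.single 0 (p 0) + Finsupp.single 1 u := by
    ext i
    match i with
    | 0 => simp
    | 1 => simp [hp1]
    | (m+2) => simp [hp2 m, Finsupp.single_apply]
  have hqform : q = Finsupp.single 0 (q 0) + Finsupp.single 1 v := by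
    ext i
    match i with
    | 0 => simp
    | 1 => simp [hq1]
    | (m+2) => simp [hq2 m, Finsupp.single_apply]
  refine ⟨p 0, q 0, ?_⟩
  conv_lhs => rw [hpform, hqform]
  rw [Finsupp.sum_add_index' (fun i => zero_smul ℂ (hv.L α i)) (fun i b c => add_smul b c _),
    Finsupp.sum_add_index' (fun i => zero_smul ℂ (hv.H α i)) (fun i b c => add_smul b c _)]
  simp [Finsupp.sum_single_index]

end HVData

/-- Assume `1 ∈ Γ`. If `D` is a degree-0 derivation of `HV` with
`D(L_{0,0}) = 0`, then there are an additive homomorphism `b : Γ → ℂ` and constants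
`d₁, f₀ ∈ ℂ` with `D(L_{α,0}) = b(α) L_{α,0} + α d₁ H_{α,0}` and
`D(H_{α,0}) = (b(α) + f₀) H_{α,0}` for all `α ∈ Γ`. -/
theorem HV_degree_zero_derivation_on_L0_H0 (Γ : AddSubgroup ℂ) (hΓ : Γ ≠ ⊥)
    (h1 : (1 : ℂ) ∈ Γ)
    {V : Type*} [LieRing V] [LieAlgebra ℂ V] (hv : HVData Γ V)
    (D : LieDerivation ℂ V V) (hdeg : hv.HasDegree D 0) (h0 : D (hv.L 0 0) = 0) :
    ∃ (b : ↥Γ →+ ℂ) (d₁ f₀ : ℂ), ∀ α : Γ,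
      D (hv.L α 0) = b α • hv.L α 0 + ((α : ℂ) * d₁) • hv.H α 0 ∧
      D (hv.H α 0) = (b α + f₀) • hv.H α 0 := by
  classical
  set one : Γ := ⟨1, h1⟩ with hone
  have memL : ∀ (γ : Γ) (i : ℕ), hv.L γ i ∈ hv.grade γ :=
    fun γ i => Submodule.subset_span (Or.inl ⟨i, rfl⟩)
  have memH : ∀ (γ : Γ) (i : ℕ), hv.H γ i ∈ hv.grade γ :=
    fun γ i => Submodule.subset_span (Or.inr ⟨i, rfl⟩)
  have memD : ∀ (γ : Γ) (x : V), x ∈ hv.grade γ → D x ∈ hv.grade γ := by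
    intro γ x hx
    have := hdeg γ x hx
    rwa [add_zero] at this
  have hL00 : ∀ γ : Γ, ⁅hv.L 0 0, hv.L γ 0⁆ = (γ:ℂ) • hv.L γ 0 := by
    intro γ; rw [hv.lie_L_L]; simp
  have hH00 : ∀ γ : Γ, ⁅hv.L 0 0, hv.H γ 0⁆ = (γ:ℂ) • hv.H γ 0 := by
    intro γ; rw [hv.lie_L_H]; simp
  -- choose coefficients for D (L γ 0)
  have exL : ∀ γ : Γ, ∃ aa cc : ℂ, D (hv.L γ 0) = aa • hv.L γ 0 + cc • hv.H γ 0 := by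
    intro γ
    have hb : ⁅hv.L 0 0, D (hv.L γ 0)⁆
        = (γ:ℂ) • D (hv.L γ 0) + ((0:ℂ) • hv.L γ 0 + (0:ℂ) • hv.H γ 0) := by
      have hlei := D.apply_lie_eq_add (hv.L 0 0) (hv.L γ 0)
      rw [h0, zero_lie, add_zero, hL00, map_smul] at hlei
      rw [← hlei]; module
    obtain ⟨p, q, hpq⟩ := hv.structure_lemma γ _ (memD γ _ (memL γ 0)) 0 0 hb
    exact ⟨p, q, by simpa using hpq⟩
  choose a c ha using exL
  have exH : ∀ γ : Γ, ∃ ee ff : ℂ, D (hv.H γ 0) = ee • hv.L γ 0 + ff • hv.H γ 0 := by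
    intro γ
    have hb : ⁅hv.L 0 0, D (hv.H γ 0)⁆
        = (γ:ℂ) • D (hv.H γ 0) + ((0:ℂ) • hv.L γ 0 + (0:ℂ) • hv.H γ 0) := by
      have hlei := D.apply_lie_eq_add (hv.L 0 0) (hv.H γ 0)
      rw [h0, zero_lie, add_zero, hH00, map_smul] at hlei
      rw [← hlei]; module
    obtain ⟨p, q, hpq⟩ := hv.structure_lemma γ _ (memD γ _ (memH γ 0)) 0 0 hb
    exact ⟨p, q, by simpa using hpq⟩
  choose e f hf using exH
  -- a 0 = 0 and c 0 = 0
  have hz : (0 : V) = a 0 • hv.L 0 0 + c 0 • hv.H 0 0 := by rw [← h0, ha]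
  have a0 : a 0 = 0 := by
    have e1 := congrArg (fun w => hv.basis.repr w (Sum.inl ((0:Γ), 0))) hz
    simp [hv.repr_L, hv.repr_H_inl] at e1
    linear_combination -e1
  have c0 : c 0 = 0 := by
    have e1 := congrArg (fun w => hv.basis.repr w (Sum.inr ((0:Γ), 0))) hz
    simp [hv.repr_H, hv.repr_L_inr] at e1
    linear_combination -e1
  -- relation from ⁅L α 0, L β 0⁆
  have relLL : ∀ α β : Γ, ((β:ℂ) - α) • (a (α+β) • hv.L (α+β) 0 + c (α+β) • hv.H (α+β) 0)
      = ⁅hv.L α 0, a β • hv.L β 0 + c β • hv.H β 0⁆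
        + ⁅a α • hv.L α 0 + c α • hv.H α 0, hv.L β 0⁆ := by
    intro α β
    have hbr : ⁅hv.L α 0, hv.L β 0⁆ = ((β:ℂ) - α) • hv.L (α+β) 0 := by
      rw [hv.lie_L_L]; simp
    have hlei := D.apply_lie_eq_add (hv.L α 0) (hv.L β 0)
    rw [hbr, map_smul, ha, ha, ha] at hlei
    exact hlei
  have hE1 : ∀ α β : Γ, ((β:ℂ) - α) * a (α+β) = ((β:ℂ) - α) * a α + ((β:ℂ) - α) * a β := by
    intro α β
    have e1 := congrArg (fun w => hv.basis.repr w (Sum.inl (α+β, 0))) (relLL α β)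
    simp [hv.repr_L, hv.repr_H, hv.repr_L_inr, hv.repr_H_inl, hv.lie_L_L, hv.lie_L_H,
      hv.lie_H_H, hv.lie_H_L, ha] at e1
    linear_combination e1
  have hE2 : ∀ α β : Γ, ((β:ℂ) - α) * c (α+β) = (β:ℂ) * c β - (α:ℂ) * c α := by
    intro α β
    have e1 := congrArg (fun w => hv.basis.repr w (Sum.inr (α+β, 0))) (relLL α β)
    simp [hv.repr_L, hv.repr_H, hv.repr_L_inr, hv.repr_H_inl, hv.lie_L_L, hv.lie_L_H,
      hv.lie_H_H, hv.lie_H_L, ha] at e1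
    linear_combination e1
  -- relation from ⁅L α 0, H β 0⁆
  have relLH : ∀ α β : Γ, (β:ℂ) • (e (α+β) • hv.L (α+β) 0 + f (α+β) • hv.H (α+β) 0)
      = ⁅hv.L α 0, e β • hv.L β 0 + f β • hv.H β 0⁆
        + ⁅a α • hv.L α 0 + c α • hv.H α 0, hv.H β 0⁆ := by
    intro α β
    have hbr : ⁅hv.L α 0, hv.H β 0⁆ = (β:ℂ) • hv.H (α+β) 0 := by
      rw [hv.lie_L_H]; simp
    have hlei := D.apply_lie_eq_add (hv.L α 0) (hv.H β 0)
    rw [hbr, map_smul, ha, hf, hf] at hlei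
    exact hlei
  have hE3 : ∀ α β : Γ, (β:ℂ) * e (α+β) = ((β:ℂ) - α) * e β := by
    intro α β
    have e1 := congrArg (fun w => hv.basis.repr w (Sum.inl (α+β, 0))) (relLH α β)
    simp [hv.repr_L, hv.repr_H, hv.repr_L_inr, hv.repr_H_inl, hv.lie_L_L, hv.lie_L_H,
      hv.lie_H_H, hv.lie_H_L, hf] at e1
    linear_combination e1
  have hE4 : ∀ α β : Γ, (β:ℂ) * f (α+β) = (β:ℂ) * a α + (β:ℂ) * f β := by
    intro α β
    have e1 := congrArg (fun w => hv.basis.repr w (Sum.inr (α+β, 0))) (relLH α β)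
    simp [hv.repr_L, hv.repr_H, hv.repr_L_inr, hv.repr_H_inl, hv.lie_L_L, hv.lie_L_H,
      hv.lie_H_H, hv.lie_H_L, hf] at e1
    linear_combination e1
  -- relation from ⁅H α 0, H β 0⁆
  have relHH : ∀ α β : Γ, (0:V)
      = ⁅hv.H α 0, e β • hv.L β 0 + f β • hv.H β 0⁆
        + ⁅e α • hv.L α 0 + f α • hv.H α 0, hv.H β 0⁆ := by
    intro α β
    have hlei := D.apply_lie_eq_add (hv.H α 0) (hv.H β 0)
    rw [hv.lie_H_H, map_zero, hf, hf] at hlei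
    exact hlei
  have hE5 : ∀ α β : Γ, (β:ℂ) * e α = (α:ℂ) * e β := by
    intro α β
    have e1 := congrArg (fun w => hv.basis.repr w (Sum.inr (α+β, 0))) (relHH α β)
    simp [hv.repr_L, hv.repr_H, hv.repr_L_inr, hv.repr_H_inl, hv.lie_L_L, hv.lie_L_H,
      hv.lie_H_H, hv.lie_H_L, hf] at e1
    linear_combination -e1
  have hcoe : ((one : Γ) : ℂ) = 1 := rfl
  -- the doubling identity via D (L α 1)
  have hdouble : ∀ α : Γ, a (α+α) = a α + a α := by
    intro α
    have hb1 : ⁅hv.L 0 0, D (hv.L α 1)⁆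
        = (α:ℂ) • D (hv.L α 1) + (a α • hv.L α 0 + c α • hv.H α 0) := by
      have hlei := D.apply_lie_eq_add (hv.L 0 0) (hv.L α 1)
      have hbr : ⁅hv.L 0 0, hv.L α 1⁆ = (α:ℂ) • hv.L α 1 + hv.L α 0 := by
        rw [hv.lie_L_L]; simp
      rw [h0, zero_lie, add_zero, hbr, map_add, map_smul, ha] at hlei
      exact hlei.symm
    obtain ⟨p, q, hD1⟩ := hv.structure_lemma α _ (memD α _ (memL α 1)) (a α) (c α) hb1
    have hbr2 : ⁅hv.L α 0, hv.L α 1⁆ = hv.L (α+α) 0 := by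
      rw [hv.lie_L_L]; simp
    have hlei := D.apply_lie_eq_add (hv.L α 0) (hv.L α 1)
    rw [hbr2, ha (α+α), ha α, hD1] at hlei
    have e1 := congrArg (fun w => hv.basis.repr w (Sum.inl (α+α, 0))) hlei
    simp [hv.repr_L, hv.repr_H, hv.repr_L_inr, hv.repr_H_inl, hv.lie_L_L, hv.lie_L_H,
      hv.lie_H_H, hv.lie_H_L] at e1
    linear_combination e1
  have hadd : ∀ α β : Γ, a (α+β) = a α + a β := by
    intro α β
    by_cases hab : α = β
    · subst hab; exact hdouble α
    · have hne : (β:ℂ) - α ≠ 0 := sub_ne_zero.mpr fun hc => hab (Subtype.ext hc.symm)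
      exact mul_left_cancel₀ hne (by linear_combination hE1 α β)
  -- e vanishes
  have he2 : e (one+one) = 0 := by
    have h3 := hE3 one one
    rw [hcoe] at h3
    linear_combination h3
  have heone : e one = 0 := by
    have h5 := hE5 one (one+one)
    rw [hcoe, he2] at h5
    have h2 : ((one+one : Γ) : ℂ) = 2 := by push_cast [hcoe]; ring
    rw [h2] at h5
    linear_combination h5/2
  have hezero : ∀ γ : Γ, e γ = 0 := by
    intro γ
    have h5 := hE5 γ one
    rw [hcoe, heone, one_mul, mul_zero] at h5
    exact h5
  -- c is linear
  have codd : ∀ β : Γ, c (-β) = - c β := by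
    intro β
    by_cases hb0 : (β:ℂ) = 0
    · have hb : β = 0 := Subtype.ext hb0
      rw [hb, neg_zero, c0, neg_zero]
    · have h2 := hE2 β (-β)
      rw [show β + -β = (0:Γ) from by abel, c0, mul_zero] at h2
      push_cast at h2
      have h3 : (β:ℂ) * (c (-β) + c β) = 0 := by linear_combination h2
      rcases mul_eq_zero.mp h3 with h | h
      · exact absurd h hb0
      · linear_combination h
  have hkey : ∀ α β : Γ, ((α:ℂ)+β) * c α = (α:ℂ) * c (α+β) := by
    intro α β
    have h2 := hE2 α β
    have h3 := hE2 (α+β) (-β)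
    rw [show α + β + -β = α from by abel, codd β] at h3
    push_cast at h2 h3
    linear_combination (h2 - h3)/2
  have clin : ∀ γ : Γ, c γ = (γ:ℂ) * c one := by
    intro γ
    have hk := hkey one (γ - one)
    rw [show one + (γ - one) = γ from by abel] at hk
    push_cast [hcoe] at hk
    linear_combination -hk
  -- f is determined
  have aneg : ∀ γ : Γ, a (-γ) = - a γ := by
    intro γ
    have h := hadd γ (-γ)
    rw [show γ + -γ = (0:Γ) from by abel, a0] at h
    linear_combination -h
  have hfa : ∀ γ : Γ, f γ = a γ + f 0 := by
    intro γ
    have h4 := hE4 (γ - one) one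
    rw [show γ - one + one = γ from by abel, hcoe] at h4
    have h4' := hE4 (-one) one
    rw [show -one + one = (0:Γ) from by abel, hcoe, aneg one] at h4'
    have hga : a (γ - one) = a γ - a one := by
      have h := hadd (γ - one) one
      rw [show γ - one + one = γ from by abel] at h
      linear_combination -h
    rw [hga] at h4
    linear_combination h4 - h4'
  refine ⟨AddMonoidHom.mk' a hadd, c one, f 0, fun α => ⟨?_, ?_⟩⟩
  · simp only [AddMonoidHom.mk'_apply]
    rw [ha α, ← clin α]
  · simp only [AddMonoidHom.mk'_apply]
    rw [hf α, hezero α, hfa α, zero_smul, zero_add]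
end

section
/- The space (Der HV)₀ of derivations of HV of degree 0 decomposes as the direct sum (Der HV)₀ = (ad HV)₀ ⊕ {D_φ : φ ∈ Hom_ℤ(Γ,ℂ)} ⊕ ℂD₁ ⊕ ℂD₂, where (ad HV)₀ = {ad_u : u ∈ HV₀}: every degree-0 derivation of HV is uniquely the sum of an inner derivation ad_u with u ∈ HV₀, a derivation D_φ, and a linear combination c₁D₁ + c₂D₂. -/
namespace HVData

variable {Γ : AddSubgroup ℂ} {V : Type*} [LieRing V] [LieAlgebra ℂ V]

/-- Generic Kronecker-delta bookkeeping lemma used for all bracket coefficient lemmas. -/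
private lemma ite_aux (j m k : ℕ) (A C₁ C₂ : ℂ) (h1 : k + j = m + 1 → C₁ = C₂)
    (h2 : k = 0 → j = 0 → C₁ = 0) :
    A * (if m = k + j then (1:ℂ) else 0) + C₁ * (if m = k + j - 1 then (1:ℂ) else 0) =
      (if j ≤ m then A * (if m - j = k then (1:ℂ) else 0) else 0)
      + (if j ≤ m + 1 then C₂ * (if m + 1 - j = k then (1:ℂ) else 0) else 0) := by
  by_cases hA : k + j = m
  · rw [if_pos (by omega : m = k + j), if_pos (by omega : j ≤ m), if_pos (by omega : m - j = k),
      if_pos (by omega : j ≤ m + 1), if_neg (by omega : ¬ m + 1 - j = k)]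
    by_cases h0 : k + j = 0
    · rw [if_pos (by omega : m = k + j - 1), h2 (by omega) (by omega)]
      ring
    · rw [if_neg (by omega : ¬ m = k + j - 1)]
      ring
  · by_cases hB : k + j = m + 1
    · rw [if_neg (by omega : ¬ m = k + j), if_pos (by omega : m = k + j - 1),
        if_pos (by omega : j ≤ m + 1), if_pos (by omega : m + 1 - j = k),
        h1 hB]
      have e1 : (if j ≤ m then A * (if m - j = k then (1:ℂ) else 0) else 0) = 0 := by
        split_ifs with h h'
        · exact absurd (by omega : k + j = m) hA
        · ring
        · rfl
      rw [e1]; ring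
    · rw [if_neg (by omega : ¬ m = k + j), if_neg (by omega : ¬ m = k + j - 1)]
      have e1 : (if j ≤ m then A * (if m - j = k then (1:ℂ) else 0) else 0) = 0 := by
        split_ifs with h h'
        · exact absurd (by omega : k + j = m) hA
        · ring
        · rfl
      have e2 : (if j ≤ m + 1 then C₂ * (if m + 1 - j = k then (1:ℂ) else 0) else 0) = 0 := by
        split_ifs with h h'
        · exact absurd (by omega : k + j = m + 1) hB
        · ring
        · rfl
      rw [e1, e2]; ring

noncomputable def cf (hv : HVData Γ V) (x : V) (s : (↥Γ × ℕ) ⊕ (↥Γ × ℕ)) : ℂ :=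
  hv.basis.repr x s

variable (hv : HVData Γ V)

@[simp] lemma cf_add (x y : V) (s) : hv.cf (x + y) s = hv.cf x s + hv.cf y s := by
  simp [cf]

@[simp] lemma cf_smul (c : ℂ) (x : V) (s) : hv.cf (c • x) s = c * hv.cf x s := by
  simp [cf]

@[simp] lemma cf_zero (s) : hv.cf 0 s = 0 := by simp [cf]

@[simp] lemma cf_neg (x : V) (s) : hv.cf (-x) s = - hv.cf x s := by simp [cf]

@[simp] lemma cf_sub (x y : V) (s) : hv.cf (x - y) s = hv.cf x s - hv.cf y s := by
  simp [cf]

lemma cf_L (α : Γ) (i : ℕ) (s) :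
    hv.cf (hv.L α i) s = if s = Sum.inl (α, i) then 1 else 0 := by
  rw [cf, ← hv.basis_inl, hv.basis.repr_self, Finsupp.single_apply]
  simp [eq_comm]

lemma cf_H (α : Γ) (i : ℕ) (s) :
    hv.cf (hv.H α i) s = if s = Sum.inr (α, i) then 1 else 0 := by
  rw [cf, ← hv.basis_inr, hv.basis.repr_self, Finsupp.single_apply]
  simp [eq_comm]

lemma ext_cf {x y : V} (h : ∀ s, hv.cf x s = hv.cf y s) : x = y := by
  apply hv.basis.repr.injective
  ext s
  exact h s

/-- Bracket with `L β j` on the right: `L`-coefficients. -/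
lemma cf_lie_L_inl (y : V) (β : Γ) (j : ℕ) (γ : Γ) (m : ℕ) :
    hv.cf ⁅y, hv.L β j⁆ (Sum.inl (γ, m)) =
      (if j ≤ m then (2*(β:ℂ) - γ) * hv.cf y (Sum.inl (γ - β, m - j)) else 0)
      + (if j ≤ m + 1 then (2*(j:ℂ) - m - 1) * hv.cf y (Sum.inl (γ - β, m + 1 - j)) else 0) := by
  have hy : y ∈ Submodule.span ℂ (Set.range hv.basis) := by
    rw [hv.basis.span_eq]; trivial
  induction hy using Submodule.span_induction with
  | mem x hx =>
    obtain ⟨t, rfl⟩ := hx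
    rcases t with ⟨δ, k⟩ | ⟨δ, k⟩
    · rw [hv.basis_inl, hv.lie_L_L]
      by_cases hδ : δ + β = γ
      · have hδ' : δ = γ - β := by rw [← hδ]; abel
        subst hδ'
        have hcast : ((γ - β : Γ) : ℂ) = (γ : ℂ) - β := by push_cast; ring
        have hco : (β:ℂ) - ((γ:ℂ) - β) = 2*(β:ℂ) - γ := by ring
        simp only [cf_add, cf_smul, cf_L, Sum.inl.injEq, Prod.mk.injEq, hδ, true_and, hcast, hco]
        refine ite_aux j m k _ _ _ (fun hB => ?_) (fun hk0 hj0 => ?_)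
        · have : (k : ℂ) + (j : ℂ) = (m : ℂ) + 1 := by
            exact_mod_cast congrArg (Nat.cast : ℕ → ℂ) hB
          linear_combination -this
        · subst hk0; subst hj0; push_cast; ring
      · have hne : ¬ (γ = δ + β) := fun h => hδ h.symm
        have hne2 : ¬ (γ - β = δ) := fun h => hδ (by rw [← h]; abel)
        simp [cf_L, Sum.inl.injEq, Prod.mk.injEq, hne, hne2]
    · rw [hv.basis_inr]
      have hHL : ⁅hv.H δ k, hv.L β j⁆
          = -((δ:ℂ) • hv.H (β + δ) (j + k) + (k:ℂ) • hv.H (β + δ) (j + k - 1)) := by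
        rw [← lie_skew, hv.lie_L_H]
      rw [hHL]
      simp [cf_H]
  | zero => simp
  | add x z hx hz ihx ihz =>
    rw [add_lie]
    simp only [cf_add, ihx, ihz]
    split_ifs <;> ring
  | smul c x hx ih =>
    rw [smul_lie]
    simp only [cf_smul, ih]
    split_ifs <;> ring

/-- Bracket with `L β j` on the right: `H`-coefficients. -/
lemma cf_lie_L_inr (y : V) (β : Γ) (j : ℕ) (γ : Γ) (m : ℕ) :
    hv.cf ⁅y, hv.L β j⁆ (Sum.inr (γ, m)) =
      (if j ≤ m then (-((γ:ℂ) - β)) * hv.cf y (Sum.inr (γ - β, m - j)) else 0)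
      + (if j ≤ m + 1 then (-((m:ℂ) + 1 - j)) * hv.cf y (Sum.inr (γ - β, m + 1 - j)) else 0) := by
  have hy : y ∈ Submodule.span ℂ (Set.range hv.basis) := by
    rw [hv.basis.span_eq]; trivial
  induction hy using Submodule.span_induction with
  | mem x hx =>
    obtain ⟨t, rfl⟩ := hx
    rcases t with ⟨δ, k⟩ | ⟨δ, k⟩
    · rw [hv.basis_inl, hv.lie_L_L]
      simp [cf_L]
    · rw [hv.basis_inr]
      have hHL : ⁅hv.H δ k, hv.L β j⁆
          = (-(δ:ℂ)) • hv.H (β + δ) (j + k) + (-(k:ℂ)) • hv.H (β + δ) (j + k - 1) := by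
        rw [← lie_skew, hv.lie_L_H]
        rw [neg_add]
        simp [neg_smul]
      rw [hHL]
      by_cases hδ : β + δ = γ
      · have hδ' : δ = γ - β := by rw [← hδ]; abel
        subst hδ'
        have hcast : ((γ - β : Γ) : ℂ) = (γ : ℂ) - β := by push_cast; ring
        have hδ2 : γ - β + β = γ := by abel
        have hδ3 : β + (γ - β) = γ := by abel
        simp only [cf_add, cf_smul, cf_H, Sum.inr.injEq, Prod.mk.injEq, hδ3, true_and, hcast]
        have hre : j + k = k + j := by omega
        rw [hre]
        refine ite_aux j m k _ _ _ (fun hB => ?_) (fun hk0 hj0 => ?_)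
        · have : (k : ℂ) + (j : ℂ) = (m : ℂ) + 1 := by
            exact_mod_cast congrArg (Nat.cast : ℕ → ℂ) hB
          linear_combination -this
        · subst hk0; subst hj0; push_cast; ring
      · have hne : ¬ (γ = β + δ) := fun h => hδ h.symm
        have hne2 : ¬ (γ - β = δ) := fun h => hδ (by rw [← h]; abel)
        simp [cf_H, Sum.inr.injEq, Prod.mk.injEq, hne, hne2]
  | zero => simp
  | add x z hx hz ihx ihz =>
    rw [add_lie]
    simp only [cf_add, ihx, ihz]
    split_ifs <;> ring
  | smul c x hx ih =>
    rw [smul_lie]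
    simp only [cf_smul, ih]
    split_ifs <;> ring

/-- Bracket with `H β j` on the right: `H`-coefficients. -/
lemma cf_lie_H_inr (y : V) (β : Γ) (j : ℕ) (γ : Γ) (m : ℕ) :
    hv.cf ⁅y, hv.H β j⁆ (Sum.inr (γ, m)) =
      (if j ≤ m then (β:ℂ) * hv.cf y (Sum.inl (γ - β, m - j)) else 0)
      + (if j ≤ m + 1 then (j:ℂ) * hv.cf y (Sum.inl (γ - β, m + 1 - j)) else 0) := by
  have hy : y ∈ Submodule.span ℂ (Set.range hv.basis) := by
    rw [hv.basis.span_eq]; trivial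
  induction hy using Submodule.span_induction with
  | mem x hx =>
    obtain ⟨t, rfl⟩ := hx
    rcases t with ⟨δ, k⟩ | ⟨δ, k⟩
    · rw [hv.basis_inl, hv.lie_L_H]
      by_cases hδ : δ + β = γ
      · have hδ' : δ = γ - β := by rw [← hδ]; abel
        subst hδ'
        simp only [cf_add, cf_smul, cf_H, cf_L, Sum.inr.injEq, Sum.inl.injEq, Prod.mk.injEq,
          hδ, true_and]
        refine ite_aux j m k _ _ _ (fun hB => rfl) (fun hk0 hj0 => by subst hj0; simp)
      · have hne : ¬ (γ = δ + β) := fun h => hδ h.symm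
        have hne2 : ¬ (γ - β = δ) := fun h => hδ (by rw [← h]; abel)
        simp [cf_H, cf_L, Sum.inr.injEq, Sum.inl.injEq, Prod.mk.injEq, hne, hne2]
    · rw [hv.basis_inr, hv.lie_H_H]
      have hz : ∀ n : ℕ, hv.cf (hv.H δ k) (Sum.inl (γ - β, n)) = 0 := by
        intro n; simp [cf_H]
      simp [hz]
  | zero => simp
  | add x z hx hz ihx ihz =>
    rw [add_lie]
    simp only [cf_add, ihx, ihz]
    split_ifs <;> ring
  | smul c x hx ih =>
    rw [smul_lie]
    simp only [cf_smul, ih]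
    split_ifs <;> ring

/-- Bracket with `H β j` on the right has no `L`-coefficients. -/
lemma cf_lie_H_inl (y : V) (β : Γ) (j : ℕ) (γ : Γ) (m : ℕ) :
    hv.cf ⁅y, hv.H β j⁆ (Sum.inl (γ, m)) = 0 := by
  have hy : y ∈ Submodule.span ℂ (Set.range hv.basis) := by
    rw [hv.basis.span_eq]; trivial
  induction hy using Submodule.span_induction with
  | mem x hx =>
    obtain ⟨t, rfl⟩ := hx
    rcases t with ⟨δ, k⟩ | ⟨δ, k⟩
    · rw [hv.basis_inl, hv.lie_L_H]
      simp [cf_H]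
    · rw [hv.basis_inr, hv.lie_H_H]
      simp
  | zero => simp
  | add x z hx hz ihx ihz => rw [add_lie]; simp [ihx, ihz]
  | smul c x hx ih => rw [smul_lie]; simp [ih]

end HVData

namespace HVData

variable {Γ : AddSubgroup ℂ} {V : Type*} [LieRing V] [LieAlgebra ℂ V] (hv : HVData Γ V)

/-- index degree -/
def ideg : (↥Γ × ℕ) ⊕ (↥Γ × ℕ) → ↥Γ := fun s => s.elim (·.1) (·.1)

lemma grade_eq_span (α : Γ) :
    hv.grade α = Submodule.span ℂ (hv.basis '' {s | ideg s = α}) := by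
  unfold grade
  congr 1
  ext x
  constructor
  · rintro (⟨i, rfl⟩ | ⟨i, rfl⟩)
    · exact ⟨Sum.inl (α, i), rfl, hv.basis_inl α i⟩
    · exact ⟨Sum.inr (α, i), rfl, hv.basis_inr α i⟩
  · rintro ⟨s, hs, rfl⟩
    rcases s with ⟨δ, k⟩ | ⟨δ, k⟩
    · obtain rfl : δ = α := hs
      exact Or.inl ⟨k, (hv.basis_inl δ k).symm⟩
    · obtain rfl : δ = α := hs
      exact Or.inr ⟨k, (hv.basis_inr δ k).symm⟩

lemma mem_grade_iff {α : Γ} {x : V} :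
    x ∈ hv.grade α ↔ ∀ s, ideg s ≠ α → hv.cf x s = 0 := by
  rw [grade_eq_span, Module.Basis.mem_span_image]
  constructor
  · intro h s hs
    by_contra hc
    exact hs (h (Finsupp.mem_support_iff.2 hc))
  · intro h s hs
    by_contra hc
    exact Finsupp.mem_support_iff.1 hs (h s hc)

lemma L_mem_grade (α : Γ) (i : ℕ) : hv.L α i ∈ hv.grade α :=
  Submodule.subset_span (Or.inl ⟨i, rfl⟩)

lemma H_mem_grade (α : Γ) (i : ℕ) : hv.H α i ∈ hv.grade α :=
  Submodule.subset_span (Or.inr ⟨i, rfl⟩)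

/-- Conditions on the normalized candidate operator. -/
structure Good (hv : HVData Γ V) (D' : V →ₗ[ℂ] V) : Prop where
  leib : ∀ x y : V, D' ⁅x, y⁆ = ⁅D' x, y⁆ + ⁅x, D' y⁆
  offL : ∀ (α γ : Γ) (i m : ℕ), γ ≠ α → hv.cf (D' (hv.L α i)) (Sum.inl (γ, m)) = 0
  offL' : ∀ (α γ : Γ) (i m : ℕ), γ ≠ α → hv.cf (D' (hv.L α i)) (Sum.inr (γ, m)) = 0
  offH : ∀ (α γ : Γ) (i m : ℕ), γ ≠ α → hv.cf (D' (hv.H α i)) (Sum.inl (γ, m)) = 0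
  offH' : ∀ (α γ : Γ) (i m : ℕ), γ ≠ α → hv.cf (D' (hv.H α i)) (Sum.inr (γ, m)) = 0
  zeroL00 : D' (hv.L 0 0) = 0

variable (D' : V →ₗ[ℂ] V)

noncomputable def Ea (α : Γ) (i m : ℕ) : ℂ := hv.cf (D' (hv.L α i)) (Sum.inl (α, m))
noncomputable def Eb (α : Γ) (i m : ℕ) : ℂ := hv.cf (D' (hv.L α i)) (Sum.inr (α, m))
noncomputable def Ec (α : Γ) (i m : ℕ) : ℂ := hv.cf (D' (hv.H α i)) (Sum.inl (α, m))
noncomputable def Ee (α : Γ) (i m : ℕ) : ℂ := hv.cf (D' (hv.H α i)) (Sum.inr (α, m))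

lemma cf_lie_L00_inl (y : V) (γ : Γ) (m : ℕ) :
    hv.cf ⁅hv.L 0 0, y⁆ (Sum.inl (γ, m)) =
      (γ:ℂ) * hv.cf y (Sum.inl (γ, m)) + ((m:ℂ)+1) * hv.cf y (Sum.inl (γ, m+1)) := by
  rw [← lie_skew, cf_neg, cf_lie_L_inl]
  simp only [Nat.zero_le, if_true, sub_zero, Nat.sub_zero, ZeroMemClass.coe_zero]
  ring

lemma cf_lie_L00_inr (y : V) (γ : Γ) (m : ℕ) :
    hv.cf ⁅hv.L 0 0, y⁆ (Sum.inr (γ, m)) =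
      (γ:ℂ) * hv.cf y (Sum.inr (γ, m)) + ((m:ℂ)+1) * hv.cf y (Sum.inr (γ, m+1)) := by
  rw [← lie_skew, cf_neg, cf_lie_L_inr]
  simp only [Nat.zero_le, if_true, sub_zero, Nat.sub_zero, ZeroMemClass.coe_zero]
  ring

variable {hv D'}

lemma s1 (hg : Good hv D') (β : Γ) (j m : ℕ) :
    (j:ℂ) * Ea hv D' β (j-1) m = ((m:ℂ)+1) * Ea hv D' β j (m+1) := by
  have h := hg.leib (hv.L 0 0) (hv.L β j)
  rw [hg.zeroL00, zero_lie, zero_add, hv.lie_L_L 0 β 0 j] at h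
  have h2 := congrArg (fun v => hv.cf v (Sum.inl (β, m))) h
  simp only [map_add, map_smul, cf_add, cf_smul, cf_lie_L00_inl, zero_add, Nat.zero_add,
    ZeroMemClass.coe_zero, sub_zero] at h2
  have e1 : hv.cf (D' (hv.L β j)) (Sum.inl (β, m)) = Ea hv D' β j m := rfl
  have e2 : hv.cf (D' (hv.L β (j-1))) (Sum.inl (β, m)) = Ea hv D' β (j-1) m := rfl
  have e3 : hv.cf (D' (hv.L β j)) (Sum.inl (β, m+1)) = Ea hv D' β j (m+1) := rfl
  rw [e1, e2, e3] at h2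
  linear_combination h2

lemma s2 (hg : Good hv D') (β : Γ) (j m : ℕ) :
    (j:ℂ) * Eb hv D' β (j-1) m = ((m:ℂ)+1) * Eb hv D' β j (m+1) := by
  have h := hg.leib (hv.L 0 0) (hv.L β j)
  rw [hg.zeroL00, zero_lie, zero_add, hv.lie_L_L 0 β 0 j] at h
  have h2 := congrArg (fun v => hv.cf v (Sum.inr (β, m))) h
  simp only [map_add, map_smul, cf_add, cf_smul, cf_lie_L00_inr, zero_add, Nat.zero_add,
    ZeroMemClass.coe_zero, sub_zero] at h2
  have e1 : hv.cf (D' (hv.L β j)) (Sum.inr (β, m)) = Eb hv D' β j m := rfl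
  have e2 : hv.cf (D' (hv.L β (j-1))) (Sum.inr (β, m)) = Eb hv D' β (j-1) m := rfl
  have e3 : hv.cf (D' (hv.L β j)) (Sum.inr (β, m+1)) = Eb hv D' β j (m+1) := rfl
  rw [e1, e2, e3] at h2
  linear_combination h2

lemma s3 (hg : Good hv D') (β : Γ) (j m : ℕ) :
    (j:ℂ) * Ee hv D' β (j-1) m = ((m:ℂ)+1) * Ee hv D' β j (m+1) := by
  have h := hg.leib (hv.L 0 0) (hv.H β j)
  rw [hg.zeroL00, zero_lie, zero_add, hv.lie_L_H 0 β 0 j] at h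
  have h2 := congrArg (fun v => hv.cf v (Sum.inr (β, m))) h
  simp only [map_add, map_smul, cf_add, cf_smul, cf_lie_L00_inr, zero_add, Nat.zero_add,
    ZeroMemClass.coe_zero, sub_zero] at h2
  have e1 : hv.cf (D' (hv.H β j)) (Sum.inr (β, m)) = Ee hv D' β j m := rfl
  have e2 : hv.cf (D' (hv.H β (j-1))) (Sum.inr (β, m)) = Ee hv D' β (j-1) m := rfl
  have e3 : hv.cf (D' (hv.H β j)) (Sum.inr (β, m+1)) = Ee hv D' β j (m+1) := rfl
  rw [e1, e2, e3] at h2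
  linear_combination h2

lemma s4 (hg : Good hv D') (β : Γ) (j m : ℕ) :
    (j:ℂ) * Ec hv D' β (j-1) m = ((m:ℂ)+1) * Ec hv D' β j (m+1) := by
  have h := hg.leib (hv.L 0 0) (hv.H β j)
  rw [hg.zeroL00, zero_lie, zero_add, hv.lie_L_H 0 β 0 j] at h
  have h2 := congrArg (fun v => hv.cf v (Sum.inl (β, m))) h
  simp only [map_add, map_smul, cf_add, cf_smul, cf_lie_L00_inl, zero_add, Nat.zero_add,
    ZeroMemClass.coe_zero, sub_zero] at h2
  have e1 : hv.cf (D' (hv.H β j)) (Sum.inl (β, m)) = Ec hv D' β j m := rfl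
  have e2 : hv.cf (D' (hv.H β (j-1))) (Sum.inl (β, m)) = Ec hv D' β (j-1) m := rfl
  have e3 : hv.cf (D' (hv.H β j)) (Sum.inl (β, m+1)) = Ec hv D' β j (m+1) := rfl
  rw [e1, e2, e3] at h2
  linear_combination h2

end HVData

namespace HVData

variable {Γ : AddSubgroup ℂ} {V : Type*} [LieRing V] [LieAlgebra ℂ V]
variable {hv : HVData Γ V} {D' : V →ₗ[ℂ] V}

lemma hh00 (hg : Good hv D') (α β : Γ) (m : ℕ) :
    (β:ℂ) * Ec hv D' α 0 m = (α:ℂ) * Ec hv D' β 0 m := by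
  have h := hg.leib (hv.H α 0) (hv.H β 0)
  rw [hv.lie_H_H, map_zero] at h
  rw [show ⁅hv.H α 0, D' (hv.H β 0)⁆ = -⁅D' (hv.H β 0), hv.H α 0⁆ from (lie_skew _ _).symm] at h
  have h2 := congrArg (fun v => hv.cf v (Sum.inr (α + β, m))) h
  simp only [cf_zero, cf_add, cf_neg, cf_lie_H_inr, Nat.zero_le, if_true, Nat.sub_zero,
    Nat.cast_zero, zero_mul, add_zero, add_sub_cancel_right, add_sub_cancel_left] at h2
  have e1 : hv.cf (D' (hv.H α 0)) (Sum.inl (α, m)) = Ec hv D' α 0 m := rfl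
  have e2 : hv.cf (D' (hv.H β 0)) (Sum.inl (β, m)) = Ec hv D' β 0 m := rfl
  rw [e1, e2] at h2
  linear_combination -h2

lemma r10 (hg : Good hv D') (α β : Γ) (m : ℕ) :
    (β:ℂ) * Ec hv D' (α+β) 0 m
      = ((β:ℂ) - α) * Ec hv D' β 0 m + ((m:ℂ)+1) * Ec hv D' β 0 (m+1) := by
  have h := hg.leib (hv.L α 0) (hv.H β 0)
  rw [hv.lie_L_H α β 0 0] at h
  rw [show ⁅hv.L α 0, D' (hv.H β 0)⁆ = -⁅D' (hv.H β 0), hv.L α 0⁆ from (lie_skew _ _).symm] at h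
  have h2 := congrArg (fun v => hv.cf v (Sum.inl (α + β, m))) h
  simp only [map_add, map_smul, cf_add, cf_smul, cf_neg, cf_lie_H_inl, cf_lie_L_inl,
    Nat.zero_le, if_true, Nat.sub_zero, Nat.cast_zero, zero_mul, add_zero, zero_add, mul_zero,
    Nat.add_zero, add_sub_cancel_right, add_sub_cancel_left, Nat.zero_add] at h2
  have e1 : hv.cf (D' (hv.H (α+β) 0)) (Sum.inl (α+β, m)) = Ec hv D' (α+β) 0 m := rfl
  have e2 : hv.cf (D' (hv.H β 0)) (Sum.inl (β, m)) = Ec hv D' β 0 m := rfl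
  have e3 : hv.cf (D' (hv.H β 0)) (Sum.inl (β, m+1)) = Ec hv D' β 0 (m+1) := rfl
  rw [e1, e2, e3] at h2
  push_cast at h2
  linear_combination h2

lemma cEq0 (hg : Good hv D') {β₀ : Γ} (hβ₀ : β₀ ≠ 0) :
    ∀ (β : Γ) (j m : ℕ), Ec hv D' β j m = 0 := by
  have hβ₀c : (β₀:ℂ) ≠ 0 := by simpa [ZeroMemClass.coe_eq_zero] using hβ₀
  -- step: 2α * X m = (m+1) * X (m+1) for X m := Ec β₀ 0 m
  have key : ∀ (α : Γ) (m : ℕ),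
      2*(α:ℂ) * Ec hv D' β₀ 0 m = ((m:ℂ)+1) * Ec hv D' β₀ 0 (m+1) := by
    intro α m
    have h1 := hh00 hg (α + β₀) β₀ m
    have h2 := r10 hg α β₀ m
    have hc : ((α + β₀ : Γ) : ℂ) = (α:ℂ) + β₀ := by push_cast; ring
    rw [hc] at h1
    -- β₀ * Ec (α+β₀) 0 m = (α+β₀) * Ec β₀ 0 m ; and r10 gives the other expression
    have := h2.symm.trans h1
    linear_combination -this
  have hX : ∀ m, Ec hv D' β₀ 0 m = 0 := by
    intro m
    have k1 := key β₀ m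
    have k2 := key (β₀ + β₀) m
    have hc : ((β₀ + β₀ : Γ) : ℂ) = (β₀:ℂ) + β₀ := by push_cast; ring
    rw [hc] at k2
    have : 2*(β₀:ℂ) * Ec hv D' β₀ 0 m = 0 := by linear_combination k2 - k1
    have h2' : (2:ℂ)*(β₀:ℂ) ≠ 0 := by
      simp [mul_eq_zero, hβ₀c]
    exact (mul_eq_zero.1 this).resolve_left h2'
  have hc0 : ∀ (α : Γ) (m : ℕ), Ec hv D' α 0 m = 0 := by
    intro α m
    have := hh00 hg α β₀ m
    rw [hX m, mul_zero] at this
    exact (mul_eq_zero.1 this).resolve_left hβ₀c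
  -- D'(H α 0) has no L-components at all
  have hnoL : ∀ (α δ : Γ) (n : ℕ), hv.cf (D' (hv.H α 0)) (Sum.inl (δ, n)) = 0 := by
    intro α δ n
    by_cases hδ : δ = α
    · subst hδ; exact hc0 δ n
    · exact hg.offH α δ 0 n hδ
  -- hence ⁅D'(H α 0), H β j⁆ = 0
  have hbr0 : ∀ (α β : Γ) (j : ℕ), ⁅D' (hv.H α 0), hv.H β j⁆ = 0 := by
    intro α β j
    apply ext_cf
    rintro (⟨δ, n⟩ | ⟨δ, n⟩)
    · rw [cf_lie_H_inl, cf_zero]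
    · rw [cf_lie_H_inr, cf_zero, hnoL, hnoL]
      split_ifs <;> ring
  intro β j m
  have h := hg.leib (hv.H β j) (hv.H β₀ 0)
  rw [hv.lie_H_H, map_zero] at h
  rw [show ⁅hv.H β j, D' (hv.H β₀ 0)⁆ = -⁅D' (hv.H β₀ 0), hv.H β j⁆ from (lie_skew _ _).symm,
    hbr0, neg_zero, add_zero] at h
  have h2 := congrArg (fun v => hv.cf v (Sum.inr (β + β₀, m))) h
  simp only [cf_zero, cf_lie_H_inr, Nat.zero_le, if_true, Nat.sub_zero, Nat.cast_zero,
    zero_mul, add_zero, add_sub_cancel_right] at h2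
  have e1 : hv.cf (D' (hv.H β j)) (Sum.inl (β, m)) = Ec hv D' β j m := rfl
  rw [e1] at h2
  exact (mul_eq_zero.1 h2.symm).resolve_left hβ₀c

end HVData

namespace HVData

variable {Γ : AddSubgroup ℂ} {V : Type*} [LieRing V] [LieAlgebra ℂ V]
variable {hv : HVData Γ V} {D' : V →ₗ[ℂ] V}

/-- From `⁅L α 1, H β 0⁆`: the `H`-part links `Ee` and `Ea` at row 1. -/
lemma lamlink (hg : Good hv D') (α β : Γ) :
    (β:ℂ) * Ee hv D' (α+β) 1 0 = (β:ℂ) * Ea hv D' α 1 0 := by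
  have h := hg.leib (hv.L α 1) (hv.H β 0)
  rw [hv.lie_L_H α β 1 0,
    show ⁅hv.L α 1, D' (hv.H β 0)⁆ = -⁅D' (hv.H β 0), hv.L α 1⁆ from (lie_skew _ _).symm] at h
  have h2 := congrArg (fun v => hv.cf v (Sum.inr (α + β, 0))) h
  simp only [map_add, map_smul, cf_add, cf_smul, cf_neg, cf_zero, cf_lie_H_inr, cf_lie_L_inr,
    Nat.add_zero, Nat.zero_add, Nat.sub_zero, Nat.cast_zero, Nat.cast_one, zero_mul, mul_zero,
    add_zero, zero_add, add_sub_cancel_right, add_sub_cancel_left, sub_zero,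
    ZeroMemClass.coe_zero, Nat.zero_le, le_refl, if_true, Nat.le_zero, Nat.add_sub_cancel,
    one_ne_zero, if_false, Nat.reduceLeDiff] at h2
  have e1 : hv.cf (D' (hv.H (α+β) 1)) (Sum.inr (α+β, 0)) = Ee hv D' (α+β) 1 0 := rfl
  have e2 : hv.cf (D' (hv.L α 1)) (Sum.inl (α, 0)) = Ea hv D' α 1 0 := rfl
  have e3 : hv.cf (D' (hv.H β 0)) (Sum.inr (β, 0)) = Ee hv D' β 0 0 := rfl
  rw [e1, e2, e3] at h2
  linear_combination h2

end HVData

namespace HVData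

variable {Γ : AddSubgroup ℂ} {V : Type*} [LieRing V] [LieAlgebra ℂ V]
variable {hv : HVData Γ V} {D' : V →ₗ[ℂ] V}

lemma e00rel (hg : Good hv D') (α β : Γ) :
    (β:ℂ) * Ee hv D' (α+β) 0 0
      = (β:ℂ) * Ea hv D' α 0 0 + (β:ℂ) * Ee hv D' β 0 0 + Ee hv D' β 0 1 := by
  have h := hg.leib (hv.L α 0) (hv.H β 0)
  rw [hv.lie_L_H α β 0 0,
    show ⁅hv.L α 0, D' (hv.H β 0)⁆ = -⁅D' (hv.H β 0), hv.L α 0⁆ from (lie_skew _ _).symm] at h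
  have h2 := congrArg (fun v => hv.cf v (Sum.inr (α + β, 0))) h
  simp only [map_add, map_smul, cf_add, cf_smul, cf_neg, cf_zero, cf_lie_H_inr, cf_lie_L_inr,
    Nat.add_zero, Nat.zero_add, Nat.sub_zero, Nat.cast_zero, Nat.cast_one, zero_mul, mul_zero,
    add_zero, zero_add, add_sub_cancel_right, add_sub_cancel_left, sub_zero,
    ZeroMemClass.coe_zero, Nat.zero_le, le_refl, if_true, Nat.le_zero, Nat.add_sub_cancel,
    one_ne_zero, if_false, Nat.reduceLeDiff] at h2
  have e1 : hv.cf (D' (hv.H (α+β) 0)) (Sum.inr (α+β, 0)) = Ee hv D' (α+β) 0 0 := rfl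
  have e2 : hv.cf (D' (hv.L α 0)) (Sum.inl (α, 0)) = Ea hv D' α 0 0 := rfl
  have e3 : hv.cf (D' (hv.H β 0)) (Sum.inr (β, 0)) = Ee hv D' β 0 0 := rfl
  have e4 : hv.cf (D' (hv.H β 0)) (Sum.inr (β, 1)) = Ee hv D' β 0 1 := rfl
  rw [e1, e2, e3, e4] at h2
  push_cast at h2
  linear_combination h2

lemma i1j1 (hg : Good hv D') (α β : Γ) :
    ((β:ℂ) - α) * Ea hv D' (α+β) 2 0 = Ea hv D' α 1 0 - Ea hv D' β 1 0 := by
  have h := hg.leib (hv.L α 1) (hv.L β 1)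
  rw [hv.lie_L_L α β 1 1,
    show ⁅hv.L α 1, D' (hv.L β 1)⁆ = -⁅D' (hv.L β 1), hv.L α 1⁆ from (lie_skew _ _).symm] at h
  have h2 := congrArg (fun v => hv.cf v (Sum.inl (α + β, 0))) h
  simp only [map_add, map_smul, cf_add, cf_smul, cf_neg, cf_zero, cf_lie_L_inl,
    Nat.add_zero, Nat.zero_add, Nat.sub_zero, Nat.cast_zero, Nat.cast_one, zero_mul, mul_zero,
    add_zero, zero_add, add_sub_cancel_right, add_sub_cancel_left, sub_zero,
    ZeroMemClass.coe_zero, Nat.zero_le, le_refl, if_true, Nat.le_zero, Nat.add_sub_cancel,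
    one_ne_zero, if_false, Nat.reduceLeDiff] at h2
  have e1 : hv.cf (D' (hv.L (α+β) 2)) (Sum.inl (α+β, 0)) = Ea hv D' (α+β) 2 0 := rfl
  have e0 : hv.cf (D' (hv.L (α+β) 1)) (Sum.inl (α+β, 0)) = Ea hv D' (α+β) 1 0 := rfl
  have e2 : hv.cf (D' (hv.L α 1)) (Sum.inl (α, 0)) = Ea hv D' α 1 0 := rfl
  have e3 : hv.cf (D' (hv.L β 1)) (Sum.inl (β, 0)) = Ea hv D' β 1 0 := rfl
  rw [e1, e0, e2, e3] at h2
  push_cast at h2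
  linear_combination h2

lemma i1jge2 (hg : Good hv D') (α β : Γ) (j : ℕ) (hj : 2 ≤ j) :
    ((β:ℂ) - α) * Ea hv D' (α+β) (j+1) 0 + ((j:ℂ) - 1) * Ea hv D' (α+β) j 0
      = - Ea hv D' β j 0 := by
  have h := hg.leib (hv.L α 1) (hv.L β j)
  rw [hv.lie_L_L α β 1 j,
    show ⁅hv.L α 1, D' (hv.L β j)⁆ = -⁅D' (hv.L β j), hv.L α 1⁆ from (lie_skew _ _).symm] at h
  rw [show 1 + j - 1 = j from by omega, show 1 + j = j + 1 from by omega] at h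
  have hj0 : ¬ (j ≤ 0) := by omega
  have hj1 : ¬ (j ≤ 1) := by omega
  have h2 := congrArg (fun v => hv.cf v (Sum.inl (α + β, 0))) h
  simp only [map_add, map_smul, cf_add, cf_smul, cf_neg, cf_zero, cf_lie_L_inl,
    Nat.add_zero, Nat.zero_add, Nat.sub_zero, Nat.cast_zero, Nat.cast_one, zero_mul, mul_zero,
    add_zero, zero_add, add_sub_cancel_right, add_sub_cancel_left, sub_zero,
    ZeroMemClass.coe_zero, Nat.zero_le, le_refl, if_true, Nat.le_zero, Nat.add_sub_cancel,
    one_ne_zero, if_false, Nat.reduceLeDiff, hj0, hj1] at h2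
  have e1 : hv.cf (D' (hv.L (α+β) (j+1))) (Sum.inl (α+β, 0)) = Ea hv D' (α+β) (j+1) 0 := rfl
  have e0 : hv.cf (D' (hv.L (α+β) j)) (Sum.inl (α+β, 0)) = Ea hv D' (α+β) j 0 := rfl
  have e3 : hv.cf (D' (hv.L β j)) (Sum.inl (β, 0)) = Ea hv D' β j 0 := rfl
  rw [e1, e0, e3] at h2
  push_cast at h2
  linear_combination h2

lemma d1j1 (hg : Good hv D') (α β : Γ) :
    (β:ℂ) * Ee hv D' (α+β) 2 0 + Ee hv D' (α+β) 1 0 = Ea hv D' α 1 0 := by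
  have h := hg.leib (hv.L α 1) (hv.H β 1)
  rw [hv.lie_L_H α β 1 1,
    show ⁅hv.L α 1, D' (hv.H β 1)⁆ = -⁅D' (hv.H β 1), hv.L α 1⁆ from (lie_skew _ _).symm] at h
  have h2 := congrArg (fun v => hv.cf v (Sum.inr (α + β, 0))) h
  simp only [map_add, map_smul, cf_add, cf_smul, cf_neg, cf_zero, cf_lie_H_inr, cf_lie_L_inr,
    Nat.add_zero, Nat.zero_add, Nat.sub_zero, Nat.cast_zero, Nat.cast_one, zero_mul, mul_zero,
    add_zero, zero_add, add_sub_cancel_right, add_sub_cancel_left, sub_zero,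
    ZeroMemClass.coe_zero, Nat.zero_le, le_refl, if_true, Nat.le_zero, Nat.add_sub_cancel,
    one_ne_zero, if_false, Nat.reduceLeDiff] at h2
  have e1 : hv.cf (D' (hv.H (α+β) 2)) (Sum.inr (α+β, 0)) = Ee hv D' (α+β) 2 0 := rfl
  have e0 : hv.cf (D' (hv.H (α+β) 1)) (Sum.inr (α+β, 0)) = Ee hv D' (α+β) 1 0 := rfl
  have e2 : hv.cf (D' (hv.L α 1)) (Sum.inl (α, 0)) = Ea hv D' α 1 0 := rfl
  have e3 : hv.cf (D' (hv.H β 1)) (Sum.inr (β, 0)) = Ee hv D' β 1 0 := rfl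
  rw [e1, e0, e2, e3] at h2
  push_cast at h2
  linear_combination h2

lemma d1jge2 (hg : Good hv D') (α β : Γ) (j : ℕ) (hj : 2 ≤ j) :
    (β:ℂ) * Ee hv D' (α+β) (j+1) 0 + (j:ℂ) * Ee hv D' (α+β) j 0 = 0 := by
  have h := hg.leib (hv.L α 1) (hv.H β j)
  rw [hv.lie_L_H α β 1 j,
    show ⁅hv.L α 1, D' (hv.H β j)⁆ = -⁅D' (hv.H β j), hv.L α 1⁆ from (lie_skew _ _).symm] at h
  rw [show 1 + j - 1 = j from by omega, show 1 + j = j + 1 from by omega] at h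
  have hj0 : ¬ (j ≤ 0) := by omega
  have hj1 : ¬ (j ≤ 1) := by omega
  have h2 := congrArg (fun v => hv.cf v (Sum.inr (α + β, 0))) h
  simp only [map_add, map_smul, cf_add, cf_smul, cf_neg, cf_zero, cf_lie_H_inr, cf_lie_L_inr,
    Nat.add_zero, Nat.zero_add, Nat.sub_zero, Nat.cast_zero, Nat.cast_one, zero_mul, mul_zero,
    add_zero, zero_add, add_sub_cancel_right, add_sub_cancel_left, sub_zero,
    ZeroMemClass.coe_zero, Nat.zero_le, le_refl, if_true, Nat.le_zero, Nat.add_sub_cancel,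
    one_ne_zero, if_false, Nat.reduceLeDiff, hj0, hj1] at h2
  have e1 : hv.cf (D' (hv.H (α+β) (j+1))) (Sum.inr (α+β, 0)) = Ee hv D' (α+β) (j+1) 0 := rfl
  have e0 : hv.cf (D' (hv.H (α+β) j)) (Sum.inr (α+β, 0)) = Ee hv D' (α+β) j 0 := rfl
  rw [e1, e0] at h2
  push_cast at h2
  linear_combination h2

lemma bFE (hg : Good hv D') (α β : Γ) :
    ((β:ℂ) - α) * Eb hv D' (α+β) 0 0
      = -(α:ℂ) * Eb hv D' α 0 0 - Eb hv D' α 0 1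
        + (β:ℂ) * Eb hv D' β 0 0 + Eb hv D' β 0 1 := by
  have h := hg.leib (hv.L α 0) (hv.L β 0)
  rw [hv.lie_L_L α β 0 0,
    show ⁅hv.L α 0, D' (hv.L β 0)⁆ = -⁅D' (hv.L β 0), hv.L α 0⁆ from (lie_skew _ _).symm] at h
  have h2 := congrArg (fun v => hv.cf v (Sum.inr (α + β, 0))) h
  simp only [map_add, map_smul, cf_add, cf_smul, cf_neg, cf_zero, cf_lie_L_inr,
    Nat.add_zero, Nat.zero_add, Nat.sub_zero, Nat.cast_zero, Nat.cast_one, zero_mul, mul_zero,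
    add_zero, zero_add, add_sub_cancel_right, add_sub_cancel_left, sub_zero,
    ZeroMemClass.coe_zero, Nat.zero_le, le_refl, if_true, Nat.le_zero, Nat.add_sub_cancel,
    one_ne_zero, if_false, Nat.reduceLeDiff] at h2
  have e1 : hv.cf (D' (hv.L (α+β) 0)) (Sum.inr (α+β, 0)) = Eb hv D' (α+β) 0 0 := rfl
  have e2 : hv.cf (D' (hv.L α 0)) (Sum.inr (α, 0)) = Eb hv D' α 0 0 := rfl
  have e3 : hv.cf (D' (hv.L α 0)) (Sum.inr (α, 1)) = Eb hv D' α 0 1 := rfl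
  have e4 : hv.cf (D' (hv.L β 0)) (Sum.inr (β, 0)) = Eb hv D' β 0 0 := rfl
  have e5 : hv.cf (D' (hv.L β 0)) (Sum.inr (β, 1)) = Eb hv D' β 0 1 := rfl
  rw [e1, e2, e3, e4, e5] at h2
  push_cast at h2
  linear_combination h2

lemma Ui (hg : Good hv D') (α β : Γ) (i : ℕ) (hi : 1 ≤ i) :
    ((β:ℂ) - α) * Eb hv D' (α+β) i 0 - (i:ℂ) * Eb hv D' (α+β) (i-1) 0
      = -(α:ℂ) * Eb hv D' α i 0 - Eb hv D' α i 1 := by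
  have h := hg.leib (hv.L α i) (hv.L β 0)
  rw [hv.lie_L_L α β i 0,
    show ⁅hv.L α i, D' (hv.L β 0)⁆ = -⁅D' (hv.L β 0), hv.L α i⁆ from (lie_skew _ _).symm] at h
  have h2 := congrArg (fun v => hv.cf v (Sum.inr (α + β, 0))) h
  by_cases hc : i = 1
  · subst hc
    simp only [map_add, map_smul, cf_add, cf_smul, cf_neg, cf_zero, cf_lie_L_inr,
      Nat.add_zero, Nat.zero_add, Nat.sub_zero, Nat.cast_zero, Nat.cast_one, zero_mul, mul_zero,
      add_zero, zero_add, add_sub_cancel_right, add_sub_cancel_left, sub_zero,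
      ZeroMemClass.coe_zero, Nat.zero_le, le_refl, if_true, Nat.le_zero, Nat.add_sub_cancel,
      one_ne_zero, if_false, Nat.reduceLeDiff] at h2
    have e1 : hv.cf (D' (hv.L (α+β) 1)) (Sum.inr (α+β, 0)) = Eb hv D' (α+β) 1 0 := rfl
    have e0 : hv.cf (D' (hv.L (α+β) 0)) (Sum.inr (α+β, 0)) = Eb hv D' (α+β) 0 0 := rfl
    have e2 : hv.cf (D' (hv.L α 1)) (Sum.inr (α, 0)) = Eb hv D' α 1 0 := rfl
    have e3 : hv.cf (D' (hv.L α 1)) (Sum.inr (α, 1)) = Eb hv D' α 1 1 := rfl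
    have e4 : hv.cf (D' (hv.L β 0)) (Sum.inr (β, 0)) = Eb hv D' β 0 0 := rfl
    rw [e1, e0, e2, e3, e4] at h2
    push_cast at h2
    linear_combination h2
  · have hi2 : 2 ≤ i := by omega
    have hii0 : ¬ (i ≤ 0) := by omega
    have hii1 : ¬ (i ≤ 1) := by omega
    simp only [map_add, map_smul, cf_add, cf_smul, cf_neg, cf_zero, cf_lie_L_inr,
      Nat.add_zero, Nat.zero_add, Nat.sub_zero, Nat.cast_zero, Nat.cast_one, zero_mul, mul_zero,
      add_zero, zero_add, add_sub_cancel_right, add_sub_cancel_left, sub_zero,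
      ZeroMemClass.coe_zero, Nat.zero_le, le_refl, if_true, Nat.le_zero, Nat.add_sub_cancel,
      one_ne_zero, if_false, Nat.reduceLeDiff, hii0, hii1] at h2
    have e1 : hv.cf (D' (hv.L (α+β) i)) (Sum.inr (α+β, 0)) = Eb hv D' (α+β) i 0 := rfl
    have e0 : hv.cf (D' (hv.L (α+β) (i-1))) (Sum.inr (α+β, 0)) = Eb hv D' (α+β) (i-1) 0 := rfl
    have e2 : hv.cf (D' (hv.L α i)) (Sum.inr (α, 0)) = Eb hv D' α i 0 := rfl
    have e3 : hv.cf (D' (hv.L α i)) (Sum.inr (α, 1)) = Eb hv D' α i 1 := rfl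
    rw [e1, e0, e2, e3] at h2
    push_cast at h2
    linear_combination h2

end HVData

namespace HVData

variable {Γ : AddSubgroup ℂ} {V : Type*} [LieRing V] [LieAlgebra ℂ V]
variable {hv : HVData Γ V} {D' : V →ₗ[ℂ] V}

lemma coe_sub_ne {α β : Γ} (h : α ≠ β) : ((β:ℂ) - α) ≠ 0 :=
  sub_ne_zero.mpr fun he => h (Subtype.coe_injective he.symm)

lemma coe_ne_zero_s8 {β₀ : Γ} (hβ₀ : β₀ ≠ 0) : (β₀:ℂ) ≠ 0 := by
  simpa [ZeroMemClass.coe_eq_zero] using hβ₀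

lemma natsucc_ne (k : ℕ) : ((k:ℂ) + 1) ≠ 0 := by
  have : ((k+1 : ℕ) : ℂ) ≠ 0 := Nat.cast_ne_zero.mpr (Nat.succ_ne_zero k)
  push_cast at this
  exact this

lemma two_beta_ne {β₀ : Γ} (hβ₀ : β₀ ≠ 0) : β₀ + β₀ ≠ 0 := by
  intro h
  apply hβ₀
  have hco : ((β₀ + β₀ : Γ) : ℂ) = 0 := by rw [h]; simp
  push_cast at hco
  have h2 : (2:ℂ) * β₀ = 0 := by linear_combination hco
  rcases mul_eq_zero.mp h2 with h' | h'
  · norm_num at h'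
  · exact ZeroMemClass.coe_eq_zero.mp h'

lemma pair_exists {β₀ : Γ} (hβ₀ : β₀ ≠ 0) (γ : Γ) : ∃ α β : Γ, α + β = γ ∧ α ≠ β := by
  by_cases hc : γ = β₀ + β₀
  · refine ⟨γ + β₀, -β₀, by abel, ?_⟩
    intro h
    apply hβ₀
    have hco : ((γ + β₀ : Γ):ℂ) = ((-β₀ : Γ):ℂ) := by rw [h]
    rw [hc] at hco
    push_cast at hco
    have h4 : (4:ℂ) * β₀ = 0 := by linear_combination hco
    rcases mul_eq_zero.mp h4 with h' | h'
    · norm_num at h'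
    · exact ZeroMemClass.coe_eq_zero.mp h'
  · refine ⟨γ - β₀, β₀, by abel, fun h => hc ?_⟩
    have : γ = (γ - β₀) + β₀ := by abel
    rw [this, h]

/-- row-1 of `Ea` is constant. -/
lemma aLam (hg : Good hv D') {β₀ : Γ} (hβ₀ : β₀ ≠ 0) (α : Γ) :
    Ea hv D' α 1 0 = Ea hv D' 0 1 0 := by
  have l1 : ∀ a b : Γ, b ≠ 0 → Ee hv D' (a+b) 1 0 = Ea hv D' a 1 0 := by
    intro a b hb
    have := lamlink hg a b
    exact mul_left_cancel₀ (coe_ne_zero_s8 hb) this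
  by_cases hc : α = -β₀
  · have hb : β₀ + β₀ ≠ 0 := two_beta_ne hβ₀
    have h1 := l1 α (β₀ + β₀) hb
    have hne : α + (β₀ + β₀) ≠ 0 := by
      rw [hc]; intro h
      apply hβ₀
      have hco : ((-β₀ + (β₀ + β₀) : Γ):ℂ) = 0 := by rw [h]; simp
      push_cast at hco
      exact ZeroMemClass.coe_eq_zero.mp (by linear_combination hco)
    have h2 := l1 0 (α + (β₀ + β₀)) hne
    rw [zero_add] at h2
    rw [← h1, ← h2]
  · have hne : α + β₀ ≠ 0 := fun h => hc (eq_neg_of_add_eq_zero_left h)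
    have h1 := l1 α β₀ hβ₀
    have h2 := l1 0 (α + β₀) hne
    rw [zero_add] at h2
    rw [← h1, ← h2]

lemma eLam (hg : Good hv D') {β₀ : Γ} (hβ₀ : β₀ ≠ 0) (γ : Γ) :
    Ee hv D' γ 1 0 = Ea hv D' 0 1 0 := by
  have l1 : ∀ a b : Γ, b ≠ 0 → Ee hv D' (a+b) 1 0 = Ea hv D' a 1 0 := by
    intro a b hb
    exact mul_left_cancel₀ (coe_ne_zero_s8 hb) (lamlink hg a b)
  have h1 := l1 (γ - β₀) β₀ hβ₀
  rw [show γ - β₀ + β₀ = γ from by abel] at h1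
  rw [h1, aLam hg hβ₀]

lemma eRow01 (hg : Good hv D') (β : Γ) : Ee hv D' β 0 1 = 0 := by
  have := s3 hg β 0 0
  simp at this
  linear_combination -this

lemma phirel (hg : Good hv D') {β : Γ} (hβ : β ≠ 0) (α : Γ) :
    Ee hv D' (α+β) 0 0 = Ea hv D' α 0 0 + Ee hv D' β 0 0 := by
  have h := e00rel hg α β
  rw [eRow01 hg β] at h
  apply mul_left_cancel₀ (coe_ne_zero_s8 hβ)
  linear_combination h

lemma addEa (hg : Good hv D') {β₀ : Γ} (hβ₀ : β₀ ≠ 0) (a b : Γ) :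
    Ea hv D' (a+b) 0 0 = Ea hv D' a 0 0 + Ea hv D' b 0 0 := by
  -- choose β with β ≠ 0 and b + β ≠ 0
  obtain ⟨β, hβ, hbβ⟩ : ∃ β : Γ, β ≠ 0 ∧ b + β ≠ 0 := by
    by_cases hc : b + β₀ = 0
    · refine ⟨β₀ + β₀, two_beta_ne hβ₀, ?_⟩
      intro h
      apply hβ₀
      have : β₀ = (b + (β₀ + β₀)) - (b + β₀) := by abel
      rw [this, h, hc]; abel
    · exact ⟨β₀, hβ₀, hc⟩
  have h1 := phirel hg hbβ a
  rw [show a + (b + β) = (a + b) + β from by abel] at h1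
  have h2 := phirel hg hβ (a + b)
  have h3 := phirel hg hβ b
  rw [h2, h3] at h1
  linear_combination h1

lemma eVal0 (hg : Good hv D') {β₀ : Γ} (hβ₀ : β₀ ≠ 0) (γ : Γ) :
    Ee hv D' γ 0 0 = Ea hv D' γ 0 0 + (Ee hv D' β₀ 0 0 - Ea hv D' β₀ 0 0) := by
  have h1 := phirel hg hβ₀ (γ - β₀)
  rw [show γ - β₀ + β₀ = γ from by abel] at h1
  have h2 := addEa hg hβ₀ (γ - β₀) β₀
  rw [show γ - β₀ + β₀ = γ from by abel] at h2
  rw [h1, h2]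
  ring

lemma aHigh (hg : Good hv D') {β₀ : Γ} (hβ₀ : β₀ ≠ 0) :
    ∀ n, 2 ≤ n → ∀ γ, Ea hv D' γ n 0 = 0 := by
  intro n hn
  induction n, hn using Nat.le_induction with
  | base =>
    intro γ
    obtain ⟨a, b, hab, hne⟩ := pair_exists hβ₀ γ
    have h := i1j1 hg a b
    rw [hab, aLam hg hβ₀ a, aLam hg hβ₀ b, sub_self] at h
    exact (mul_eq_zero.mp h).resolve_left (coe_sub_ne hne)
  | succ n hn ih =>
    intro γ
    obtain ⟨a, b, hab, hne⟩ := pair_exists hβ₀ γ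
    have h := i1jge2 hg a b n hn
    rw [hab, ih γ, ih b, mul_zero, add_zero, neg_zero] at h
    exact (mul_eq_zero.mp h).resolve_left (coe_sub_ne hne)

lemma eHigh (hg : Good hv D') {β₀ : Γ} (hβ₀ : β₀ ≠ 0) :
    ∀ n, 2 ≤ n → ∀ γ, Ee hv D' γ n 0 = 0 := by
  intro n hn
  induction n, hn using Nat.le_induction with
  | base =>
    intro γ
    have h := d1j1 hg (γ - β₀) β₀
    rw [show γ - β₀ + β₀ = γ from by abel, eLam hg hβ₀ γ, aLam hg hβ₀ (γ - β₀)] at h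
    have h2 : (β₀:ℂ) * Ee hv D' γ 2 0 = 0 := by linear_combination h
    exact (mul_eq_zero.mp h2).resolve_left (coe_ne_zero_s8 hβ₀)
  | succ n hn ih =>
    intro γ
    have h := d1jge2 hg (γ - β₀) β₀ n hn
    rw [show γ - β₀ + β₀ = γ from by abel, ih γ, mul_zero, add_zero] at h
    exact (mul_eq_zero.mp h).resolve_left (coe_ne_zero_s8 hβ₀)

/-- Generic reconstruction of a coefficient array from its `m = 0` row via the
`s`-recursion. -/
lemma rowRec (F : Γ → ℕ → ℕ → ℂ)
    (hrec : ∀ (α : Γ) (j m : ℕ), (j:ℂ) * F α (j-1) m = ((m:ℂ)+1) * F α j (m+1))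
    (P Q : Γ → ℂ) (h0 : ∀ α, F α 0 0 = P α) (h1 : ∀ α, F α 1 0 = Q α)
    (hhigh : ∀ i, 2 ≤ i → ∀ α, F α i 0 = 0) :
    ∀ (i m : ℕ) (α : Γ), F α i m
      = (if m = i then P α else 0) + (if m + 1 = i then (i:ℂ) * Q α else 0) := by
  intro i
  induction i with
  | zero =>
    intro m α
    cases m with
    | zero => simp [h0 α]
    | succ k =>
      have h := hrec α 0 k
      simp only [Nat.cast_zero, zero_mul] at h
      have : F α 0 (k+1) = 0 := by
        have := h.symm
        exact (mul_eq_zero.mp this).resolve_left (natsucc_ne k)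
      simp [this]
  | succ i ih =>
    intro m α
    cases m with
    | zero =>
      by_cases hI : i = 0
      · subst hI
        simp [h1 α]
      · have h2 : 2 ≤ i + 1 := by omega
        rw [hhigh (i+1) h2 α]
        have c1 : ¬ (0 = i + 1) := by omega
        have c2 : ¬ (0 + 1 = i + 1) := by omega
        simp [c1, c2, hI]
    | succ k =>
      have h := hrec α (i+1) k
      rw [show i + 1 - 1 = i from by omega] at h
      apply mul_left_cancel₀ (natsucc_ne k)
      rw [← h, ih k α]
      by_cases hk : k = i
      · subst hk
        have c1 : k + 1 = k + 1 := rfl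
        have c2 : ¬ (k + 1 + 1 = k + 1) := by omega
        have c3 : ¬ (k + 1 = k) := by omega
        simp only [if_pos rfl, if_pos c1, if_neg c2, if_neg c3]
        push_cast
        ring
      · by_cases hk2 : k + 1 = i
        · have c1 : ¬ (k = i) := hk
          have c2 : ¬ (k + 1 = i + 1) := by omega
          have c3 : k + 1 + 1 = i + 1 := by omega
          simp only [if_pos hk2, if_neg c1, if_neg c2, if_pos c3]
          have hc : (i:ℂ) = (k:ℂ) + 1 := by exact_mod_cast congrArg (Nat.cast : ℕ → ℂ) hk2.symm
          push_cast
          rw [hc]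
          ring
        · have c1 : ¬ (k = i) := hk
          have c2 : ¬ (k + 1 = i) := hk2
          have c3 : ¬ (k + 1 = i + 1) := by omega
          have c4 : ¬ (k + 1 + 1 = i + 1) := by omega
          simp only [if_neg c1, if_neg c2, if_neg c3, if_neg c4]
          ring

lemma aFull (hg : Good hv D') {β₀ : Γ} (hβ₀ : β₀ ≠ 0) (i m : ℕ) (α : Γ) :
    Ea hv D' α i m = (if m = i then Ea hv D' α 0 0 else 0)
      + (if m + 1 = i then (i:ℂ) * Ea hv D' 0 1 0 else 0) :=
  rowRec (Ea hv D') (fun α j m => s1 hg α j m) _ _ (fun _ => rfl)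
    (fun α => aLam hg hβ₀ α) (aHigh hg hβ₀) i m α

lemma eFull (hg : Good hv D') {β₀ : Γ} (hβ₀ : β₀ ≠ 0) (i m : ℕ) (γ : Γ) :
    Ee hv D' γ i m
      = (if m = i then Ea hv D' γ 0 0 + (Ee hv D' β₀ 0 0 - Ea hv D' β₀ 0 0) else 0)
      + (if m + 1 = i then (i:ℂ) * Ea hv D' 0 1 0 else 0) :=
  rowRec (Ee hv D') (fun γ j m => s3 hg γ j m) _ _
    (fun γ => eVal0 hg hβ₀ γ) (fun γ => eLam hg hβ₀ γ) (eHigh hg hβ₀) i m γ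

end HVData

namespace HVData

variable {Γ : AddSubgroup ℂ} {V : Type*} [LieRing V] [LieAlgebra ℂ V]
variable {hv : HVData Γ V} {D' : V →ₗ[ℂ] V}

lemma bRow01 (hg : Good hv D') (β : Γ) : Eb hv D' β 0 1 = 0 := by
  have := s2 hg β 0 0
  simp at this
  linear_combination -this

lemma bS2 (hg : Good hv D') (α : Γ) (i : ℕ) : Eb hv D' α i 1 = (i:ℂ) * Eb hv D' α (i-1) 0 := by
  have := s2 hg α i 0
  simp only [Nat.cast_zero, zero_add, one_mul] at this
  linear_combination -this

lemma g0 (hg : Good hv D') : Eb hv D' 0 0 0 = 0 := by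
  show hv.cf (D' (hv.L 0 0)) (Sum.inr (0, 0)) = 0
  rw [hg.zeroL00]
  simp

lemma bFE' (hg : Good hv D') (α β : Γ) :
    ((β:ℂ) - α) * Eb hv D' (α+β) 0 0 = (β:ℂ) * Eb hv D' β 0 0 - (α:ℂ) * Eb hv D' α 0 0 := by
  have h := bFE hg α β
  rw [bRow01 hg α, bRow01 hg β] at h
  linear_combination h

lemma gneg (hg : Good hv D') (x : Γ) : Eb hv D' (-x) 0 0 = - Eb hv D' x 0 0 := by
  by_cases hx : x = 0
  · subst hx
    rw [neg_zero, g0 hg, neg_zero]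
  · have h := bFE' hg (-x) x
    rw [show (-x : Γ) + x = 0 from by abel, g0 hg, mul_zero] at h
    push_cast at h
    have hxc : (x:ℂ) ≠ 0 := coe_ne_zero_s8 hx
    have h2 : (x:ℂ) * (Eb hv D' x 0 0 + Eb hv D' (-x) 0 0) = 0 := by linear_combination -h
    have := (mul_eq_zero.mp h2).resolve_left hxc
    linear_combination this

lemma gMaster (hg : Good hv D') (x y : Γ) :
    (x:ℂ)^2 * Eb hv D' y 0 0 = (x:ℂ) * (y:ℂ) * Eb hv D' x 0 0 := by
  have hE2 := bFE' hg (-x) y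
  rw [show (-x : Γ) + y = y - x from by abel, gneg hg x] at hE2
  push_cast at hE2
  have hE3 := bFE' hg x (y - x)
  rw [show x + (y - x) = y from by abel] at hE3
  push_cast at hE3
  linear_combination (-(1:ℂ)/2) * (((y:ℂ) + x) * hE3 + ((y:ℂ) - x) * hE2)

lemma gVal (hg : Good hv D') {β₀ : Γ} (hβ₀ : β₀ ≠ 0) (y : Γ) :
    Eb hv D' y 0 0 = (Eb hv D' β₀ 0 0 / β₀) * y := by
  have h := gMaster hg β₀ y
  have hβc := coe_ne_zero_s8 hβ₀
  field_simp
  apply mul_left_cancel₀ hβc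
  linear_combination h

private lemma killX {β₀ : Γ} (hβ₀ : β₀ ≠ 0) (X : Γ → ℂ)
    (hrel : ∀ α β : Γ, ((β:ℂ) - α) * X (α+β) = -(α:ℂ) * X α) : ∀ δ, X δ = 0 := by
  have hnz : ∀ δ : Γ, δ ≠ 0 → X δ = 0 := by
    intro δ hδ
    have h := hrel 0 δ
    rw [zero_add] at h
    simp only [ZeroMemClass.coe_zero, sub_zero, neg_zero, zero_mul] at h
    exact (mul_eq_zero.mp h).resolve_left (coe_ne_zero_s8 hδ)
  intro δ
  by_cases hδ : δ = 0
  · subst hδ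
    have h := hrel β₀ (-β₀)
    rw [show β₀ + (-β₀ : Γ) = 0 from by abel, hnz β₀ hβ₀, mul_zero] at h
    push_cast at h
    have h2 : (-2 * (β₀:ℂ)) * X 0 = 0 := by linear_combination h
    have hne : (-2 * (β₀:ℂ)) ≠ 0 := by
      simp [mul_eq_zero, coe_ne_zero_s8 hβ₀]
    exact (mul_eq_zero.mp h2).resolve_left hne
  · exact hnz δ hδ

lemma bpsi1 (hg : Good hv D') {β₀ : Γ} (hβ₀ : β₀ ≠ 0) (δ : Γ) :
    Eb hv D' δ 1 0 = Eb hv D' β₀ 0 0 / β₀ := by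
  have hval := gVal hg hβ₀
  have hU : ∀ α β : Γ, ((β:ℂ) - α) * Eb hv D' (α+β) 1 0 - Eb hv D' (α+β) 0 0
      = -(α:ℂ) * Eb hv D' α 1 0 - Eb hv D' α 0 0 := by
    intro α β
    have h := Ui hg α β 1 le_rfl
    rw [bS2 hg α 1] at h
    simp only [Nat.cast_one, one_mul, Nat.sub_self] at h
    linear_combination h
  have hnz : ∀ δ : Γ, δ ≠ 0 → Eb hv D' δ 1 0 = Eb hv D' β₀ 0 0 / β₀ := by
    intro δ hδ
    have h := hU 0 δ
    rw [zero_add, hval δ, hval 0] at h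
    simp only [ZeroMemClass.coe_zero, sub_zero, neg_zero, zero_mul, mul_zero] at h
    apply mul_left_cancel₀ (coe_ne_zero_s8 hδ)
    linear_combination h
  by_cases hδ : δ = 0
  · subst hδ
    have h := hU β₀ (-β₀)
    rw [show β₀ + (-β₀ : Γ) = 0 from by abel, hval 0, hval β₀, hnz β₀ hβ₀] at h
    push_cast at h
    have hne : (-2 * (β₀:ℂ)) ≠ 0 := by
      simp [mul_eq_zero, coe_ne_zero_s8 hβ₀]
    apply mul_left_cancel₀ hne
    linear_combination h
  · exact hnz δ hδ

end HVData

namespace HVData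

variable {Γ : AddSubgroup ℂ} {V : Type*} [LieRing V] [LieAlgebra ℂ V]
variable {hv : HVData Γ V} {D' : V →ₗ[ℂ] V}

lemma bHigh (hg : Good hv D') {β₀ : Γ} (hβ₀ : β₀ ≠ 0) :
    ∀ n, 2 ≤ n → ∀ δ, Eb hv D' δ n 0 = 0 := by
  intro n hn
  induction n, hn using Nat.le_induction with
  | base =>
    refine killX hβ₀ (fun δ => Eb hv D' δ 2 0) (fun α β => ?_)
    have h := Ui hg α β 2 (by omega)
    rw [bS2 hg α 2, show (2:ℕ) - 1 = 1 from rfl, bpsi1 hg hβ₀ (α+β), bpsi1 hg hβ₀ α] at h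
    push_cast at h
    linear_combination h
  | succ n hn ih =>
    refine killX hβ₀ (fun δ => Eb hv D' δ (n+1) 0) (fun α β => ?_)
    have h := Ui hg α β (n+1) (by omega)
    rw [bS2 hg α (n+1), Nat.add_sub_cancel, ih (α+β), ih α] at h
    push_cast at h
    linear_combination h

lemma bFull (hg : Good hv D') {β₀ : Γ} (hβ₀ : β₀ ≠ 0) (i m : ℕ) (α : Γ) :
    Eb hv D' α i m
      = (if m = i then (Eb hv D' β₀ 0 0 / β₀) * α else 0)
      + (if m + 1 = i then (i:ℂ) * (Eb hv D' β₀ 0 0 / β₀) else 0) :=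
  rowRec (Eb hv D') (fun α j m => s2 hg α j m) _ _
    (fun α => gVal hg hβ₀ α) (fun α => bpsi1 hg hβ₀ α) (bHigh hg hβ₀) i m α

variable (hv)

/-- bracket on the left as a linear map. -/
noncomputable def adL (u : V) : V →ₗ[ℂ] V where
  toFun x := ⁅u, x⁆
  map_add' x y := lie_add u x y
  map_smul' c x := lie_smul c u x

@[simp] lemma adL_apply (u x : V) : adL u x = ⁅u, x⁆ := rfl

lemma ad_L00_surj : ∀ v ∈ hv.grade 0, ∃ z ∈ hv.grade 0, ⁅hv.L 0 0, z⁆ = v := by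
  have hle : hv.grade 0 ≤ Submodule.map (adL (hv.L 0 0)) (hv.grade 0) := by
    rw [grade]
    apply Submodule.span_le.mpr
    rintro x (⟨i, rfl⟩ | ⟨i, rfl⟩)
    · refine ⟨(1/((i:ℂ)+1)) • hv.L 0 (i+1),
        Submodule.smul_mem _ _ (L_mem_grade hv 0 (i+1)), ?_⟩
      rw [adL_apply, lie_smul, hv.lie_L_L 0 0 0 (i+1)]
      simp only [ZeroMemClass.coe_zero, sub_zero, zero_sub, Nat.zero_add, add_zero, zero_add,
        Nat.add_sub_cancel, zero_smul, neg_zero]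
      push_cast
      rw [smul_smul]
      rw [show (1/((i:ℂ)+1)) * ((i:ℂ)+1-0) = 1 from by
        field_simp
        exact sub_zero _]
      rw [one_smul]
    · refine ⟨(1/((i:ℂ)+1)) • hv.H 0 (i+1),
        Submodule.smul_mem _ _ (H_mem_grade hv 0 (i+1)), ?_⟩
      rw [adL_apply, lie_smul, hv.lie_L_H 0 0 0 (i+1)]
      simp only [ZeroMemClass.coe_zero, Nat.zero_add, zero_smul, zero_add, Nat.add_sub_cancel]
      push_cast
      rw [smul_smul]
      rw [show (1/((i:ℂ)+1)) * ((i:ℂ)+1) = 1 from by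
        field_simp]
      rw [one_smul]
  intro v hv0
  obtain ⟨z, hz, hzv⟩ := Submodule.mem_map.mp (hle hv0)
  exact ⟨z, hz, hzv⟩

end HVData

namespace HVData

variable {Γ : AddSubgroup ℂ} {V : Type*} [LieRing V] [LieAlgebra ℂ V]
variable {hv : HVData Γ V} {D' : V →ₗ[ℂ] V}

lemma claimL (hg : Good hv D') {β₀ : Γ} (hβ₀ : β₀ ≠ 0) (α : Γ) (i : ℕ) :
    D' (hv.L α i) = (Ea hv D' α 0 0) • hv.L α i + ((i:ℂ) * Ea hv D' 0 1 0) • hv.L α (i-1)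
      + ((Eb hv D' β₀ 0 0 / β₀) * α) • hv.H α i
      + ((i:ℂ) * (Eb hv D' β₀ 0 0 / β₀)) • hv.H α (i-1) := by
  apply ext_cf
  rintro (⟨δ, k⟩ | ⟨δ, k⟩)
  · by_cases hδ : δ = α
    · subst hδ
      have hL : hv.cf (D' (hv.L δ i)) (Sum.inl (δ, k)) = Ea hv D' δ i k := rfl
      rw [hL, aFull hg hβ₀ i k δ]
      simp [cf_L, cf_H]
      split_ifs <;>
        first
          | ring1
          | (exfalso; omega)
          | (have h0 : i = 0 := by omega
             subst h0
             push_cast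
             try ring1)
    · rw [hg.offL α δ i k hδ]
      simp [cf_L, cf_H, hδ]
  · by_cases hδ : δ = α
    · subst hδ
      have hL : hv.cf (D' (hv.L δ i)) (Sum.inr (δ, k)) = Eb hv D' δ i k := rfl
      rw [hL, bFull hg hβ₀ i k δ]
      simp [cf_L, cf_H]
      split_ifs <;>
        first
          | ring1
          | (exfalso; omega)
          | (have h0 : i = 0 := by omega
             subst h0
             push_cast
             try ring1)
    · rw [hg.offL' α δ i k hδ]
      simp [cf_L, cf_H, hδ]

lemma claimH (hg : Good hv D') {β₀ : Γ} (hβ₀ : β₀ ≠ 0) (α : Γ) (i : ℕ) :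
    D' (hv.H α i)
      = (Ea hv D' α 0 0 + (Ee hv D' β₀ 0 0 - Ea hv D' β₀ 0 0)) • hv.H α i
        + ((i:ℂ) * Ea hv D' 0 1 0) • hv.H α (i-1) := by
  apply ext_cf
  rintro (⟨δ, k⟩ | ⟨δ, k⟩)
  · by_cases hδ : δ = α
    · subst hδ
      have hL : hv.cf (D' (hv.H δ i)) (Sum.inl (δ, k)) = Ec hv D' δ i k := rfl
      rw [hL, cEq0 hg hβ₀ δ i k]
      simp [cf_H]
    · rw [hg.offH α δ i k hδ]
      simp [cf_H, hδ]
  · by_cases hδ : δ = α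
    · subst hδ
      have hL : hv.cf (D' (hv.H δ i)) (Sum.inr (δ, k)) = Ee hv D' δ i k := rfl
      rw [hL, eFull hg hβ₀ i k δ]
      simp [cf_H]
      split_ifs <;>
        first
          | ring1
          | (exfalso; omega)
          | (have h0 : i = 0 := by omega
             subst h0
             push_cast
             try ring1)
    · rw [hg.offH' α δ i k hδ]
      simp [cf_H, hδ]

end HVData

open HVData

/-- `(Der HV)₀ = (ad HV)₀ ⊕ Hom_ℤ(Γ,ℂ) ⊕ ℂD₁ ⊕ ℂD₂`: every degree-0
derivation of `HV` is uniquely `ad_u + D_φ + c₁ D₁ + c₂ D₂` with `u ∈ HV₀` (uniqueness of the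
operator `ad_u`, of `φ` and of the scalars `c₁, c₂`). -/
theorem HV_degree_zero_derivations (Γ : AddSubgroup ℂ) (hΓ : Γ ≠ ⊥)
    {V : Type*} [LieRing V] [LieAlgebra ℂ V] (hv : HVData Γ V)
    (D : LieDerivation ℂ V V) (hdeg : hv.HasDegree D 0) :
    ∃ (u : V) (_ : u ∈ hv.grade 0) (φ : ↥Γ →+ ℂ) (c₁ c₂ : ℂ),
      (∀ (α : Γ) (i : ℕ), D (hv.L α i) = ⁅u, hv.L α i⁆ + φ α • hv.L α i
          + c₁ • ((α : ℂ) • hv.H α i + (i : ℂ) • hv.H α (i - 1))) ∧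
      (∀ (α : Γ) (i : ℕ), D (hv.H α i) = ⁅u, hv.H α i⁆ + φ α • hv.H α i + c₂ • hv.H α i) ∧
      ∀ u' : V, u' ∈ hv.grade 0 → ∀ (φ' : ↥Γ →+ ℂ) (c₁' c₂' : ℂ),
        ((∀ (α : Γ) (i : ℕ), D (hv.L α i) = ⁅u', hv.L α i⁆ + φ' α • hv.L α i
            + c₁' • ((α : ℂ) • hv.H α i + (i : ℂ) • hv.H α (i - 1))) ∧
         (∀ (α : Γ) (i : ℕ), D (hv.H α i)
            = ⁅u', hv.H α i⁆ + φ' α • hv.H α i + c₂' • hv.H α i)) →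
        (∀ x : V, ⁅u, x⁆ = ⁅u', x⁆) ∧ φ = φ' ∧ c₁ = c₁' ∧ c₂ = c₂' := by
  classical
  obtain ⟨β₀, hβ₀⟩ : ∃ b : ↥Γ, b ≠ 0 := by
    by_contra hno
    push_neg at hno
    apply hΓ
    rw [AddSubgroup.eq_bot_iff_forall]
    intro x hx
    simpa [Subtype.ext_iff] using hno ⟨x, hx⟩
  have hD0 : D (hv.L 0 0) ∈ hv.grade 0 := by
    have := hdeg 0 (hv.L 0 0) (L_mem_grade hv 0 0)
    simpa using this
  obtain ⟨z, hz0, hzeq⟩ := ad_L00_surj hv _ hD0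
  set u₀ : V := -z with hu₀def
  have hu₀ : u₀ ∈ hv.grade 0 := neg_mem hz0
  set D' : V →ₗ[ℂ] V := (D : V →ₗ[ℂ] V) - adL u₀ with hD'def
  have hD'x : ∀ x, D' x = D x - ⁅u₀, x⁆ := fun x => by
    simp [hD'def, LieDerivation.coeFn_coe]
  have hu₀cf : ∀ (δ : Γ) (n : ℕ), δ ≠ 0 →
      hv.cf u₀ (Sum.inl (δ,n)) = 0 ∧ hv.cf u₀ (Sum.inr (δ,n)) = 0 := by
    intro δ n hδ
    exact ⟨(mem_grade_iff hv).mp hu₀ _ (by simpa [ideg] using hδ),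
      (mem_grade_iff hv).mp hu₀ _ (by simpa [ideg] using hδ)⟩
  have hoffD : ∀ (α : Γ) (x : V), x ∈ hv.grade α → ∀ s, ideg s ≠ α → hv.cf (D x) s = 0 :=
    fun α x hx s hs => (mem_grade_iff hv).mp (by simpa using hdeg α x hx) s hs
  have hgood : Good hv D' := by
    constructor
    · intro x y
      rw [hD'x, hD'x, hD'x, D.apply_lie_eq_add, leibniz_lie u₀ x y, sub_lie, lie_sub]
      abel
    · intro α γ i m hγ
      rw [hD'x, cf_sub, hoffD α _ (L_mem_grade hv α i) _ (by simpa [ideg] using hγ),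
        cf_lie_L_inl]
      have hδ : γ - α ≠ 0 := sub_ne_zero.mpr hγ
      rw [(hu₀cf (γ-α) (m-i) hδ).1, (hu₀cf (γ-α) (m+1-i) hδ).1]
      split_ifs <;> ring
    · intro α γ i m hγ
      rw [hD'x, cf_sub, hoffD α _ (L_mem_grade hv α i) _ (by simpa [ideg] using hγ),
        cf_lie_L_inr]
      have hδ : γ - α ≠ 0 := sub_ne_zero.mpr hγ
      rw [(hu₀cf (γ-α) (m-i) hδ).2, (hu₀cf (γ-α) (m+1-i) hδ).2]
      split_ifs <;> ring
    · intro α γ i m hγ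
      rw [hD'x, cf_sub, hoffD α _ (H_mem_grade hv α i) _ (by simpa [ideg] using hγ),
        cf_lie_H_inl]
      ring
    · intro α γ i m hγ
      rw [hD'x, cf_sub, hoffD α _ (H_mem_grade hv α i) _ (by simpa [ideg] using hγ),
        cf_lie_H_inr]
      have hδ : γ - α ≠ 0 := sub_ne_zero.mpr hγ
      rw [(hu₀cf (γ-α) (m-i) hδ).1, (hu₀cf (γ-α) (m+1-i) hδ).1]
      split_ifs <;> ring
    · rw [hD'x]
      have hbr : ⁅u₀, hv.L 0 0⁆ = D (hv.L 0 0) := by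
        rw [hu₀def, neg_lie, ← hzeq, ← lie_skew, neg_neg]
      rw [hbr, sub_self]
  set lam : ℂ := Ea hv D' 0 1 0 with hlam
  set c₁ : ℂ := Eb hv D' β₀ 0 0 / β₀ with hc₁
  set c₂ : ℂ := Ee hv D' β₀ 0 0 - Ea hv D' β₀ 0 0 with hc₂
  have hDx : ∀ x, D x = D' x + ⁅u₀, x⁆ := fun x => by rw [hD'x]; abel
  have hadd : ∀ a b : Γ, (Ea hv D' (a+b) 0 0 - lam * ((a+b : Γ):ℂ))
      = (Ea hv D' a 0 0 - lam * a) + (Ea hv D' b 0 0 - lam * b) := by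
    intro a b
    have h := addEa hgood hβ₀ a b
    push_cast
    linear_combination h
  set u : V := u₀ + lam • hv.L 0 0 with hudef
  have humem : u ∈ hv.grade 0 :=
    add_mem hu₀ (Submodule.smul_mem _ _ (L_mem_grade hv 0 0))
  obtain ⟨φA, hφAap⟩ : ∃ φA : ↥Γ →+ ℂ, ∀ α : Γ, φA α = Ea hv D' α 0 0 - lam * α :=
    ⟨AddMonoidHom.mk' _ hadd, fun α => rfl⟩
  have hLmain : ∀ (α : Γ) (i : ℕ), D (hv.L α i) = ⁅u, hv.L α i⁆ + φA α • hv.L α i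
      + c₁ • ((α : ℂ) • hv.H α i + (i : ℂ) • hv.H α (i - 1)) := by
    intro α i
    rw [hDx, hudef, add_lie, smul_lie, claimL hgood hβ₀ α i, hv.lie_L_L 0 α 0 i, hφAap α]
    simp only [zero_add, Nat.zero_add, ZeroMemClass.coe_zero, sub_zero]
    module
  have hHmain : ∀ (α : Γ) (i : ℕ), D (hv.H α i) = ⁅u, hv.H α i⁆ + φA α • hv.H α i
      + c₂ • hv.H α i := by
    intro α i
    rw [hDx, hudef, add_lie, smul_lie, claimH hgood hβ₀ α i, hv.lie_L_H 0 α 0 i, hφAap α]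
    simp only [zero_add, Nat.zero_add, ZeroMemClass.coe_zero, sub_zero]
    module
  refine ⟨u, humem, φA, c₁, c₂, hLmain, hHmain, ?_⟩
  rintro u' hu' φ₂ c₁' c₂' ⟨hL', hH'⟩
  -- coefficient equations for w = u - u'
  have hw : ∀ (α : Γ) (i : ℕ) (s), hv.cf ⁅u - u', hv.L α i⁆ s
      = (φ₂ α - φA α) * hv.cf (hv.L α i) s
        + (c₁' - c₁) * ((α:ℂ) * hv.cf (hv.H α i) s + (i:ℂ) * hv.cf (hv.H α (i-1)) s) := by
    intro α i s
    have h3 := (hLmain α i).symm.trans (hL' α i)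
    have h4 := congrArg (fun v => hv.cf v s) h3
    simp only [cf_add, cf_smul] at h4
    rw [sub_lie, cf_sub]
    linear_combination h4
  have hwH : ∀ (α : Γ) (i : ℕ) (s), hv.cf ⁅u - u', hv.H α i⁆ s
      = (φ₂ α - φA α) * hv.cf (hv.H α i) s + (c₂' - c₂) * hv.cf (hv.H α i) s := by
    intro α i s
    have h3 := (hHmain α i).symm.trans (hH' α i)
    have h4 := congrArg (fun v => hv.cf v s) h3
    simp only [cf_add, cf_smul] at h4
    rw [sub_lie, cf_sub]
    linear_combination h4
  -- F1 : row equations for the L-part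
  have F1 : ∀ (α : Γ) (m : ℕ),
      (α:ℂ) * hv.cf (u - u') (Sum.inl (0, m))
        - ((m:ℂ)+1) * hv.cf (u - u') (Sum.inl (0, m+1))
      = (φ₂ α - φA α) * (if m = 0 then 1 else 0) := by
    intro α m
    have h := hw α 0 (Sum.inl (α, m))
    rw [cf_lie_L_inl] at h
    simp only [Nat.zero_le, if_true, Nat.sub_zero, Nat.cast_zero, sub_self, cf_L, cf_H,
      Sum.inl.injEq, Sum.inr.injEq, Prod.mk.injEq, true_and, zero_mul, mul_zero, add_zero,
      reduceCtorEq, if_false] at h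
    by_cases hm : m = 0
    · subst hm
      norm_num at h ⊢
      push_cast at h ⊢
      linear_combination h
    · simp only [if_neg hm] at h ⊢
      push_cast at h ⊢
      linear_combination h
  -- support bound
  obtain ⟨N, hN⟩ : ∃ N, ∀ n, N ≤ n → hv.cf (u - u') (Sum.inl (0, n)) = 0 := by
    refine ⟨((hv.basis.repr (u - u')).support.sup fun s => Sum.elim Prod.snd Prod.snd s) + 1,
      fun n hn => ?_⟩
    by_contra hc
    have hc' : hv.basis.repr (u - u') (Sum.inl ((0:Γ), n)) ≠ 0 := hc
    have hmem := Finsupp.mem_support_iff.2 hc'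
    have hle := Finset.le_sup (f := fun s => Sum.elim Prod.snd Prod.snd s) hmem
    simp only [Sum.elim_inl] at hle
    omega
  have hp1 : ∀ k, 1 ≤ k → hv.cf (u - u') (Sum.inl (0, k)) = 0 := by
    have key : ∀ d k, 1 ≤ k → N ≤ k + d → hv.cf (u - u') (Sum.inl (0, k)) = 0 := by
      intro d
      induction d with
      | zero => intro k hk hNk; exact hN k (by omega)
      | succ d ih =>
        intro k hk hNk
        by_cases hNk' : N ≤ k
        · exact hN k hNk'
        · have h := F1 β₀ k
          rw [if_neg (by omega : ¬ k = 0), ih (k+1) (by omega) (by omega)] at h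
          have h2 : (β₀:ℂ) * hv.cf (u - u') (Sum.inl (0, k)) = 0 := by linear_combination h
          exact (mul_eq_zero.mp h2).resolve_left (coe_ne_zero_s8 hβ₀)
    intro k hk
    exact key N k hk (by omega)
  -- p 0 = 0
  have hp0 : hv.cf (u - u') (Sum.inl (0, 0)) = 0 := by
    have h := hwH β₀ 1 (Sum.inr (β₀, 0))
    rw [cf_lie_H_inr] at h
    simp only [cf_H, Sum.inr.injEq, Prod.mk.injEq, true_and, mul_zero, add_zero,
      Nat.cast_one] at h
    rw [if_neg (by omega : ¬ (1:ℕ) ≤ 0), if_pos (by omega : (1:ℕ) ≤ 0 + 1)] at h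
    simp only [show (0:ℕ) + 1 - 1 = 0 from rfl, sub_self, zero_add,
      if_neg (by omega : ¬ (0:ℕ) = 1)] at h
    linear_combination h
  have hΦ : ∀ α : Γ, φ₂ α = φA α := by
    intro α
    have h := F1 α 0
    rw [hp1 1 le_rfl, hp0, mul_zero, mul_zero, if_pos rfl, mul_one] at h
    linear_combination -h
  have hc₂' : c₂ = c₂' := by
    have h := hwH β₀ 0 (Sum.inr (β₀, 0))
    rw [cf_lie_H_inr] at h
    simp only [cf_H, Sum.inr.injEq, Prod.mk.injEq, true_and, Nat.cast_zero, Nat.sub_zero,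
      Nat.zero_le, if_true, sub_self, zero_mul, add_zero, mul_zero, zero_add, if_pos rfl,
      mul_one, hp0] at h
    rw [hΦ β₀] at h
    linear_combination h
  have hq1 : ∀ (α : Γ), α ≠ 0 → (c₁' - c₁) * (α:ℂ) = - hv.cf (u - u') (Sum.inr (0, 1)) := by
    intro α hα
    have h := hw α 0 (Sum.inr (α, 0))
    rw [cf_lie_L_inr] at h
    simp only [cf_L, cf_H, Sum.inr.injEq, Sum.inl.injEq, Prod.mk.injEq, true_and,
      Nat.cast_zero, Nat.sub_zero, Nat.zero_le, if_true, sub_self, reduceCtorEq, if_false,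
      mul_zero, zero_mul, zero_add, add_zero, if_pos rfl, mul_one] at h
    push_cast at h
    linear_combination -h
  have hc₁' : c₁ = c₁' := by
    have h1 := hq1 β₀ hβ₀
    have h2 := hq1 (β₀ + β₀) (two_beta_ne hβ₀)
    have h3 : (c₁' - c₁) * (β₀:ℂ) = 0 := by
      push_cast at h2
      linear_combination h2 - h1
    rcases mul_eq_zero.mp h3 with h | h
    · linear_combination -h
    · exact absurd h (coe_ne_zero_s8 hβ₀)
  -- brackets with w vanish
  have hwL0 : ∀ (α : Γ) (i : ℕ), ⁅u - u', hv.L α i⁆ = 0 := by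
    intro α i
    apply ext_cf
    intro s
    rw [hw α i s, hΦ α, ← hc₁']
    simp
  have hwH0 : ∀ (α : Γ) (i : ℕ), ⁅u - u', hv.H α i⁆ = 0 := by
    intro α i
    apply ext_cf
    intro s
    rw [hwH α i s, hΦ α, ← hc₂']
    simp
  have hwx : ∀ x : V, ⁅u - u', x⁆ = 0 := by
    intro x
    have hx : x ∈ Submodule.span ℂ (Set.range hv.basis) := by
      rw [hv.basis.span_eq]; trivial
    induction hx using Submodule.span_induction with
    | mem y hy =>
      obtain ⟨t, rfl⟩ := hy
      rcases t with ⟨δ, k⟩ | ⟨δ, k⟩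
      · rw [hv.basis_inl]; exact hwL0 δ k
      · rw [hv.basis_inr]; exact hwH0 δ k
    | zero => simp
    | add y z hy hz ihy ihz => rw [lie_add, ihy, ihz, add_zero]
    | smul c y hy ih => rw [lie_smul, ih, smul_zero]
  refine ⟨fun x => ?_, ?_, hc₁', hc₂'⟩
  · have h := hwx x
    rw [sub_lie] at h
    exact sub_eq_zero.mp h
  · ext α
    exact (hΦ α).symm
end
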